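/- arXiv:1402.4759 — 9 statements merged into one kernel-verified Lean document; each statement's English description precedes it below -/
import Mathlib

section
/- Let I be a type and A : I → I → ℂ a matrix such that A i i ≠ 0 for all i, the family (log(A i i))_{i∈I} is absolutely summable, and the family of absolute values of the products ∏_{i∈I} A(σ i) i, indexed by the finite permutations σ of I, is summable (for each finite permutation σ this infinite product converges, being ∏_{i∈S} A(σ i) i · ∏_{i∉S} A i i for any finite set S containing the support of σ). Then the net F ↦ det(A_F), indexed by the finite subsets F of I ordered by inclusion, converges to ∑_{σ finite} sgn(σ) · ∏_{i∈I} A(σ i) i, where the sum runs over all finite permutations σ of I. -/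
open Filter Topology

/-- The sign of a permutation with finite support: the sign of its restriction
to its (finite) support. -/
noncomputable def finPermSign {I : Type*} (σ : Equiv.Perm I)
    (h : {i | σ i ≠ i}.Finite) : ℤ :=
  haveI : Fintype {x // σ x ≠ x} := h.fintype
  haveI : DecidableEq {x // σ x ≠ x} := Classical.decEq _
  (Equiv.Perm.sign (σ.subtypePerm (fun x =>
    (not_congr (σ.injective.eq_iff (a := σ x) (b := x)).symm).symm) :
      Equiv.Perm {x // σ x ≠ x}) : ℤ)

private lemma norm_finPermSign {I : Type*} (σ : Equiv.Perm I)
    (h : {i | σ i ≠ i}.Finite) : ‖((finPermSign σ h : ℤ) : ℂ)‖ = 1 := by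
  have key : ∀ (u : ℤˣ), ‖((u : ℤ) : ℂ)‖ = 1 := by
    intro u
    rcases Int.units_eq_one_or u with h' | h' <;> simp [h']
  rw [finPermSign]
  exact key _

private lemma finPermSign_ofSubtype {I : Type*} [DecidableEq I] (F : Finset I)
    (τ : Equiv.Perm {x // x ∈ F}) (h : {i | Equiv.Perm.ofSubtype τ i ≠ i}.Finite) :
    finPermSign (Equiv.Perm.ofSubtype τ) h = (Equiv.Perm.sign τ : ℤ) := by
  classical
  have hmem : ∀ i : I, Equiv.Perm.ofSubtype τ i ≠ i → i ∈ F := by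
    intro i hi
    by_contra hiF
    exact hi (Equiv.Perm.ofSubtype_apply_of_not_mem τ hiF)
  have hq' : ∀ x : {x // x ∈ F}, (fun y => τ y ≠ y) (τ x) ↔ (fun y => τ y ≠ y) x :=
    fun x => (not_congr (τ.injective.eq_iff (a := τ x) (b := x)))
  have key : ∀ x : I, ∀ hx : x ∈ F, (Equiv.Perm.ofSubtype τ x = (τ ⟨x, hx⟩ : I)) :=
    fun x hx => Equiv.Perm.ofSubtype_apply_of_mem τ hx
  let e : {x // Equiv.Perm.ofSubtype τ x ≠ x} ≃ {x : {x // x ∈ F} // τ x ≠ x} :=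
    { toFun := fun x => ⟨⟨x.1, hmem x.1 x.2⟩, by
        intro hc
        apply x.2
        rw [key x.1 (hmem x.1 x.2)]
        exact congrArg Subtype.val hc⟩
      invFun := fun y => ⟨y.1.1, by
        rw [key y.1.1 y.1.2]
        intro hc
        exact y.2 (Subtype.ext (by simpa using hc))⟩
      left_inv := fun x => Subtype.ext rfl
      right_inv := fun y => Subtype.ext (Subtype.ext rfl) }
  rw [finPermSign]
  congr 1
  refine Eq.trans (@Equiv.Perm.sign_eq_sign_of_equiv _ (Classical.decEq _) _ h.fintype _ _ _
    (τ.subtypePerm hq') e ?_) (Equiv.Perm.sign_subtypePerm τ hq' (fun x hx => hx))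
  intro x
  apply Subtype.ext
  apply Subtype.ext
  exact key x.1 (hmem x.1 x.2)

/-- computation of the determinant of a determinant class
operator.  If the diagonal entries are nonzero, the family `log (A i i)` is
absolutely summable, and the family of the absolute values of the products
`∏_{i ∈ I} A (σ i) i` over all finite permutations `σ` is summable, then the
net `F ↦ det A_F` of principal minors over the finite subsets `F ⊆ I`
converges to `∑_{σ finite} sgn σ * ∏_{i ∈ I} A (σ i) i`. -/
theorem stmt0 {I : Type*} [DecidableEq I] (A : I → I → ℂ)
    (hdiag : ∀ i, A i i ≠ 0)
    (hlog : Summable fun i => ‖Complex.log (A i i)‖)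
    (hmul : ∀ σ : {σ : Equiv.Perm I // {i | σ i ≠ i}.Finite},
      Multipliable fun i => A (σ.1 i) i)
    (hsum : Summable fun σ : {σ : Equiv.Perm I // {i | σ i ≠ i}.Finite} =>
      ‖∏' i, A (σ.1 i) i‖) :
    Tendsto (fun F : Finset I => Matrix.det (Matrix.of fun i j : F => A i.1 j.1))
      atTop (nhds (∑' σ : {σ : Equiv.Perm I // {i | σ i ≠ i}.Finite},
        (finPermSign σ.1 σ.2 : ℂ) * ∏' i, A (σ.1 i) i)) := by
  classical
  set Idx := {σ : Equiv.Perm I // {i | σ i ≠ i}.Finite} with hIdx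
  set f : Idx → ℂ := fun σ => (finPermSign σ.1 σ.2 : ℂ) * ∏' i, A (σ.1 i) i with hf
  -- Step 1 : summability of `f`
  have habs : ∀ σ : Idx, ‖f σ‖ = ‖∏' i, A (σ.1 i) i‖ := by
    intro σ
    rw [hf]
    simp only [norm_mul]
    rw [norm_finPermSign σ.1 σ.2, one_mul]
  have hS : Summable f := Summable.of_norm (by
    simp only [habs]; exact hsum)
  -- Step 2 : the embedding of `Perm F` into `Idx`
  have hsupp : ∀ (F : Finset I) (τ : Equiv.Perm {x // x ∈ F}),
      {i | Equiv.Perm.ofSubtype τ i ≠ i}.Finite := by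
    intro F τ
    apply F.finite_toSet.subset
    intro i hi
    by_contra hiF
    exact hi (Equiv.Perm.ofSubtype_apply_of_not_mem τ hiF)
  set toIdx : ∀ F : Finset I, Equiv.Perm {x // x ∈ F} → Idx :=
    fun F τ => ⟨Equiv.Perm.ofSubtype τ, hsupp F τ⟩ with htoIdx
  have toIdx_inj : ∀ F, Function.Injective (toIdx F) := by
    intro F τ₁ τ₂ h
    have h' : Equiv.Perm.ofSubtype τ₁ = Equiv.Perm.ofSubtype τ₂ := congrArg Subtype.val h
    ext x
    have h2 := congrFun (congrArg (fun (e : Equiv.Perm I) => (e : I → I)) h') x.1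
    simp only [Equiv.Perm.ofSubtype_apply_of_mem _ x.2] at h2
    exact h2
  set T : Finset I → Finset Idx := fun F => Finset.univ.image (toIdx F) with hT'
  -- Step 3 : `T` tends to `atTop`
  have hT : Tendsto T atTop atTop := by
    rw [tendsto_atTop_atTop]
    intro s
    refine ⟨s.sup (fun σ => σ.2.toFinset), fun F hF σ hσ => ?_⟩
    have hsub : ∀ i : I, σ.1 i ≠ i → i ∈ F := by
      intro i hi
      have h7 : σ.2.toFinset ≤ s.sup (fun σ : Idx => σ.2.toFinset) :=
        Finset.le_sup (f := fun σ : Idx => σ.2.toFinset) hσ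
      have h8 : σ.2.toFinset ⊆ F := h7.trans hF
      exact h8 (σ.2.mem_toFinset.2 hi)
    have hmem : ∀ x : I, x ∈ F ↔ σ.1 x ∈ F := by
      intro x
      constructor
      · intro hx
        by_cases h : σ.1 (σ.1 x) = σ.1 x
        · rwa [σ.1.injective h]
        · exact hsub _ h
      · intro hx
        by_cases h : σ.1 x = x
        · rwa [← h]
        · exact hsub _ h
    refine Finset.mem_image.2 ⟨σ.1.subtypePerm (fun x => (hmem x).symm), Finset.mem_univ _, ?_⟩
    exact Subtype.ext (Equiv.Perm.ofSubtype_subtypePerm (fun x => (hmem x).symm) hsub)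
  have hTend1 : Tendsto (fun F => ∑ σ ∈ T F, f σ) atTop (𝓝 (∑' σ, f σ)) :=
    hS.hasSum.comp hT
  -- Step 4 : the tail products
  set L : I → ℂ := fun i => Complex.log (A i i) with hLdef
  have hL : Summable L := Summable.of_norm (by
    simp only [hLdef]; exact hlog)
  set t : Finset I → ℂ := fun F => ∑' i : {x // x ∉ F}, L i with htdef
  have ht0 : Tendsto t atTop (𝓝 0) := tendsto_tsum_compl_atTop_zero L
  have hcF : ∀ F : Finset I, HasProd (fun i : ((F : Set I)ᶜ : Set I) => A i.1 i.1)
      (Complex.exp (t F)) := by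
    intro F
    have h1' : Summable (fun i : ((F : Set I)ᶜ : Set I) => L i.1) :=
      hL.comp_injective Subtype.val_injective
    have h1 : HasSum (fun i : ((F : Set I)ᶜ : Set I) => L i.1) (t F) := h1'.hasSum
    refine h1.cexp.congr_fun fun i => ?_
    show A i.1 i.1 = Complex.exp (L i.1)
    rw [hLdef]
    exact (Complex.exp_log (hdiag i.1)).symm
  -- Step 5 : the key identity
  have hkey : ∀ F : Finset I, ∑ σ ∈ T F, f σ =
      Matrix.det (Matrix.of fun i j : F => A i.1 j.1) * Complex.exp (t F) := by
    intro F
    rw [hT', Finset.sum_image (fun x _ y _ h => toIdx_inj F h), Matrix.det_apply',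
      Finset.sum_mul]
    refine Finset.sum_congr rfl fun τ _ => ?_
    have hbig : HasProd (fun i : I => A (Equiv.Perm.ofSubtype τ i) i)
        ((∏ i ∈ F, A (Equiv.Perm.ofSubtype τ i) i) * Complex.exp (t F)) := by
      refine HasProd.mul_compl (s := (F : Set I)) (F.hasProd _)
        ((hcF F).congr_fun fun i => ?_)
      have h5 : (i : I) ∉ F := i.2
      show A (Equiv.Perm.ofSubtype τ i.1) i.1 = A i.1 i.1
      rw [Equiv.Perm.ofSubtype_apply_of_not_mem τ h5]
    have hprod : (∏' i, A (Equiv.Perm.ofSubtype τ i) i) =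
        (∏ i : F, A ((τ i : {x // x ∈ F}) : I) (i : I)) * Complex.exp (t F) := by
      rw [hbig.tprod_eq]
      congr 1
      rw [← Finset.prod_coe_sort]
      refine Finset.prod_congr rfl fun i _ => ?_
      congr 1
      exact Equiv.Perm.ofSubtype_apply_of_mem τ i.2
    show f (toIdx F τ) = _
    rw [hf]
    simp only [htoIdx]
    rw [finPermSign_ofSubtype F τ, hprod]
    simp only [Matrix.of_apply]
    ring
  -- Step 6 : conclusion
  have hTend2 : Tendsto (fun F => Complex.exp (t F)) atTop (𝓝 1) := by
    have h3 := (Complex.continuous_exp.tendsto 0).comp ht0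
    simpa [Function.comp_def] using h3
  have hmain : Tendsto (fun F => (∑ σ ∈ T F, f σ) * (Complex.exp (t F))⁻¹)
      atTop (𝓝 ((∑' σ, f σ) * 1⁻¹)) :=
    hTend1.mul (hTend2.inv₀ one_ne_zero)
  rw [inv_one, mul_one] at hmain
  refine hmain.congr fun F => ?_
  rw [hkey F, mul_assoc, mul_inv_cancel₀ (Complex.exp_ne_zero _), mul_one]
end

section
/- Let I be a type and A : I → I → ℂ a matrix. For M ⊆ I set Ã(M) = {i ∈ I | ∃ j ∈ M, A i j ≠ 0}; call M A-stable if Ã(M) ⊆ M, and call I A-irreducible if the only A-stable subsets of I are ∅ and I. Call a subset C ⊆ I A-connected if the graph on C joining two distinct elements i, j whenever A i j ≠ 0 or A j i ≠ 0 is connected. If I is A-irreducible, then every finite subset F ⊆ I is contained in a finite A-connected subset C ⊆ I; in particular the A-connected finite subsets are cofinal in the directed set of all finite subsets of I. -/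
private lemma chain_paths {I : Type*} (r : I → I → Prop) (C : Set I) :
    ∀ (l : List I) (a : I), List.Chain r a l → (∀ x ∈ a :: l, x ∈ C) →
      ∀ y ∈ a :: l, Relation.ReflTransGen (fun u v => u ∈ C ∧ v ∈ C ∧ r u v) y
        ((a :: l).getLast (List.cons_ne_nil _ _)) := by
  intro l
  induction l with
  | nil =>
    intro a _ _ y hy
    simp only [List.mem_singleton] at hy
    subst hy
    exact Relation.ReflTransGen.refl
  | cons b l ih =>
    intro a hchain hC y hy
    replace hchain := List.chain_cons.mp hchain
    have hlast : ((a :: b :: l).getLast (List.cons_ne_nil _ _))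
        = ((b :: l).getLast (List.cons_ne_nil _ _)) := List.getLast_cons_cons
    rw [hlast]
    rcases List.mem_cons.mp hy with h | h
    · subst h
      exact Relation.ReflTransGen.head
        ⟨hC y (List.mem_cons_self), hC b (by simp), hchain.1⟩
        (ih b hchain.2 (fun x hx => hC x (List.mem_cons_of_mem _ hx)) b (by simp))
    · exact ih b hchain.2 (fun x hx => hC x (List.mem_cons_of_mem _ hx)) y h

/-- If `I` is `A`-irreducible (the only subsets `M ⊆ I` that are
stable under `Ã(M) = {i | ∃ j ∈ M, A i j ≠ 0}` are `∅` and `I`), then every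
finite subset `F ⊆ I` is contained in a finite `A`-connected subset `C ⊆ I`,
where `C` is `A`-connected if any two of its elements are joined by a path
inside `C` along the edges `{i, j}` with `A i j ≠ 0` or `A j i ≠ 0`. -/
theorem stmt2 {I : Type*} (A : I → I → ℂ)
    (hirr : ∀ M : Set I, {i | ∃ j ∈ M, A i j ≠ 0} ⊆ M → M = ∅ ∨ M = Set.univ)
    (F : Finset I) :
    ∃ C : Set I, C.Finite ∧ (↑F : Set I) ⊆ C ∧
      ∀ i ∈ C, ∀ j ∈ C, Relation.ReflTransGen
        (fun a b => a ∈ C ∧ b ∈ C ∧ a ≠ b ∧ (A a b ≠ 0 ∨ A b a ≠ 0)) i j := by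
  classical
  rcases F.eq_empty_or_nonempty with hF | ⟨x0, hx0⟩
  · exact ⟨∅, Set.finite_empty, by simp [hF], by simp⟩
  set r : I → I → Prop := fun a b => a ≠ b ∧ (A a b ≠ 0 ∨ A b a ≠ 0) with hrdef
  have hall : ∀ i, Relation.ReflTransGen r i x0 := by
    intro i
    have hM : {a | ∃ j ∈ {k | Relation.ReflTransGen r k x0}, A a j ≠ 0} ⊆
        {k | Relation.ReflTransGen r k x0} := by
      rintro a ⟨j, hj, hA⟩
      by_cases h : a = j
      · exact h ▸ hj
      · exact Relation.ReflTransGen.head ⟨h, Or.inl hA⟩ hj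
    rcases hirr _ hM with h | h
    · exact absurd (h ▸ (Relation.ReflTransGen.refl : Relation.ReflTransGen r x0 x0) :
        x0 ∈ (∅ : Set I)) (Set.notMem_empty x0)
    · have : i ∈ {k | Relation.ReflTransGen r k x0} := h ▸ Set.mem_univ i
      exact this
  choose l hl hlast using fun i => List.exists_isChain_cons_of_relationReflTransGen (hall i)
  refine ⟨⋃ i ∈ F, {x | x ∈ i :: l i}, ?_, ?_, ?_⟩
  · exact Set.Finite.biUnion F.finite_toSet (fun i _ => (i :: l i).finite_toSet)
  · intro i hi
    exact Set.mem_biUnion hi (List.mem_cons_self)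
  · set C : Set I := ⋃ i ∈ F, {x | x ∈ i :: l i} with hC
    have key : ∀ y ∈ C, Relation.ReflTransGen
        (fun u v => u ∈ C ∧ v ∈ C ∧ r u v) y x0 := by
      intro y hy
      rcases Set.mem_iUnion₂.mp hy with ⟨i, hiF, hyl⟩
      have hsub : ∀ x ∈ i :: l i, x ∈ C := fun x hx => Set.mem_biUnion hiF hx
      have := chain_paths r C (l i) i (hl i) hsub y hyl
      rwa [hlast i] at this
    have hsymm : Symmetric (fun u v => u ∈ C ∧ v ∈ C ∧ r u v) := by
      rintro u v ⟨hu, hv, hne, hA⟩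
      exact ⟨hv, hu, hne.symm, hA.symm⟩
    intro i hi j hj
    exact (key i hi).trans (by haveI : Std.Symm (fun u v => u ∈ C ∧ v ∈ C ∧ r u v) := ⟨fun _ _ h => hsymm h⟩; exact Relation.ReflTransGen.symmetric.symm _ _ (key j hj))
end

section
/- Let q ≥ 2 be an integer (in the motivating example q is a prime power and the matrix below is 1 − uT for the edge operator T of the quotient of the (q+1)-regular Bruhat–Tits tree of GL₂(F_q((1/t))) by Γ = GL₂(F_q[t])). For u ∈ ℂ define B(u) : ℕ → ℕ → ℂ by: B i i = 1 for all i; B (2n+1) (2n) = −(q−1)u and B (2n+2) (2n) = −u for all n ≥ 0; B 0 1 = −qu; B (2n−1) (2n+1) = −qu for all n ≥ 1; and all other entries 0. Then there exists α > 0 such that for every u ∈ ℂ with |u| < α, the net F ↦ det(B(u)_F), indexed by the finite subsets F of ℕ ordered by inclusion, converges to (1 − q²u²)/(1 − qu²). -/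
open Filter

/-- The matrix `1 - uT` for the edge operator `T` of the quotient of the
`(q+1)`-regular Bruhat–Tits tree of `GL₂(F_q((1/t)))` by `GL₂(F_q[t])`:
even indices `2n` encode the outward ray edges `e_n`, odd indices `2n+1`
their reversals `f_n`. -/
noncomputable def stmt3B (q : ℕ) (u : ℂ) : ℕ → ℕ → ℂ := fun i j =>
  if i = j then 1
  else if i = j + 1 ∧ j % 2 = 0 then -((q : ℂ) - 1) * u
  else if i = j + 2 ∧ j % 2 = 0 then -u
  else if i = 0 ∧ j = 1 then -(q : ℂ) * u
  else if j = i + 2 ∧ i % 2 = 1 then -(q : ℂ) * u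
  else 0

lemma sB_zero {i j : ℕ} (h1 : ¬ i = j) (h2 : ¬(i = j + 1 ∧ j % 2 = 0))
    (h3 : ¬(i = j + 2 ∧ j % 2 = 0)) (h4 : ¬(i = 0 ∧ j = 1))
    (h5 : ¬(j = i + 2 ∧ i % 2 = 1)) : stmt3B q u i j = 0 := by
  simp only [stmt3B, if_neg h1, if_neg h2, if_neg h3, if_neg h4, if_neg h5]

lemma sB_diag (i : ℕ) : stmt3B q u i i = 1 := by simp [stmt3B]

lemma sB1 {j : ℕ} (h : j % 2 = 0) : stmt3B q u (j+1) j = -((q : ℂ) - 1) * u := by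
  simp only [stmt3B]
  rw [if_neg (by omega), if_pos ⟨trivial, h⟩]

lemma sB2 {j : ℕ} (h : j % 2 = 0) : stmt3B q u (j+2) j = -u := by
  simp only [stmt3B]
  rw [if_neg (by omega), if_neg (by omega), if_pos ⟨trivial, h⟩]

lemma sB3 : stmt3B q u 0 1 = -(q : ℂ) * u := by
  simp only [stmt3B]
  rw [if_neg (by omega), if_neg (by omega), if_neg (by omega), if_pos ⟨trivial, trivial⟩]

lemma sB4 {i : ℕ} (h : i % 2 = 1) : stmt3B q u i (i+2) = -(q : ℂ) * u := by
  simp only [stmt3B]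
  rw [if_neg (by omega), if_neg (by omega), if_neg (by omega), if_neg (by omega),
    if_pos ⟨trivial, h⟩]

noncomputable def phiQ (x : ℕ) : ℚ := if x % 2 = 0 then -(1/(x+2)) else 1/(x+2)

lemma phiQ_neg {x : ℕ} (h : x % 2 = 0) : phiQ x < 0 := by
  rw [phiQ, if_pos h]
  have : (0:ℚ) < (x:ℚ) + 2 := by positivity
  simp only [neg_neg, neg_lt, neg_zero]
  positivity

lemma phiQ_pos {x : ℕ} (h : x % 2 = 1) : 0 < phiQ x := by
  rw [phiQ, if_neg (by omega)]
  positivity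

lemma phiQ_even_lt {x y : ℕ} (hx : x % 2 = 0) (hy : y % 2 = 0) (h : x < y) :
    phiQ x < phiQ y := by
  rw [phiQ, phiQ, if_pos hx, if_pos hy, neg_lt_neg_iff]
  apply one_div_lt_one_div_of_lt (by positivity)
  have : (x:ℚ) < y := by exact_mod_cast h
  linarith

lemma phiQ_odd_lt {x y : ℕ} (hx : x % 2 = 1) (hy : y % 2 = 1) (h : y < x) :
    phiQ x < phiQ y := by
  rw [phiQ, phiQ, if_neg (by omega), if_neg (by omega)]
  apply one_div_lt_one_div_of_lt (by positivity)
  have : (y:ℚ) < x := by exact_mod_cast h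
  linarith

lemma phiQ_inj : Function.Injective phiQ := by
  intro x y h
  by_contra hne
  rcases Nat.even_or_odd x with hx | hx <;> rcases Nat.even_or_odd y with hy | hy
  · rcases Nat.lt_or_ge x y with hlt | hge
    · exact absurd h (ne_of_lt (phiQ_even_lt (Nat.even_iff.mp hx) (Nat.even_iff.mp hy) hlt))
    · exact absurd h.symm (ne_of_lt (phiQ_even_lt (Nat.even_iff.mp hy) (Nat.even_iff.mp hx) (by omega)))
  · exact absurd h (ne_of_lt (lt_trans (phiQ_neg (Nat.even_iff.mp hx)) (phiQ_pos (Nat.odd_iff.mp hy))))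
  · exact absurd h.symm (ne_of_lt (lt_trans (phiQ_neg (Nat.even_iff.mp hy)) (phiQ_pos (Nat.odd_iff.mp hx))))
  · rcases Nat.lt_or_ge x y with hlt | hge
    · exact absurd h.symm (ne_of_lt (phiQ_odd_lt (Nat.odd_iff.mp hy) (Nat.odd_iff.mp hx) hlt))
    · exact absurd h (ne_of_lt (phiQ_odd_lt (Nat.odd_iff.mp hx) (Nat.odd_iff.mp hy) (by omega)))


lemma val_succAbove {n : ℕ} (p : Fin (n+1)) (j : Fin n) :
    ((p.succAbove j) : ℕ) = if (j:ℕ) < (p:ℕ) then (j:ℕ) else (j:ℕ)+1 := by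
  by_cases h : (j:ℕ) < (p:ℕ)
  · rw [if_pos h, Fin.succAbove_of_castSucc_lt _ _ (by rwa [Fin.lt_def, Fin.coe_castSucc]),
      Fin.coe_castSucc]
  · rw [if_neg h, Fin.succAbove_of_le_castSucc _ _ (by rw [Fin.le_def, Fin.coe_castSucc]; omega),
      Fin.val_succ]

variable {q : ℕ} {u : ℂ}

lemma sB_congr {a b a' b' : ℕ} (ha : a = a') (hb : b = b') :
    stmt3B q u a b = stmt3B q u a' b' := by rw [ha, hb]

lemma sB_eval0 {a b : ℕ} (h : a = b) : stmt3B q u a b = 1 := by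
  subst h; exact sB_diag a

lemma sB_eval1 {a b : ℕ} (h : b + 1 = a) (hb : b % 2 = 0) :
    stmt3B q u a b = -((q:ℂ)-1)*u := by subst h; exact sB1 hb

lemma sB_eval2 {a b : ℕ} (h : b + 2 = a) (hb : b % 2 = 0) :
    stmt3B q u a b = -u := by subst h; exact sB2 hb

lemma sB_eval3 {a b : ℕ} (ha : a = 0) (hb : b = 1) : stmt3B q u a b = -(q:ℂ)*u := by
  subst ha; subst hb; exact sB3

lemma sB_eval4 {a b : ℕ} (h : b = a + 2) (ha : a % 2 = 1) :
    stmt3B q u a b = -(q:ℂ)*u := by subst h; exact sB4 ha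

noncomputable def Dmat (q : ℕ) (u : ℂ) (n : ℕ) : Matrix (Fin n) (Fin n) ℂ :=
  Matrix.of fun i j => stmt3B q u (n - 1 - i) (n - 1 - j)

noncomputable def Emat (q : ℕ) (u : ℂ) (m : ℕ) : Matrix (Fin (2*m+1)) (Fin (2*m+1)) ℂ :=
  Matrix.of fun i j => stmt3B q u (2*m - i) (if (j:ℕ) = 0 then 2*m+1 else 2*m - j)

noncomputable def Gmat (q : ℕ) (u : ℂ) (m : ℕ) : Matrix (Fin (2*m+1+1)) (Fin (2*m+1+1)) ℂ :=
  Matrix.of fun i j => stmt3B q u (2*m+1 - i)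
    (if (j:ℕ) = 0 then 2*m+3 else if (j:ℕ) = 1 then 2*m+1 else 2*m+1 - j)

lemma Emat_zero_det : (Emat q u 0).det = -(q:ℂ)*u := by
  rw [Matrix.det_fin_one]
  simp only [Emat, Matrix.of_apply, Fin.val_zero, Nat.sub_zero, if_true]
  exact sB_eval3 (by omega) (by omega)

lemma Emat_succ_det (m : ℕ) : (Emat q u (m+1)).det = ((q:ℂ)*u^2) * (Emat q u m).det := by
  have h1 : (Emat q u (m+1)).det = (-u) * (Gmat q u m).det := by
    rw [show (Emat q u (m+1)).det
        = ∑ j : Fin (2*(m+1)+1), (-1)^(j:ℕ) * (Emat q u (m+1)) 0 j *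
          ((Emat q u (m+1)).submatrix Fin.succ j.succAbove).det from
      Matrix.det_succ_row_zero _]
    rw [Finset.sum_eq_single_of_mem (⟨2, by omega⟩ : Fin (2*(m+1)+1)) (Finset.mem_univ _)]
    · have hsub : (Emat q u (m+1)).submatrix Fin.succ ((⟨2, by omega⟩ : Fin (2*(m+1)+1)).succAbove)
          = Gmat q u m := by
        ext i j
        have hi := i.isLt; have hj := j.isLt
        simp only [Emat, Gmat, Matrix.submatrix_apply, Matrix.of_apply, val_succAbove,
          Fin.val_succ]
        split_ifs <;> first
          | exact (‹False›).elim
          | (exfalso; omega)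
          | exact sB_congr (by omega) (by omega)
      have he : (Emat q u (m+1)) 0 (⟨2, by omega⟩ : Fin (2*(m+1)+1)) = -u := by
        simp only [Emat, Matrix.of_apply, Fin.val_zero, Nat.sub_zero]
        split_ifs <;> first
          | exact (‹False›).elim
          | (exfalso; omega)
          | exact sB_eval2 (by omega) (by omega)
      rw [hsub, he]
      have hv : ((⟨2, by omega⟩ : Fin (2*(m+1)+1)) : ℕ) = 2 := rfl
      rw [hv, show ((-1:ℂ))^(2:ℕ) * (-u) = -u from by ring]
    · intro c _ hc
      have hcv : (c:ℕ) ≠ 2 := fun h => hc (Fin.ext (by rw [h]))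
      have hcl := c.isLt
      have hzero : (Emat q u (m+1)) 0 c = 0 := by
        simp only [Emat, Matrix.of_apply, Fin.val_zero, Nat.sub_zero]
        split_ifs <;> first
          | exact (‹False›).elim
          | exact sB_zero (by omega) (by omega) (by omega) (by omega) (by omega)
      rw [hzero]; ring
  have h2 : (Gmat q u m).det = (-(q:ℂ)*u) * (Emat q u m).det := by
    rw [show (Gmat q u m).det
        = ∑ j : Fin (2*m+1+1), (-1)^(j:ℕ) * (Gmat q u m) 0 j *
          ((Gmat q u m).submatrix Fin.succ j.succAbove).det from
      Matrix.det_succ_row_zero _]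
    rw [Finset.sum_eq_add_of_mem (⟨0, by omega⟩ : Fin (2*m+1+1)) (⟨1, by omega⟩ : Fin (2*m+1+1))
      (Finset.mem_univ _) (Finset.mem_univ _) (by simp [Fin.ext_iff])]
    · have hsub0 : (Gmat q u m).submatrix Fin.succ ((⟨0, by omega⟩ : Fin (2*m+1+1)).succAbove)
          = Emat q u m := by
        ext i j
        have hi := i.isLt; have hj := j.isLt
        simp only [Gmat, Emat, Matrix.submatrix_apply, Matrix.of_apply, val_succAbove,
          Fin.val_succ, Fin.val_zero]
        split_ifs <;> first
          | exact (‹False›).elim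
          | (exfalso; omega)
          | exact sB_congr (by omega) (by omega)
      have hg00 : (Gmat q u m) 0 (⟨0, by omega⟩ : Fin (2*m+1+1)) = -(q:ℂ)*u := by
        simp only [Gmat, Matrix.of_apply, Fin.val_zero, Nat.sub_zero]
        split_ifs <;> first
          | exact (‹False›).elim
          | (exfalso; omega)
          | exact sB_eval4 (by omega) (by omega)
      have hg01 : (Gmat q u m) 0 (⟨1, by omega⟩ : Fin (2*m+1+1)) = 1 := by
        simp only [Gmat, Matrix.of_apply, Fin.val_zero, Nat.sub_zero]
        split_ifs <;> first
          | exact (‹False›).elim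
          | (exfalso; omega)
          | exact sB_eval0 (by omega)
      have hdetH : ((Gmat q u m).submatrix Fin.succ ((⟨1, by omega⟩ : Fin (2*m+1+1)).succAbove)).det = 0 := by
        apply Matrix.det_eq_zero_of_column_eq_zero 0
        intro i
        have hi := i.isLt
        simp only [Gmat, Matrix.submatrix_apply, Matrix.of_apply, val_succAbove,
          Fin.val_succ, Fin.val_zero, zero_lt_one, if_true]
        exact sB_zero (by omega) (by omega) (by omega) (by omega) (by omega)
      rw [hsub0, hg00, hg01, hdetH]
      show ((-1:ℂ))^(0:ℕ) * (-(q:ℂ)*u) * (Emat q u m).det + ((-1:ℂ))^(1:ℕ) * 1 * 0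
        = -(q:ℂ)*u * (Emat q u m).det
      ring
    · intro c _ hc
      have hc0 : (c:ℕ) ≠ 0 := fun h => hc.1 (Fin.ext (by simp [h]))
      have hc1 : (c:ℕ) ≠ 1 := fun h => hc.2 (Fin.ext (by rw [h]))
      have hcl := c.isLt
      have hzero : (Gmat q u m) 0 c = 0 := by
        simp only [Gmat, Matrix.of_apply, Fin.val_zero, Nat.sub_zero]
        split_ifs <;> first
          | exact (‹False›).elim
          | exact sB_zero (by omega) (by omega) (by omega) (by omega) (by omega)
      rw [hzero]; ring
  rw [h1, h2]; ring

lemma Emat_det (m : ℕ) : (Emat q u m).det = (-(q:ℂ)*u) * ((q:ℂ)*u^2)^m := by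
  induction m with
  | zero => rw [Emat_zero_det]; ring
  | succ m ih => rw [Emat_succ_det, ih]; ring

lemma Dmat_odd_det (m : ℕ) :
    (Dmat q u (2*(m+1)+1)).det = (Dmat q u (2*(m+1))).det := by
  rw [show (Dmat q u (2*(m+1)+1)).det
      = ∑ j : Fin (2*(m+1)+1), (-1)^(j:ℕ) * (Dmat q u (2*(m+1)+1)) 0 j *
        ((Dmat q u (2*(m+1)+1)).submatrix Fin.succ j.succAbove).det from
    Matrix.det_succ_row_zero _]
  rw [Finset.sum_eq_add_of_mem (⟨0, by omega⟩ : Fin (2*(m+1)+1)) (⟨2, by omega⟩ : Fin (2*(m+1)+1))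
    (Finset.mem_univ _) (Finset.mem_univ _) (by simp [Fin.ext_iff])]
  · have hsub0 : (Dmat q u (2*(m+1)+1)).submatrix Fin.succ
        ((⟨0, by omega⟩ : Fin (2*(m+1)+1)).succAbove) = Dmat q u (2*(m+1)) := by
      ext i j
      have hi := i.isLt; have hj := j.isLt
      simp only [Dmat, Matrix.submatrix_apply, Matrix.of_apply, val_succAbove, Fin.val_succ]
      split_ifs <;> first
        | exact (‹False›).elim
        | (exfalso; omega)
        | exact sB_congr (by omega) (by omega)
    have hd00 : (Dmat q u (2*(m+1)+1)) 0 (⟨0, by omega⟩ : Fin (2*(m+1)+1)) = 1 := by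
      simp only [Dmat, Matrix.of_apply, Fin.val_zero]
      exact sB_eval0 (by omega)
    have hd02 : (Dmat q u (2*(m+1)+1)) 0 (⟨2, by omega⟩ : Fin (2*(m+1)+1)) = -u := by
      simp only [Dmat, Matrix.of_apply, Fin.val_zero]
      exact sB_eval2 (by omega) (by omega)
    have hdetH : ((Dmat q u (2*(m+1)+1)).submatrix Fin.succ
        ((⟨2, by omega⟩ : Fin (2*(m+1)+1)).succAbove)).det = 0 := by
      apply Matrix.det_eq_zero_of_column_eq_zero 0
      intro i
      have hi := i.isLt
      simp only [Dmat, Matrix.submatrix_apply, Matrix.of_apply, val_succAbove,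
        Fin.val_succ, Fin.val_zero, Nat.ofNat_pos, if_true]
      exact sB_zero (by omega) (by omega) (by omega) (by omega) (by omega)
    rw [hsub0, hd00, hd02, hdetH]
    have hv0 : ((⟨0, by omega⟩ : Fin (2*(m+1)+1)) : ℕ) = 0 := rfl
    have hv2 : ((⟨2, by omega⟩ : Fin (2*(m+1)+1)) : ℕ) = 2 := rfl
    rw [hv0, hv2]
    ring_nf
  · intro c _ hc
    have hc0 : (c:ℕ) ≠ 0 := fun h => hc.1 (Fin.ext (by rw [h]))
    have hc2 : (c:ℕ) ≠ 2 := fun h => hc.2 (Fin.ext (by rw [h]))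
    have hcl := c.isLt
    have hzero : (Dmat q u (2*(m+1)+1)) 0 c = 0 := by
      simp only [Dmat, Matrix.of_apply, Fin.val_zero]
      exact sB_zero (by omega) (by omega) (by omega) (by omega) (by omega)
    rw [hzero]; ring

lemma Dmat_even_det (m : ℕ) :
    (Dmat q u (2*m+1+1)).det = (Dmat q u (2*m+1)).det + ((q:ℂ)-1)*u*(Emat q u m).det := by
  rw [show (Dmat q u (2*m+1+1)).det
      = ∑ j : Fin (2*m+1+1), (-1)^(j:ℕ) * (Dmat q u (2*m+1+1)) 0 j *
        ((Dmat q u (2*m+1+1)).submatrix Fin.succ j.succAbove).det from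
    Matrix.det_succ_row_zero _]
  rw [Finset.sum_eq_add_of_mem (⟨0, by omega⟩ : Fin (2*m+1+1)) (⟨1, by omega⟩ : Fin (2*m+1+1))
    (Finset.mem_univ _) (Finset.mem_univ _) (by simp [Fin.ext_iff])]
  · have hsub0 : (Dmat q u (2*m+1+1)).submatrix Fin.succ
        ((⟨0, by omega⟩ : Fin (2*m+1+1)).succAbove) = Dmat q u (2*m+1) := by
      ext i j
      have hi := i.isLt; have hj := j.isLt
      simp only [Dmat, Matrix.submatrix_apply, Matrix.of_apply, val_succAbove, Fin.val_succ]
      split_ifs <;> first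
        | exact (‹False›).elim
        | (exfalso; omega)
        | exact sB_congr (by omega) (by omega)
    have hsub1 : (Dmat q u (2*m+1+1)).submatrix Fin.succ
        ((⟨1, by omega⟩ : Fin (2*m+1+1)).succAbove) = Emat q u m := by
      ext i j
      have hi := i.isLt; have hj := j.isLt
      simp only [Dmat, Emat, Matrix.submatrix_apply, Matrix.of_apply, val_succAbove, Fin.val_succ]
      split_ifs <;> first
        | exact (‹False›).elim
        | (exfalso; omega)
        | exact sB_congr (by omega) (by omega)
    have hd00 : (Dmat q u (2*m+1+1)) 0 (⟨0, by omega⟩ : Fin (2*m+1+1)) = 1 := by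
      simp only [Dmat, Matrix.of_apply, Fin.val_zero]
      exact sB_eval0 (by omega)
    have hd01 : (Dmat q u (2*m+1+1)) 0 (⟨1, by omega⟩ : Fin (2*m+1+1)) = -((q:ℂ)-1)*u := by
      simp only [Dmat, Matrix.of_apply, Fin.val_zero]
      exact sB_eval1 (by omega) (by omega)
    rw [hsub0, hsub1, hd00, hd01]
    have hv0 : ((⟨0, by omega⟩ : Fin (2*m+1+1)) : ℕ) = 0 := rfl
    have hv1 : ((⟨1, by omega⟩ : Fin (2*m+1+1)) : ℕ) = 1 := rfl
    rw [hv0, hv1]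
    ring_nf
  · intro c _ hc
    have hc0 : (c:ℕ) ≠ 0 := fun h => hc.1 (Fin.ext (by rw [h]))
    have hc1 : (c:ℕ) ≠ 1 := fun h => hc.2 (Fin.ext (by rw [h]))
    have hcl := c.isLt
    have hzero : (Dmat q u (2*m+1+1)) 0 c = 0 := by
      simp only [Dmat, Matrix.of_apply, Fin.val_zero]
      exact sB_zero (by omega) (by omega) (by omega) (by omega) (by omega)
    rw [hzero]; ring

noncomputable def aterm (q : ℕ) (u : ℂ) (k : ℕ) : ℂ := ((q:ℂ)-1) * (q:ℂ)^(k+1) * u^(2*k+2)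

lemma Dmat_det_even_formula (m : ℕ) :
    (Dmat q u (2*m)).det = 1 - ∑ k ∈ Finset.range m, aterm q u k := by
  induction m with
  | zero =>
      show (Dmat q u 0).det = _
      rw [Matrix.det_fin_zero]
      simp
  | succ m ih =>
      have h1 : (Dmat q u (2*(m+1))).det = (Dmat q u (2*m+1+1)).det := rfl
      have h2 : (Dmat q u (2*m+1)).det = (Dmat q u (2*m)).det := by
        cases m with
        | zero =>
            rw [show (Dmat q u (2*0+1)).det = (Dmat q u 1).det from rfl, Matrix.det_fin_one,
              show (Dmat q u (2*0)).det = (Dmat q u 0).det from rfl, Matrix.det_fin_zero]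
            simp only [Dmat, Matrix.of_apply, Fin.val_zero]
            exact sB_eval0 rfl
        | succ m' => exact Dmat_odd_det m'
      rw [h1, Dmat_even_det, h2, ih, Emat_det, Finset.sum_range_succ]
      have : aterm q u m = -(((q:ℂ)-1)*u*((-(q:ℂ)*u) * ((q:ℂ)*u^2)^m)) := by
        rw [aterm, show 2*m+2 = 2*(m+1) from by ring, pow_mul, mul_pow]
        ring
      rw [this]
      ring

lemma Dmat_det_formula (n : ℕ) :
    (Dmat q u n).det = 1 - ∑ k ∈ Finset.range (n/2), aterm q u k := by
  rcases Nat.even_or_odd n with ⟨m, hm⟩ | ⟨m, hm⟩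
  · subst hm
    rw [show m + m = 2*m from by ring, show (2*m)/2 = m from by omega]
    exact Dmat_det_even_formula m
  · subst hm
    have h2 : (Dmat q u (2*m+1)).det = (Dmat q u (2*m)).det := by
      cases m with
      | zero =>
          rw [show (Dmat q u (2*0+1)).det = (Dmat q u 1).det from rfl, Matrix.det_fin_one,
            show (Dmat q u (2*0)).det = (Dmat q u 0).det from rfl, Matrix.det_fin_zero]
          simp only [Dmat, Matrix.of_apply, Fin.val_zero]
          exact sB_eval0 rfl
      | succ m' => exact Dmat_odd_det m'
    rw [show (2*m+1)/2 = m from by omega, h2]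
    exact Dmat_det_even_formula m


variable {q : ℕ} {u : ℂ}

lemma det_one_of_zero_not_mem (q : ℕ) (u : ℂ) (F : Finset ℕ) (hF : 0 ∉ F) :
    (Matrix.of fun i j : F => stmt3B q u i.1 j.1).det = 1 := by
  set M : Matrix F F ℂ := Matrix.of fun i j : F => stmt3B q u i.1 j.1 with hM
  have hbt : M.transpose.BlockTriangular (fun x : F => phiQ x.1) := by
    intro i j hij
    show stmt3B q u j.1 i.1 = 0
    have hi0 : i.1 ≠ 0 := fun h => hF (h ▸ i.2)
    have hj0 : j.1 ≠ 0 := fun h => hF (h ▸ j.2)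
    have hij' : phiQ j.1 < phiQ i.1 := hij
    apply sB_zero
    · intro h
      rw [h] at hij'
      exact lt_irrefl _ hij'
    · rintro ⟨h1, h2⟩
      have := lt_trans (phiQ_neg h2) (phiQ_pos (x := j.1) (by omega))
      exact absurd hij' (not_lt_of_gt this)
    · rintro ⟨h1, h2⟩
      have := phiQ_even_lt (x := i.1) (y := j.1) h2 (by omega) (by omega)
      exact absurd hij' (not_lt_of_gt this)
    · rintro ⟨h1, h2⟩; exact hj0 h1
    · rintro ⟨h1, h2⟩
      have := phiQ_odd_lt (x := i.1) (y := j.1) (by omega) h2 (by omega)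
      exact absurd hij' (not_lt_of_gt this)
  have hdet := hbt.det
  rw [Matrix.det_transpose] at hdet
  rw [hdet]
  apply Finset.prod_eq_one
  intro a ha
  obtain ⟨x, -, hx⟩ := Finset.mem_image.mp ha
  haveI : Unique {y : F // phiQ y.1 = a} :=
    ⟨⟨⟨x, hx⟩⟩, fun y => Subtype.ext (Subtype.ext (phiQ_inj (y.2.trans hx.symm)))⟩
  rw [Matrix.det_unique]
  show stmt3B q u _ _ = 1
  exact sB_diag _

lemma det_fin_to_D (n : ℕ) :
    (Matrix.of fun i j : Fin n => stmt3B q u i j).det = (Dmat q u n).det := by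
  have h : (Matrix.of fun i j : Fin n => stmt3B q u i j).submatrix Fin.revPerm Fin.revPerm
      = Dmat q u n := by
    ext i j
    have hi := i.isLt; have hj := j.isLt
    show stmt3B q u ((Fin.rev i : Fin n):ℕ) ((Fin.rev j : Fin n):ℕ) = _
    show _ = stmt3B q u (n - 1 - i) (n - 1 - j)
    have hri : ((Fin.rev i : Fin n):ℕ) = n - (i+1) := rfl
    have hrj : ((Fin.rev j : Fin n):ℕ) = n - (j+1) := rfl
    rw [hri, hrj]
    exact sB_congr (by omega) (by omega)
  rw [← h, Matrix.det_submatrix_equiv_self]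

lemma det_range_to_fin (n : ℕ) :
    (Matrix.of fun i j : (Finset.range n) => stmt3B q u i.1 j.1).det
      = (Matrix.of fun i j : Fin n => stmt3B q u i j).det := by
  let e : Fin n ≃ (Finset.range n) :=
    { toFun := fun i => ⟨i.1, Finset.mem_range.mpr i.isLt⟩
      invFun := fun x => ⟨x.1, Finset.mem_range.mp x.2⟩
      left_inv := fun i => rfl
      right_inv := fun x => rfl }
  have h : (Matrix.of fun i j : (Finset.range n) => stmt3B q u i.1 j.1).submatrix e e
      = Matrix.of fun i j : Fin n => stmt3B q u i j := by ext i j; rfl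
  rw [← h, Matrix.det_submatrix_equiv_self]

/-- the length of the maximal initial segment contained in `F` -/
noncomputable def tF (F : Finset ℕ) : ℕ := Nat.find (Infinite.exists_notMem_finset F)

lemma tF_not_mem (F : Finset ℕ) : tF F ∉ F := Nat.find_spec (Infinite.exists_notMem_finset F)

lemma tF_mem {F : Finset ℕ} {k : ℕ} (hk : k < tF F) : k ∈ F := by
  have := Nat.find_min (Infinite.exists_notMem_finset F) hk
  simpa using this

lemma tF_ge {F : Finset ℕ} {n : ℕ} (h : ∀ k < n, k ∈ F) : n ≤ tF F := by
  by_contra hc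
  exact (tF_not_mem F) (h _ (by omega))

lemma det_F_eq (F : Finset ℕ) :
    (Matrix.of fun i j : F => stmt3B q u i.1 j.1).det
      = 1 - ∑ k ∈ Finset.range ((tF F)/2), aterm q u k := by
  set t := tF F with htdef
  have htN : t ∉ F := tF_not_mem F
  set M := Matrix.of fun i j : F => stmt3B q u i.1 j.1 with hM
  have key : M.det = (Matrix.toSquareBlockProp M (fun i : F => i.1 < t)).det *
      (Matrix.toSquareBlockProp M (fun i : F => ¬ i.1 < t)).det := by
    rcases Nat.even_or_odd t with ⟨r, hr⟩ | ⟨r, hr⟩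
    · apply Matrix.twoBlockTriangular_det
      intro i hi j hj
      have hit : t < i.1 := by
        rcases Nat.lt_or_ge t i.1 with h | h
        · exact h
        · exfalso
          rcases Nat.eq_or_lt_of_le h with h' | h'
          · exact htN (h' ▸ i.2)
          · exact hi h'
      show stmt3B q u i.1 j.1 = 0
      exact sB_zero (by omega) (by omega) (by omega) (by omega) (by omega)
    · apply Matrix.twoBlockTriangular_det'
      intro i hi j hj
      have hjt : t < j.1 := by
        rcases Nat.lt_or_ge t j.1 with h | h
        · exact h
        · exfalso
          rcases Nat.eq_or_lt_of_le h with h' | h'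
          · exact htN (h' ▸ j.2)
          · exact hj h'
      show stmt3B q u i.1 j.1 = 0
      exact sB_zero (by omega) (by omega) (by omega) (by omega) (by omega)
  have hb2 : (Matrix.toSquareBlockProp M (fun i : F => ¬ i.1 < t)).det = 1 := by
    set Fp : Finset ℕ := F.filter (fun x => ¬ x < t) with hFp
    let e : Fp ≃ {i : F // ¬ i.1 < t} :=
      { toFun := fun x => ⟨⟨x.1, (Finset.mem_filter.mp x.2).1⟩, (Finset.mem_filter.mp x.2).2⟩
        invFun := fun y => ⟨y.1.1, Finset.mem_filter.mpr ⟨y.1.2, y.2⟩⟩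
        left_inv := fun x => rfl
        right_inv := fun y => rfl }
    have h : (Matrix.toSquareBlockProp M (fun i : F => ¬ i.1 < t)).submatrix e e
        = Matrix.of fun i j : Fp => stmt3B q u i.1 j.1 := by ext i j; rfl
    rw [← Matrix.det_submatrix_equiv_self e, h]
    apply det_one_of_zero_not_mem
    intro h0
    have := Finset.mem_filter.mp h0
    have ht0 : t = 0 := by omega
    exact htN (ht0 ▸ this.1)
  have hb1 : (Matrix.toSquareBlockProp M (fun i : F => i.1 < t)).det
      = (Matrix.of fun i j : (Finset.range t) => stmt3B q u i.1 j.1).det := by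
    let e : (Finset.range t) ≃ {i : F // i.1 < t} :=
      { toFun := fun x => ⟨⟨x.1, tF_mem (Finset.mem_range.mp x.2)⟩, Finset.mem_range.mp x.2⟩
        invFun := fun y => ⟨y.1.1, Finset.mem_range.mpr y.2⟩
        left_inv := fun x => rfl
        right_inv := fun y => rfl }
    have h : (Matrix.toSquareBlockProp M (fun i : F => i.1 < t)).submatrix e e
        = Matrix.of fun i j : (Finset.range t) => stmt3B q u i.1 j.1 := by ext i j; rfl
    rw [← Matrix.det_submatrix_equiv_self e, h]
  rw [key, hb1, hb2, det_range_to_fin, det_fin_to_D, Dmat_det_formula, mul_one]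


lemma aterm_eq (q : ℕ) (u : ℂ) (k : ℕ) :
    aterm q u k = (((q:ℂ)-1)*(q:ℂ)*u^2) * ((q:ℂ)*u^2)^k := by
  rw [aterm, show 2*k+2 = 2*(k+1) from by ring, pow_mul, mul_pow]
  ring

theorem stmt3' (q : ℕ) (hq : 2 ≤ q) :
    ∃ α : ℝ, 0 < α ∧ ∀ u : ℂ, ‖u‖ < α →
      Tendsto
        (fun F : Finset ℕ => Matrix.det (Matrix.of fun i j : F => stmt3B q u i.1 j.1))
        atTop (nhds ((1 - (q : ℂ) ^ 2 * u ^ 2) / (1 - (q : ℂ) * u ^ 2))) := by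
  have hQ : (2:ℝ) ≤ (q:ℝ) := by exact_mod_cast hq
  refine ⟨1/((q:ℝ)+1), by positivity, fun u habs => ?_⟩
  have hnu : ‖u‖ < 1/((q:ℝ)+1) := habs
  have hnu0 : 0 ≤ ‖u‖ := norm_nonneg u
  have hr : ‖(q:ℂ)*u^2‖ < 1 := by
    rw [norm_mul, norm_pow, Complex.norm_natCast]
    have h1 : ‖u‖ * ((q:ℝ)+1) < 1 := by
      rw [lt_div_iff₀ (by positivity)] at hnu
      linarith
    have ha : (0:ℝ) ≤ ‖u‖ * ((q:ℝ)+1) := mul_nonneg hnu0 (by positivity)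
    have h2 : (‖u‖*((q:ℝ)+1))^2 < 1 := by nlinarith [h1, ha]
    nlinarith [h2, sq_nonneg ‖u‖, mul_nonneg (sq_nonneg ‖u‖) (by positivity : (0:ℝ) ≤ (q:ℝ))]
  have hgeo := (hasSum_geometric_of_norm_lt_one hr).mul_left (((q:ℂ)-1)*(q:ℂ)*u^2)
  have hsum : HasSum (aterm q u) ((((q:ℂ)-1)*(q:ℂ)*u^2) * (1 - (q:ℂ)*u^2)⁻¹) := by
    have : (fun k : ℕ => (((q:ℂ)-1)*(q:ℂ)*u^2) * ((q:ℂ)*u^2)^k) = aterm q u := by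
      funext k; rw [aterm_eq]
    rwa [this] at hgeo
  have hne : (1:ℂ) - (q:ℂ)*u^2 ≠ 0 := by
    intro h
    have : (q:ℂ)*u^2 = 1 := by linear_combination -h
    rw [this] at hr
    simp at hr
  have hL : 1 - ((((q:ℂ)-1)*(q:ℂ)*u^2) * (1 - (q:ℂ)*u^2)⁻¹)
      = (1 - (q:ℂ)^2*u^2) / (1 - (q:ℂ)*u^2) := by
    field_simp
    ring
  have h4 : Tendsto (fun n : ℕ => 1 - ∑ k ∈ Finset.range n, aterm q u k) atTop
      (nhds ((1 - (q:ℂ)^2*u^2) / (1 - (q:ℂ)*u^2))) := by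
    rw [← hL]
    exact tendsto_const_nhds.sub hsum.tendsto_sum_nat
  have h5 : Tendsto (fun F : Finset ℕ => tF F / 2) atTop atTop := by
    rw [tendsto_atTop]
    intro b
    filter_upwards [eventually_ge_atTop (Finset.range (2*b))] with F hF
    have : 2*b ≤ tF F := tF_ge (fun k hk => hF (Finset.mem_range.mpr hk))
    omega
  have heq : (fun F : Finset ℕ => Matrix.det (Matrix.of fun i j : F => stmt3B q u i.1 j.1))
      = (fun n : ℕ => 1 - ∑ k ∈ Finset.range n, aterm q u k) ∘ (fun F : Finset ℕ => tF F / 2) := by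
    funext F
    exact det_F_eq F
  rw [heq]
  exact h4.comp h5

/-- there is `α > 0` such that for `|u| < α` the net of
determinants of the finite principal minors of `stmt3B q u` converges to
`(1 - q²u²)/(1 - qu²)`. -/
theorem stmt3 (q : ℕ) (hq : 2 ≤ q) :
    ∃ α : ℝ, 0 < α ∧ ∀ u : ℂ, ‖u‖ < α →
      Tendsto
        (fun F : Finset ℕ => Matrix.det (Matrix.of fun i j : F => stmt3B q u i.1 j.1))
        atTop (nhds ((1 - (q : ℂ) ^ 2 * u ^ 2) / (1 - (q : ℂ) * u ^ 2))) :=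
  stmt3' q hq
end

section
/- Let q ≥ 2 be an integer. For u ∈ ℂ define M(u) : ℕ → ℕ → ℂ by: M n n = 1 + qu² for all n; M 0 1 = −(q+1)u; M n (n+1) = −u for all n ≥ 1; M n (n−1) = −qu for all n ≥ 1; and all other entries 0 (this is 1 − uA + u²Q for the Nagao ray, where A is the pushed-down adjacency operator and Q = (q+1−1)·Id the valency-minus-one operator of the (q+1)-regular tree). Then: (a) there exists α > 0 such that for every u ∈ ℂ with |u| < α, the determinants of the principal minors on the initial segments {0, 1, …, N−1} converge, as N → ∞, to (1 − q²u²)/(1 − qu²); (b) there exists α > 0 such that for every u ∈ ℂ with 0 < |u| < α, the net F ↦ det(M(u)_F) indexed by ALL finite subsets F of ℕ ordered by inclusion does NOT converge. Hence M(u) is of connected determinant class but not of determinant class. -/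
open Filter

/-- The matrix `1 - uA + u²Q` for the Nagao ray in the `(q+1)`-regular tree,
where `A` is the pushed-down adjacency operator and `Q = q·Id`. -/
noncomputable def stmt4M (q : ℕ) (u : ℂ) : ℕ → ℕ → ℂ := fun n m =>
  if n = m then 1 + (q : ℂ) * u ^ 2
  else if n = 0 ∧ m = 1 then -((q : ℂ) + 1) * u
  else if m = n + 1 ∧ 1 ≤ n then -u
  else if n = m + 1 then -(q : ℂ) * u
  else 0

noncomputable def s4T (q : ℕ) (u : ℂ) (N : ℕ) : Matrix (Fin N) (Fin N) ℂ :=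
  Matrix.of fun i j => stmt4M q u i j

lemma stmt4M_diag (q : ℕ) (u : ℂ) (n : ℕ) : stmt4M q u n n = 1 + (q:ℂ) * u ^ 2 := by
  simp [stmt4M]

lemma stmt4M_hi (q : ℕ) (u : ℂ) (n j : ℕ) (h : j ≤ n) : stmt4M q u (n+2) j = 0 := by
  simp only [stmt4M]
  rw [if_neg (by omega), if_neg (by rintro ⟨h1,_⟩; omega), if_neg (by rintro ⟨h1,_⟩; omega),
    if_neg (by omega)]

lemma stmt4M_hi' (q : ℕ) (u : ℂ) (n j : ℕ) (h : j ≤ n) : stmt4M q u j (n+2) = 0 := by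
  simp only [stmt4M]
  rw [if_neg (by omega), if_neg (by rintro ⟨h1,h2⟩; omega), if_neg (by rintro ⟨h1,_⟩; omega),
    if_neg (by omega)]

lemma stmt4M_sub (q : ℕ) (u : ℂ) (n : ℕ) : stmt4M q u (n+2) (n+1) = -(q:ℂ) * u := by
  simp only [stmt4M]
  rw [if_neg (by omega), if_neg (by rintro ⟨h,_⟩; omega), if_neg (by rintro ⟨h,_⟩; omega)]
  simp

lemma stmt4M_sup (q : ℕ) (u : ℂ) (n : ℕ) : stmt4M q u (n+1) (n+2) = -u := by
  simp only [stmt4M]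
  rw [if_neg (by omega), if_neg (by rintro ⟨h,_⟩; omega)]
  simp

lemma s4T_principal (q : ℕ) (u : ℂ) (N : ℕ) :
    (s4T q u (N+1)).submatrix Fin.castSucc Fin.castSucc = s4T q u N := by
  ext i j
  simp only [Matrix.submatrix_apply, s4T, Matrix.of_apply, Fin.coe_castSucc]

lemma s4T_Bdef (q : ℕ) (u : ℂ) (n : ℕ) :
    (s4T q u (n+3)).submatrix (Fin.last (n+2)).succAbove ((Fin.last (n+1)).castSucc).succAbove
      = Matrix.of (fun i j : Fin (n+2) =>
          stmt4M q u (i:ℕ) (if (j:ℕ) < n+1 then (j:ℕ) else n+2)) := by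
  ext i j
  simp only [Matrix.submatrix_apply, Matrix.of_apply, s4T, Fin.succAbove_last, Fin.coe_castSucc]
  congr 1
  by_cases h : (j:ℕ) < n+1
  · rw [Fin.succAbove_of_castSucc_lt _ _ (by simp [Fin.lt_def, h]), if_pos h]
    simp
  · have hj : (j:ℕ) = n+1 := by omega
    rw [Fin.succAbove_of_le_castSucc _ _ (by simp [Fin.le_def, hj]), if_neg h]
    simp [Fin.val_succ, hj]

lemma s4T_Bdet (q : ℕ) (u : ℂ) (n : ℕ) :
    ((s4T q u (n+3)).submatrix (Fin.last (n+2)).succAbove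
        ((Fin.last (n+1)).castSucc).succAbove).det = -u * (s4T q u (n+1)).det := by
  rw [s4T_Bdef, Matrix.det_succ_column _ (Fin.last (n+1)), Fin.sum_univ_castSucc]
  have hz : ∀ i : Fin (n+1),
      (Matrix.of (fun i j : Fin (n+2) =>
        stmt4M q u (i:ℕ) (if (j:ℕ) < n+1 then (j:ℕ) else n+2))) i.castSucc (Fin.last (n+1)) = 0 := by
    intro i
    simp only [Matrix.of_apply, Fin.val_last, lt_irrefl, if_neg (lt_irrefl (n+1)), Fin.coe_castSucc]
    exact stmt4M_hi' q u n i (Nat.lt_succ_iff.mp i.2)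
  simp only [hz, mul_zero, zero_mul, Finset.sum_const_zero, zero_add]
  have he : (Matrix.of (fun i j : Fin (n+2) =>
      stmt4M q u (i:ℕ) (if (j:ℕ) < n+1 then (j:ℕ) else n+2))) (Fin.last (n+1)) (Fin.last (n+1))
      = -u := by
    simp only [Matrix.of_apply, Fin.val_last, lt_irrefl, if_neg (lt_irrefl (n+1))]
    exact stmt4M_sup q u n
  rw [he]
  have hsub : ((Matrix.of (fun i j : Fin (n+2) =>
      stmt4M q u (i:ℕ) (if (j:ℕ) < n+1 then (j:ℕ) else n+2))).submatrix
        (Fin.last (n+1)).succAbove (Fin.last (n+1)).succAbove) = s4T q u (n+1) := by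
    ext i j
    simp only [Matrix.submatrix_apply, Matrix.of_apply, Fin.succAbove_last, Fin.coe_castSucc,
      s4T]
    rw [if_pos (show (j:ℕ) < n+1 from j.2)]
  rw [hsub]
  have hsign : ((-1:ℂ)) ^ (((Fin.last (n+1)) : ℕ) + ((Fin.last (n+1)) : ℕ)) = 1 :=
    Even.neg_one_pow ⟨n+1, by simp⟩
  rw [hsign]; ring

lemma s4T_rec (q : ℕ) (u : ℂ) (n : ℕ) :
    (s4T q u (n+3)).det =
      (1 + (q:ℂ) * u ^ 2) * (s4T q u (n+2)).det - (q:ℂ) * u ^ 2 * (s4T q u (n+1)).det := by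
  rw [Matrix.det_succ_row (s4T q u (n+3)) (Fin.last (n+2))]
  rw [Fin.sum_univ_castSucc, Fin.sum_univ_castSucc]
  have hz : ∀ i : Fin (n+1),
      (s4T q u (n+3)) (Fin.last (n+2)) (i.castSucc.castSucc) = 0 := fun i =>
    stmt4M_hi q u n i (Nat.lt_succ_iff.mp i.2)
  simp only [hz, mul_zero, zero_mul, Finset.sum_const_zero, zero_add]
  have he1 : (s4T q u (n+3)) (Fin.last (n+2)) ((Fin.last (n+1)).castSucc) = -(q:ℂ) * u :=
    stmt4M_sub q u n
  have he2 : (s4T q u (n+3)) (Fin.last (n+2)) (Fin.last (n+2)) = 1 + (q:ℂ) * u ^ 2 :=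
    stmt4M_diag q u (n+2)
  rw [he1, he2, s4T_Bdet]
  have hA : (s4T q u (n+3)).submatrix (Fin.last (n+2)).succAbove
      (Fin.last (n+2)).succAbove = s4T q u (n+2) := by
    rw [Fin.succAbove_last]; exact s4T_principal q u (n+2)
  rw [hA]
  simp only [Fin.val_last, Fin.coe_castSucc]
  have hs1 : ((-1:ℂ)) ^ ((n+2) + (n+1)) = -1 := Odd.neg_one_pow ⟨n+1, by omega⟩
  have hs2 : ((-1:ℂ)) ^ ((n+2) + (n+2)) = 1 := Even.neg_one_pow ⟨n+2, by omega⟩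
  rw [hs1, hs2]
  ring

lemma s4T_det_one (q : ℕ) (u : ℂ) : (s4T q u 1).det = 1 + (q:ℂ) * u ^ 2 := by
  rw [Matrix.det_fin_one]; exact stmt4M_diag q u 0

lemma s4T_det_two (q : ℕ) (u : ℂ) :
    (s4T q u 2).det = (1 + (q:ℂ) * u ^ 2) ^ 2 - ((q:ℂ) + 1) * (q:ℂ) * u ^ 2 := by
  rw [Matrix.det_fin_two]
  have h00 : (s4T q u 2) 0 0 = 1 + (q:ℂ) * u ^ 2 := stmt4M_diag q u 0
  have h11 : (s4T q u 2) 1 1 = 1 + (q:ℂ) * u ^ 2 := stmt4M_diag q u 1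
  have h01 : (s4T q u 2) 0 1 = -((q:ℂ) + 1) * u := by simp [s4T, stmt4M]
  have h10 : (s4T q u 2) 1 0 = -(q:ℂ) * u := by simp [s4T, stmt4M]
  rw [h00, h11, h01, h10]; ring

lemma s4T_closed (q : ℕ) (u : ℂ) : ∀ n : ℕ,
    (1 - (q:ℂ) * u ^ 2) * (s4T q u (n+1)).det
      = (1 - (q:ℂ) ^ 2 * u ^ 2) + (q:ℂ) * (1 - u ^ 2) * ((q:ℂ) * u ^ 2) ^ (n+1) := by
  have key : ∀ n : ℕ,
      ((1 - (q:ℂ) * u ^ 2) * (s4T q u (n+1)).det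
        = (1 - (q:ℂ) ^ 2 * u ^ 2) + (q:ℂ) * (1 - u ^ 2) * ((q:ℂ) * u ^ 2) ^ (n+1)) ∧
      ((1 - (q:ℂ) * u ^ 2) * (s4T q u (n+2)).det
        = (1 - (q:ℂ) ^ 2 * u ^ 2) + (q:ℂ) * (1 - u ^ 2) * ((q:ℂ) * u ^ 2) ^ (n+2)) := by
    intro n
    induction n with
    | zero =>
      constructor
      · rw [s4T_det_one]; ring
      · rw [s4T_det_two]; ring
    | succ m ih =>
      refine ⟨ih.2, ?_⟩
      rw [s4T_rec]
      linear_combination (1 + (q:ℂ) * u ^ 2) * ih.2 - ((q:ℂ) * u ^ 2) * ih.1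
  exact fun n => (key n).1

lemma s4T_det_range (q : ℕ) (u : ℂ) (N : ℕ) :
    Matrix.det (Matrix.of fun i j : (Finset.range N : Finset ℕ) => stmt4M q u i.1 j.1)
      = (s4T q u N).det := by
  let e : (Finset.range N : Finset ℕ) ≃ Fin N :=
    { toFun := fun i => ⟨i.1, Finset.mem_range.mp i.2⟩
      invFun := fun k => ⟨k.1, Finset.mem_range.mpr k.2⟩
      left_inv := fun i => rfl
      right_inv := fun k => rfl }
  have : (Matrix.of fun i j : (Finset.range N : Finset ℕ) => stmt4M q u i.1 j.1)
      = (s4T q u N).submatrix e e := rfl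
  rw [this, Matrix.det_submatrix_equiv_self]

lemma s4T_det_insert (q : ℕ) (u : ℂ) (F : Finset ℕ) (m : ℕ) (hm : m ∉ F)
    (h1 : ∀ j ∈ F, stmt4M q u m j = 0) (h2 : ∀ j ∈ F, stmt4M q u j m = 0) :
    Matrix.det (Matrix.of fun i j : (insert m F : Finset ℕ) => stmt4M q u i.1 j.1)
      = stmt4M q u m m * Matrix.det (Matrix.of fun i j : F => stmt4M q u i.1 j.1) := by
  classical
  let e : ((F : Finset ℕ) ⊕ Unit) ≃ (insert m F : Finset ℕ) :=
    { toFun := Sum.elim (fun i => ⟨i.1, Finset.mem_insert_of_mem i.2⟩)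
        (fun _ => ⟨m, Finset.mem_insert_self m F⟩)
      invFun := fun x => if h : x.1 ∈ F then Sum.inl ⟨x.1, h⟩ else Sum.inr ()
      left_inv := by
        rintro (i | ⟨⟩)
        · simp [i.2]
        · simp [hm]
      right_inv := by
        rintro ⟨x, hx⟩
        rcases Finset.mem_insert.mp hx with h | h
        · subst h; simp [hm]
        · simp [h] }
  rw [← Matrix.det_submatrix_equiv_self e]
  have hblock : (Matrix.of fun i j : (insert m F : Finset ℕ) => stmt4M q u i.1 j.1).submatrix e e
      = Matrix.fromBlocks (Matrix.of fun i j : F => stmt4M q u i.1 j.1) 0 0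
          (Matrix.of fun _ _ : Unit => stmt4M q u m m) := by
    ext i j
    rcases i with i | _ <;> rcases j with j | _
    · rfl
    · exact h2 i.1 i.2
    · exact h1 j.1 j.2
    · rfl
  rw [hblock, Matrix.det_fromBlocks_zero₁₂,
    show (Matrix.of fun _ _ : Unit => stmt4M q u m m).det = stmt4M q u m m from
      Matrix.det_unique _]
  ring

lemma s4T_aux (q : ℕ) (hq : 2 ≤ q) (u : ℂ) (hu : ‖u‖ < 1/(2*q)) :
    Tendsto
      (fun N : ℕ =>
        Matrix.det (Matrix.of fun i j : (Finset.range N : Finset ℕ) => stmt4M q u i.1 j.1))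
      atTop (nhds ((1 - (q : ℂ) ^ 2 * u ^ 2) / (1 - (q : ℂ) * u ^ 2)))
      ∧ (1 - (q : ℂ) * u ^ 2) ≠ 0 ∧ (1 - (q : ℂ) ^ 2 * u ^ 2) ≠ 0 := by
  have hq0 : (0:ℝ) < q := by positivity
  have hqr : (2:ℝ) ≤ q := by exact_mod_cast hq
  have hu' : ‖u‖ * (2*(q:ℝ)) < 1 := by
    rw [← lt_div_iff₀ (by positivity)]; exact hu
  have hx0 : (0:ℝ) ≤ ‖u‖ := norm_nonneg u
  have hy : (0:ℝ) ≤ ‖u‖ * (2*(q:ℝ)) := by positivity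
  have hx2 : ‖u‖ ^ 2 * (2*(q:ℝ))^2 < 1 := by nlinarith [hy, hu', mul_nonneg hy hy]
  have ht : ‖(q:ℂ) * u ^ 2‖ < 1 := by
    rw [norm_mul, norm_pow, Complex.norm_natCast]
    nlinarith [sq_nonneg (‖u‖)]
  have ht2 : ‖(q:ℂ) ^ 2 * u ^ 2‖ < 1 := by
    rw [norm_mul, norm_pow, norm_pow, Complex.norm_natCast]
    nlinarith
  have h1t : (1 : ℂ) - (q:ℂ) * u ^ 2 ≠ 0 := by
    intro h
    have h' : (q:ℂ) * u ^ 2 = 1 := by linear_combination -h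
    rw [h'] at ht; simp at ht
  have hc : (1 : ℂ) - (q:ℂ) ^ 2 * u ^ 2 ≠ 0 := by
    intro h
    have h' : (q:ℂ) ^ 2 * u ^ 2 = 1 := by linear_combination -h
    rw [h'] at ht2; simp at ht2
  refine ⟨?_, h1t, hc⟩
  have hD : ∀ n : ℕ, (s4T q u (n+1)).det
      = ((1 - (q:ℂ)^2*u^2) + (q:ℂ)*(1-u^2) * ((q:ℂ)*u^2)^(n+1)) / (1 - (q:ℂ)*u^2) := by
    intro n
    rw [eq_div_iff h1t]
    linear_combination s4T_closed q u n
  have hpow : Tendsto (fun n : ℕ => ((q:ℂ)*u^2)^n) atTop (nhds 0) :=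
    tendsto_pow_atTop_nhds_zero_of_norm_lt_one (by exact ht)
  have h2 : Tendsto (fun n : ℕ =>
      ((1 - (q:ℂ)^2*u^2) + (q:ℂ)*(1-u^2) * ((q:ℂ)*u^2)^(n+1)) / (1 - (q:ℂ)*u^2)) atTop
      (nhds ((1 - (q:ℂ)^2*u^2)/(1 - (q:ℂ)*u^2))) := by
    have h3 := (((hpow.comp (tendsto_add_atTop_nat 1)).const_mul
      ((q:ℂ)*(1-u^2))).const_add (1 - (q:ℂ)^2*u^2)).div_const (1 - (q:ℂ)*u^2)
    simpa using h3
  have h4 : Tendsto (fun n : ℕ => (s4T q u (n+1)).det) atTop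
      (nhds ((1 - (q:ℂ)^2*u^2)/(1 - (q:ℂ)*u^2))) := by
    rw [funext hD]; exact h2
  have h5 : Tendsto (fun n : ℕ => (s4T q u n).det) atTop
      (nhds ((1 - (q:ℂ)^2*u^2)/(1 - (q:ℂ)*u^2))) :=
    (tendsto_add_atTop_iff_nat 1).mp h4
  have := funext (s4T_det_range q u)
  rw [this]; exact h5

lemma s4_range_tendsto : Tendsto (fun N : ℕ => Finset.range N) atTop atTop := by
  apply tendsto_atTop_atTop.mpr
  intro F
  refine ⟨F.sup id + 1, fun N hN => fun x hx => Finset.mem_range.mpr ?_⟩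
  have := Finset.le_sup (f := id) hx
  simp only [id_eq] at this
  omega

lemma s4_abs_sub_lt (x y L : ℂ) (ε : ℝ) (h1 : ‖x - L‖ < ε)
    (h2 : ‖y - L‖ < ε) : ‖y - x‖ < 2 * ε := by
  have h3 : y - x = (y - L) - (x - L) := by ring
  rw [h3]
  calc ‖(y - L) - (x - L)‖ ≤ ‖y - L‖ + ‖x - L‖ :=
        norm_sub_le _ _
    _ < 2 * ε := by linarith

lemma s4_abs_lower (x L : ℂ) (ε : ℝ) (h : ‖x - L‖ < ε) :
    ‖L‖ - ε ≤ ‖x‖ := by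
  have h4 := norm_sub_norm_le L x
  rw [norm_sub_rev] at h4
  linarith

/-- (a) for `|u|` small the determinants of the principal minors
of `stmt4M q u` on the initial segments `{0, …, N-1}` converge to
`(1 - q²u²)/(1 - qu²)`; (b) for `0 < |u|` small the net of determinants of the
principal minors over ALL finite subsets of `ℕ` does not converge.  Hence
`stmt4M q u` is of connected determinant class, but not of determinant
class. -/
theorem stmt4 (q : ℕ) (hq : 2 ≤ q) :
    (∃ α : ℝ, 0 < α ∧ ∀ u : ℂ, ‖u‖ < α →
      Tendsto
        (fun N : ℕ =>
          Matrix.det (Matrix.of fun i j : (Finset.range N : Finset ℕ) => stmt4M q u i.1 j.1))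
        atTop (nhds ((1 - (q : ℂ) ^ 2 * u ^ 2) / (1 - (q : ℂ) * u ^ 2)))) ∧
    (∃ α : ℝ, 0 < α ∧ ∀ u : ℂ, 0 < ‖u‖ → ‖u‖ < α →
      ¬ ∃ L : ℂ, Tendsto
        (fun F : Finset ℕ => Matrix.det (Matrix.of fun i j : F => stmt4M q u i.1 j.1))
        atTop (nhds L)) := by
  have hq0 : (0:ℝ) < q := by positivity
  constructor
  · exact ⟨1/(2*q), by positivity, fun u hu => (s4T_aux q hq u hu).1⟩
  · refine ⟨1/(2*q), by positivity, fun u hu0 hu => ?_⟩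
    rintro ⟨L, hL⟩
    obtain ⟨hA, h1t, hc⟩ := s4T_aux q hq u hu
    have hseq : Tendsto
        (fun N : ℕ =>
          Matrix.det (Matrix.of fun i j : (Finset.range N : Finset ℕ) => stmt4M q u i.1 j.1))
        atTop (nhds L) := hL.comp s4_range_tendsto
    have hLval : L = (1 - (q : ℂ) ^ 2 * u ^ 2) / (1 - (q : ℂ) * u ^ 2) :=
      tendsto_nhds_unique hseq hA
    have hLne : L ≠ 0 := by rw [hLval]; exact div_ne_zero hc h1t
    have hLpos : 0 < ‖L‖ := norm_pos_iff.mpr hLne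
    set r : ℝ := (q:ℝ) * ‖u‖ ^ 2 with hr_def
    have hr : 0 < r := by positivity
    set ε : ℝ := r * ‖L‖ / (2 * (2 + r)) with hε_def
    have hε : 0 < ε := by positivity
    have hev := Metric.tendsto_nhds.mp hL ε hε
    obtain ⟨F₀, hF₀⟩ := eventually_atTop.mp hev
    set m : ℕ := F₀.sup id + 2 with hm_def
    have hmle : ∀ j ∈ F₀, j ≤ F₀.sup id := fun j hj => Finset.le_sup (f := id) hj
    have hm : m ∉ F₀ := fun h => by have := hmle m h; omega
    have hz1 : ∀ j ∈ F₀, stmt4M q u m j = 0 := by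
      intro j hj
      have hjle := hmle j hj
      simp only [stmt4M]
      rw [if_neg (by omega), if_neg (by rintro ⟨h1, h2⟩; omega),
        if_neg (by rintro ⟨h1, h2⟩; omega), if_neg (by omega)]
    have hz2 : ∀ j ∈ F₀, stmt4M q u j m = 0 := by
      intro j hj
      have hjle := hmle j hj
      simp only [stmt4M]
      rw [if_neg (by omega), if_neg (by rintro ⟨h1, h2⟩; omega),
        if_neg (by rintro ⟨h1, h2⟩; omega), if_neg (by omega)]
    have hins := s4T_det_insert q u F₀ m hm hz1 hz2
    rw [stmt4M_diag] at hins
    set a : ℂ := Matrix.det (Matrix.of fun i j : F₀ => stmt4M q u i.1 j.1) with ha_def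
    have hd1 : ‖a - L‖ < ε := by
      have := hF₀ F₀ le_rfl
      rwa [Complex.dist_eq] at this
    have hd2 : ‖(1 + (q:ℂ) * u ^ 2) * a - L‖ < ε := by
      have := hF₀ (insert m F₀) (Finset.subset_insert _ _)
      rw [Complex.dist_eq, hins] at this
      exact this
    have key0 : ‖(1 + (q:ℂ) * u ^ 2) * a - a‖ < 2 * ε :=
      s4_abs_sub_lt a ((1 + (q:ℂ) * u ^ 2) * a) L ε hd1 hd2
    have key : r * ‖a‖ < 2 * ε := by
      have h3 : (1 + (q:ℂ) * u ^ 2) * a - a = ((q:ℂ) * u ^ 2) * a := by ring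
      rw [h3, norm_mul, norm_mul, norm_pow, Complex.norm_natCast] at key0
      exact key0
    have haL : ‖L‖ - ε ≤ ‖a‖ := s4_abs_lower a L ε hd1
    have hεval : ε * (2 * (2 + r)) = r * ‖L‖ := by
      rw [hε_def]; field_simp
    nlinarith [key, hr, hε, hεval, mul_le_mul_of_nonneg_left haL hr.le, mul_pos hr hε]
end

section
/- Let n ≥ 1, q > 0, and let A be an n × n real matrix with all entries nonnegative, all column sums equal to q (∑_i A i j = q for every j), and A indecomposable, meaning there is no partition of the index set into two nonempty disjoint subsets S and T with A i j = 0 for all i ∈ S and j ∈ T. Then there exist Δ ∈ ℕ with Δ ≥ 1, ε > 0 with ε < q, and C ≥ 0 such that for all m ≥ 1: |trace(A^m) − (Δ · q^m if Δ divides m, and 0 otherwise)| ≤ C · (q − ε)^m. -/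
open Finset Matrix Filter Topology

open Finset Matrix

variable {n : ℕ}

/-- entries of a product of entrywise-nonneg matrices are nonneg -/
lemma prodNonneg {M N : Matrix (Fin n) (Fin n) ℝ} (hM : ∀ i j, 0 ≤ M i j)
    (hN : ∀ i j, 0 ≤ N i j) : ∀ i j, 0 ≤ (M * N) i j := by
  intro i j
  rw [Matrix.mul_apply]
  exact Finset.sum_nonneg fun k _ => mul_nonneg (hM i k) (hN k j)

lemma powNonneg {B : Matrix (Fin n) (Fin n) ℝ} (hB : ∀ i j, 0 ≤ B i j) (m : ℕ) :
    ∀ i j, 0 ≤ (B ^ m) i j := by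
  induction m with
  | zero => intro i j; simp [Matrix.one_apply]; split <;> norm_num
  | succ m ih => rw [pow_succ]; exact prodNonneg ih hB

lemma prodColsum {M N : Matrix (Fin n) (Fin n) ℝ} (hM : ∀ j, ∑ i, M i j = 1)
    (hN : ∀ j, ∑ i, N i j = 1) : ∀ j, ∑ i, (M * N) i j = 1 := by
  intro j
  simp only [Matrix.mul_apply]
  rw [Finset.sum_comm]
  simp only [← Finset.sum_mul, hM]
  simpa using hN j

lemma powColsum {B : Matrix (Fin n) (Fin n) ℝ} (hB : ∀ j, ∑ i, B i j = 1) (m : ℕ) :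
    ∀ j, ∑ i, (B ^ m) i j = 1 := by
  induction m with
  | zero => intro j; simp [Matrix.one_apply]
  | succ m ih => rw [pow_succ]; exact prodColsum ih hB

lemma entryLeOne {B : Matrix (Fin n) (Fin n) ℝ} (hB0 : ∀ i j, 0 ≤ B i j)
    (hB1 : ∀ j, ∑ i, B i j = 1) (i j : Fin n) : B i j ≤ 1 := by
  rw [← hB1 j]
  exact Finset.single_le_sum (fun k _ => hB0 k j) (Finset.mem_univ i)

/-- lower bound for a product entry through an intermediate index -/
lemma prodEntryLB {M N : Matrix (Fin n) (Fin n) ℝ} (hM : ∀ i j, 0 ≤ M i j)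
    (hN : ∀ i j, 0 ≤ N i j) (i k j : Fin n) : M i k * N k j ≤ (M * N) i j := by
  rw [Matrix.mul_apply]
  exact Finset.single_le_sum (f := fun l => M i l * N l j)
    (fun l _ => mul_nonneg (hM i l) (hN l j)) (Finset.mem_univ k)

lemma prodEntryPos {M N : Matrix (Fin n) (Fin n) ℝ} (hM : ∀ i j, 0 ≤ M i j)
    (hN : ∀ i j, 0 ≤ N i j) {i j : Fin n} (h : 0 < (M * N) i j) :
    ∃ k, 0 < M i k ∧ 0 < N k j := by
  by_contra hc
  push_neg at hc
  have : (M * N) i j = 0 := by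
    rw [Matrix.mul_apply]
    refine Finset.sum_eq_zero fun k _ => ?_
    rcases lt_or_eq_of_le (hM i k) with h1 | h1
    · rcases lt_or_eq_of_le (hN k j) with h2 | h2
      · exact absurd (hc k h1) (not_le.mpr h2)
      · rw [← h2, mul_zero]
    · rw [← h1, zero_mul]
  exact absurd this (ne_of_gt h)

/-- Numerical semigroup lemma: a subset of ℕ containing 0, closed under addition,
with a positive element, has a "gcd" Δ dividing all elements such that all
sufficiently large multiples of Δ belong to the set. -/
lemma gcdLemma (R : Set ℕ) (h0 : (0 : ℕ) ∈ R) (hadd : ∀ a ∈ R, ∀ b ∈ R, a + b ∈ R)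
    (hpos : ∃ m ∈ R, 0 < m) :
    ∃ Δ : ℕ, 0 < Δ ∧ (∀ m ∈ R, Δ ∣ m) ∧ ∃ K, ∀ k, K ≤ k → k * Δ ∈ R := by
  have hmul : ∀ c : ℕ, ∀ m ∈ R, c * m ∈ R := by
    intro c
    induction c with
    | zero => intro m _; simpa using h0
    | succ c ih => intro m hm; rw [Nat.succ_mul]; exact hadd _ (ih m hm) _ hm
  set H : AddSubgroup ℤ := AddSubgroup.closure ((↑) '' R) with hH
  obtain ⟨g, hg⟩ := Int.subgroup_cyclic H
  set Δ : ℕ := g.natAbs with hΔ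
  have hmemH : ∀ m ∈ R, (m : ℤ) ∈ H := fun m hm =>
    AddSubgroup.subset_closure ⟨m, hm, rfl⟩
  have hdvd : ∀ m ∈ R, Δ ∣ m := by
    intro m hm
    have := hmemH m hm
    rw [hg, AddSubgroup.mem_closure_singleton] at this
    obtain ⟨k, hk⟩ := this
    have : (g : ℤ) ∣ (m : ℤ) := ⟨k, by rw [← hk, zsmul_eq_mul]; push_cast; ring⟩
    have : (Δ : ℤ) ∣ (m : ℤ) := (Int.natAbs_dvd).mpr this
    exact_mod_cast this
  obtain ⟨m₀, hm₀R, hm₀⟩ := hpos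
  have hΔpos : 0 < Δ := by
    rcases Nat.eq_zero_or_pos Δ with h | h
    · obtain ⟨c, hc⟩ := hdvd m₀ hm₀R
      rw [h, zero_mul] at hc
      omega
    · exact h
  -- every element of H is a difference of two elements of R
  have hdiff : ∀ z ∈ H, ∃ p ∈ R, ∃ q ∈ R, (p : ℤ) - (q : ℤ) = z := by
    intro z hz
    refine AddSubgroup.closure_induction ?_ ?_ ?_ ?_ hz
    · rintro x ⟨m, hm, rfl⟩
      exact ⟨m, hm, 0, h0, by simp⟩
    · exact ⟨0, h0, 0, h0, by simp⟩
    · rintro x y hx hy ⟨p, hp, q, hq, rfl⟩ ⟨p', hp', q', hq', rfl⟩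
      exact ⟨p + p', hadd _ hp _ hp', q + q', hadd _ hq _ hq', by push_cast; ring⟩
    · rintro x hx ⟨p, hp, q, hq, rfl⟩
      exact ⟨q, hq, p, hp, by ring⟩
  have hΔH : (Δ : ℤ) ∈ H := by
    have hgH : g ∈ H := by
      rw [hg]; exact AddSubgroup.subset_closure rfl
    rcases Int.natAbs_eq g with h | h
    · show ((g.natAbs : ℤ)) ∈ H
      rw [← h]; exact hgH
    · show ((g.natAbs : ℤ)) ∈ H
      have h2 : ((g.natAbs : ℤ)) = -g := by omega
      rw [h2]; exact neg_mem hgH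
  obtain ⟨p, hp, q, hq, hpq⟩ := hdiff _ hΔH
  have hpq' : p = q + Δ := by omega
  obtain ⟨u, hu⟩ := hdvd q hq
  refine ⟨Δ, hΔpos, hdvd, u * u, ?_⟩
  intro k hk
  have ht : k % u < u ∨ u = 0 := by
    rcases Nat.eq_zero_or_pos u with h | h
    · right; exact h
    · left; exact Nat.mod_lt _ h
  rcases ht with ht | hu0
  · set t := k % u with htdef
    set a := k / u with hadef
    have hta : t ≤ a := by
      have : u ≤ a := (Nat.le_div_iff_mul_le (by omega)).mpr hk
      omega
    have h1 : u * a + t = k := Nat.div_add_mod k u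
    have hk' : k = a * u + t := by rw [← h1]; ring
    obtain ⟨a', ha'⟩ : ∃ a', a = a' + t := ⟨a - t, by omega⟩
    have key : k * Δ = a' * q + t * p := by
      rw [hpq', hu, hk', ha']
      ring
    rw [key]
    exact hadd _ (hmul _ _ hq) _ (hmul _ _ hp)
  · -- u = 0 : q = 0 and p = Δ ∈ R
    rw [hu0, mul_zero] at hu
    have hpΔ : p = Δ := by omega
    have : k * Δ = k * p := by rw [hpΔ]
    rw [this]
    exact hmul _ _ hp

lemma keyB (n : ℕ) (hn : 1 ≤ n) (B : Matrix (Fin n) (Fin n) ℝ)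
    (hB0 : ∀ i j, 0 ≤ B i j) (hB1 : ∀ j, ∑ i, B i j = 1)
    (hirr : ∀ i j : Fin n, ∃ m : ℕ, 0 < (B ^ m) i j) :
    ∃ Δ : ℕ, 1 ≤ Δ ∧ ∃ ρ : ℝ, 0 < ρ ∧ ρ < 1 ∧ ∃ C : ℝ, 0 ≤ C ∧
      ∀ m : ℕ, 1 ≤ m →
        |Matrix.trace (B ^ m) - (if Δ ∣ m then (Δ : ℝ) else 0)| ≤ C * ρ ^ m := by
  classical
  set z : Fin n := ⟨0, hn⟩ with hz
  -- basic facts about powers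
  have hP0 : ∀ (m : ℕ) (i j : Fin n), 0 ≤ (B ^ m) i j := fun m => powNonneg hB0 m
  have hP1 : ∀ (m : ℕ) (j : Fin n), ∑ i, (B ^ m) i j = 1 := fun m => powColsum hB1 m
  have hPle1 : ∀ (m : ℕ) (i j : Fin n), (B ^ m) i j ≤ 1 := fun m i j =>
    entryLeOne (hP0 m) (hP1 m) i j
  have chain : ∀ (a b : ℕ) (i k j : Fin n), 0 < (B ^ a) i k → 0 < (B ^ b) k j →
      0 < (B ^ (a + b)) i j := by
    intro a b i k j h1 h2
    rw [pow_add]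
    calc (0:ℝ) < (B ^ a) i k * (B ^ b) k j := mul_pos h1 h2
      _ ≤ (B ^ a * B ^ b) i j := prodEntryLB (hP0 a) (hP0 b) i k j
  have exPos : ∀ (m : ℕ) (j : Fin n), ∃ i, 0 < (B ^ m) i j := by
    intro m j
    by_contra hc
    push_neg at hc
    have h1 : ∑ i, (B ^ m) i j ≤ 0 := Finset.sum_nonpos fun i _ => hc i
    rw [hP1 m j] at h1
    linarith
  -- return times at z
  set R : Set ℕ := {m : ℕ | 0 < (B ^ m) z z} with hR
  have h0R : (0:ℕ) ∈ R := by simp [hR, Matrix.one_apply]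
  have haddR : ∀ a ∈ R, ∀ b ∈ R, a + b ∈ R := fun a ha b hb => chain a b z z z ha hb
  have hposR : ∃ m ∈ R, 0 < m := by
    obtain ⟨i, hi⟩ := exPos 1 z
    obtain ⟨m, hm⟩ := hirr z i
    exact ⟨m + 1, chain m 1 z i z hm hi, by omega⟩
  obtain ⟨Δ, hΔpos, hdvdR, K, hK⟩ := gcdLemma R h0R haddR hposR
  haveI : NeZero Δ := ⟨by omega⟩
  -- class function
  have reach : ∀ i : Fin n, ∃ m, 0 < (B ^ m) i z := fun i => hirr i z
  set mfun : Fin n → ℕ := fun i => (reach i).choose with hmfun_def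
  have hmfun : ∀ i, 0 < (B ^ (mfun i)) i z := fun i => (reach i).choose_spec
  set c : Fin n → ZMod Δ := fun i => ((mfun i : ℕ) : ZMod Δ) with hc_def
  have cWellDef : ∀ (i : Fin n) (m : ℕ), 0 < (B ^ m) i z → ((m : ℕ) : ZMod Δ) = c i := by
    intro i m hm
    obtain ⟨l, hl⟩ := hirr z i
    have h1 : Δ ∣ l + m := hdvdR _ (chain l m z i z hl hm)
    have h2 : Δ ∣ l + mfun i := hdvdR _ (chain l (mfun i) z i z hl (hmfun i))
    have e1 : ((l : ℕ) : ZMod Δ) + (m : ZMod Δ) = 0 := by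
      rw [← Nat.cast_add]
      exact (ZMod.natCast_eq_zero_iff _ _).mpr h1
    have e2 : ((l : ℕ) : ZMod Δ) + ((mfun i : ℕ) : ZMod Δ) = 0 := by
      rw [← Nat.cast_add]
      exact (ZMod.natCast_eq_zero_iff _ _).mpr h2
    have : (m : ZMod Δ) = ((mfun i : ℕ) : ZMod Δ) := by
      have := e1.trans e2.symm
      exact add_left_cancel this
    exact this
  have cIter : ∀ (m : ℕ) (i j : Fin n), 0 < (B ^ m) i j → c i = c j + (m : ZMod Δ) := by
    intro m
    induction m with
    | zero =>
      intro i j h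
      have : i = j := by
        by_contra hne
        rw [pow_zero, Matrix.one_apply_ne hne] at h
        exact lt_irrefl _ h
      subst this
      simp
    | succ m ih =>
      intro i j h
      rw [pow_succ] at h
      obtain ⟨k, hk1, hk2⟩ := prodEntryPos (hP0 m) (by simpa using hB0) h
      have h3 : c i = c k + (m : ZMod Δ) := ih i k hk1
      have h4 : c k = c j + 1 := by
        have h5 : 0 < (B ^ (1 + mfun j)) k z := by
          refine chain 1 (mfun j) k j z ?_ (hmfun j)
          rw [pow_one]; exact hk2
        have := cWellDef k (1 + mfun j) h5
        rw [← this]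
        push_cast
        show (1 : ZMod Δ) + (mfun j : ZMod Δ) = c j + 1
        rw [add_comm]
      rw [h3, h4]
      push_cast
      ring
  have cSurj : ∀ t : ZMod Δ, ∃ i, c i = t := by
    intro t
    obtain ⟨i, hi⟩ := exPos t.val z
    refine ⟨i, ?_⟩
    rw [← cWellDef i t.val hi, ZMod.natCast_val, ZMod.cast_id]
  have cz : c z = 0 := by
    have := cWellDef z 0 (by simp [Matrix.one_apply])
    simpa using this.symm
  -- return times anywhere are multiples of Δ
  have returnDvd : ∀ (m : ℕ) (i : Fin n), 0 < (B ^ m) i i → Δ ∣ m := by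
    intro m i h
    have := cIter m i i h
    have h2 : ((m : ℕ) : ZMod Δ) = 0 := by
      have := left_eq_add.mp this
      exact this
    exact (ZMod.natCast_eq_zero_iff _ _).mp h2
  have traceZero : ∀ m : ℕ, ¬ Δ ∣ m → Matrix.trace (B ^ m) = 0 := by
    intro m hm
    rw [Matrix.trace]
    refine Finset.sum_eq_zero fun i _ => ?_
    rcases lt_or_eq_of_le (hP0 m i i) with h | h
    · exact absurd (returnDvd m i h) hm
    · exact h.symm
  -- uniform positivity exponent s
  have lreach : ∀ j : Fin n, ∃ l, 0 < (B ^ l) z j := fun j => hirr z j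
  set lfun : Fin n → ℕ := fun j => (lreach j).choose with hlfun_def
  have hlfun : ∀ j, 0 < (B ^ (lfun j)) z j := fun j => (lreach j).choose_spec
  set L : ℕ := K + (∑ i, mfun i) + (∑ j, lfun j) + 1 with hL
  set s : ℕ := L * Δ with hs_def
  have hsΔ : Δ ∣ s := ⟨L, by rw [hs_def]; ring⟩
  have hspos : 0 < s := by
    have : 0 < L := by omega
    exact Nat.mul_pos this hΔpos
  have hsPos : ∀ i j : Fin n, c i = c j → 0 < (B ^ s) i j := by
    intro i j hcij
    -- mfun i + lfun j is a multiple of Δ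
    have hd : Δ ∣ mfun i + lfun j := by
      have h1 : c z = c j + ((lfun j : ℕ) : ZMod Δ) := cIter (lfun j) z j (hlfun j)
      have h2 : c i = ((mfun i : ℕ) : ZMod Δ) := rfl
      have h3 : ((mfun i + lfun j : ℕ) : ZMod Δ) = 0 := by
        push_cast
        rw [← h2]
        have h4 : ((lfun j : ℕ) : ZMod Δ) = - c j := by
          rw [cz] at h1
          linear_combination -h1
        rw [h4, hcij]
        ring
      exact (ZMod.natCast_eq_zero_iff _ _).mp h3
    obtain ⟨w, hw⟩ := hd
    have hwle : w ≤ (∑ i, mfun i) + (∑ j, lfun j) := by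
      have h5 : mfun i ≤ ∑ i', mfun i' :=
        Finset.single_le_sum (f := mfun) (fun _ _ => Nat.zero_le _) (Finset.mem_univ i)
      have h6 : lfun j ≤ ∑ j', lfun j' :=
        Finset.single_le_sum (f := lfun) (fun _ _ => Nat.zero_le _) (Finset.mem_univ j)
      have h7 : w ≤ Δ * w := Nat.le_mul_of_pos_left w hΔpos
      omega
    obtain ⟨v, hv⟩ : ∃ v, L = w + v := ⟨L - w, by omega⟩
    have hvK : K ≤ v := by omega
    have hvR : 0 < (B ^ (v * Δ)) z z := hK v hvK
    have hdecomp : s = mfun i + (v * Δ + lfun j) := by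
      rw [hs_def, hv]
      have h8 : (w + v) * Δ = Δ * w + v * Δ := by ring
      rw [h8, ← hw]
      omega
    rw [hdecomp]
    exact chain _ _ i z j (hmfun i) (chain _ _ z z j hvR (hlfun j))
  set P : Matrix (Fin n) (Fin n) ℝ := B ^ s with hPdef
  -- P respects classes
  have hPaClass : ∀ (a : ℕ) (i j : Fin n), 0 < ((P ^ a)) i j → c i = c j := by
    intro a i j h
    rw [hPdef, ← pow_mul] at h
    have := cIter (s * a) i j h
    have hdvd : Δ ∣ s * a := Dvd.dvd.mul_right hsΔ a
    rw [(ZMod.natCast_eq_zero_iff _ _).mpr hdvd, add_zero] at this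
    exact this
  have hPa0 : ∀ (a : ℕ) (i j : Fin n), 0 ≤ (P ^ a) i j := by
    intro a; rw [hPdef, ← pow_mul]; exact hP0 _
  have hPa1 : ∀ (a : ℕ) (j : Fin n), ∑ i, (P ^ a) i j = 1 := by
    intro a; rw [hPdef, ← pow_mul]; exact hP1 _
  -- δ: minimal same-class entry of P
  set SC : Finset (Fin n × Fin n) := Finset.univ.filter (fun p => c p.1 = c p.2) with hSC
  have hSCne : SC.Nonempty := ⟨(z, z), by simp [hSC]⟩
  set δ : ℝ := SC.inf' hSCne (fun p => P p.1 p.2) with hδdef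
  have hδpos : 0 < δ := by
    rw [hδdef, Finset.lt_inf'_iff]
    rintro ⟨i, j⟩ hij
    rw [hSC, Finset.mem_filter] at hij
    exact hsPos i j hij.2
  have hδle : ∀ i j : Fin n, c i = c j → δ ≤ P i j := by
    intro i j h
    have hmem : (i, j) ∈ SC := by
      rw [hSC, Finset.mem_filter]; exact ⟨Finset.mem_univ _, h⟩
    rw [hδdef]
    exact Finset.inf'_le _ hmem
  have hδ1 : δ ≤ 1 := le_trans (hδle z z rfl) (by rw [hPdef]; exact hPle1 s z z)
  set θ : ℝ := 1 - δ with hθdef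
  have hθ0 : 0 ≤ θ := by rw [hθdef]; linarith
  have hθ1 : θ < 1 := by rw [hθdef]; linarith
  have hPcol : ∀ j, ∑ i, P i j = 1 := fun j => hP1 s j
  have hPclass : ∀ i j : Fin n, c i ≠ c j → P i j = 0 := by
    intro i j hne
    rcases lt_or_eq_of_le (hP0 s i j) with h | h
    · exact absurd (hPaClass 1 i j (by rwa [pow_one])) hne
    · exact h.symm
  -- one-step contraction on zero-sum vectors supported on a single class
  have contract : ∀ (γ : ZMod Δ) (x : Fin n → ℝ), (∀ i, c i ≠ γ → x i = 0) →
      (∑ i, x i = 0) →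
      (∀ i, c i ≠ γ → (P.mulVec x) i = 0) ∧ (∑ i, (P.mulVec x) i = 0) ∧
      ∑ i, |(P.mulVec x) i| ≤ θ * ∑ i, |x i| := by
    intro γ x hsupp hsum
    have hmv : ∀ i, P.mulVec x i = ∑ j, P i j * x j := by
      intro i; simp [Matrix.mulVec, dotProduct]
    refine ⟨?_, ?_, ?_⟩
    · intro i hi
      rw [hmv]
      refine Finset.sum_eq_zero fun j _ => ?_
      by_cases hcj : c j = γ
      · have hne : c i ≠ c j := by rw [hcj]; exact hi
        rw [hPclass i j hne, zero_mul]
      · rw [hsupp j hcj, mul_zero]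
    · calc ∑ i, P.mulVec x i = ∑ i, ∑ j, P i j * x j := by simp_rw [hmv]
        _ = ∑ j, (∑ i, P i j) * x j := by rw [Finset.sum_comm]; simp_rw [Finset.sum_mul]
        _ = ∑ j, x j := by simp_rw [hPcol, one_mul]
        _ = 0 := hsum
    · set Q : Fin n → Fin n → ℝ := fun i j => P i j - (if c i = c j then δ else 0)
        with hQdef
      have hQ0 : ∀ i j, 0 ≤ Q i j := by
        intro i j
        rw [hQdef]
        by_cases h : c i = c j
        · simp only [h, if_true]
          linarith [hδle i j h]
        · simp only [h, if_false, sub_zero]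
          exact hP0 s i j
      have hkey : ∀ i, P.mulVec x i = ∑ j, Q i j * x j := by
        intro i
        rw [hmv]
        have hsplit : ∑ j, P i j * x j
            = ∑ j, Q i j * x j + δ * ∑ j, (if c i = c j then x j else 0) := by
          rw [Finset.mul_sum, ← Finset.sum_add_distrib]
          refine Finset.sum_congr rfl fun j _ => ?_
          rw [hQdef]
          by_cases h : c i = c j <;> simp [h] <;> ring
        have hzero : ∑ j, (if c i = c j then x j else 0) = 0 := by
          by_cases hci : c i = γ
          · have heq : ∑ j, (if c i = c j then x j else 0) = ∑ j, x j := by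
              refine Finset.sum_congr rfl fun j _ => ?_
              by_cases hcj : c j = γ
              · rw [if_pos (hci.trans hcj.symm)]
              · rw [hsupp j hcj]
                simp
            rw [heq, hsum]
          · refine Finset.sum_eq_zero fun j _ => ?_
            by_cases h : c i = c j
            · rw [if_pos h, hsupp j (by rw [← h]; exact hci)]
            · rw [if_neg h]
        rw [hsplit, hzero, mul_zero, add_zero]
      have hQcol : ∀ j, ∑ i, Q i j ≤ θ := by
        intro j
        have h1 : ∑ i, Q i j = 1 - δ * ∑ i, (if c i = c j then (1:ℝ) else 0) := by
          simp only [hQdef, Finset.sum_sub_distrib, hPcol]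
          congr 1
          rw [Finset.mul_sum]
          refine Finset.sum_congr rfl fun i _ => ?_
          by_cases h : c i = c j <;> simp [h]
        have h2 : (1:ℝ) ≤ ∑ i, (if c i = c j then (1:ℝ) else 0) := by
          have h3 : (if c j = c j then (1:ℝ) else 0) = 1 := by simp
          calc (1:ℝ) = if c j = c j then (1:ℝ) else 0 := h3.symm
            _ ≤ ∑ i, (if c i = c j then (1:ℝ) else 0) :=
              Finset.single_le_sum (f := fun i => if c i = c j then (1:ℝ) else 0)
                (fun i _ => by by_cases h : c i = c j <;> simp [h]) (Finset.mem_univ j)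
        rw [h1, hθdef]
        have h4 := mul_le_mul_of_nonneg_left h2 hδpos.le
        linarith
      calc ∑ i, |P.mulVec x i| = ∑ i, |∑ j, Q i j * x j| := by simp_rw [hkey]
        _ ≤ ∑ i, ∑ j, |Q i j * x j| :=
          Finset.sum_le_sum fun i _ => Finset.abs_sum_le_sum_abs _ _
        _ = ∑ i, ∑ j, Q i j * |x j| := by
          refine Finset.sum_congr rfl fun i _ => Finset.sum_congr rfl fun j _ => ?_
          rw [abs_mul, abs_of_nonneg (hQ0 i j)]
        _ = ∑ j, (∑ i, Q i j) * |x j| := by rw [Finset.sum_comm]; simp_rw [Finset.sum_mul]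
        _ ≤ ∑ j, θ * |x j| := Finset.sum_le_sum fun j _ =>
          mul_le_mul_of_nonneg_right (hQcol j) (abs_nonneg _)
        _ = θ * ∑ j, |x j| := by rw [Finset.mul_sum]
  -- iterated contraction
  have contractIter : ∀ (a : ℕ) (γ : ZMod Δ) (x : Fin n → ℝ), (∀ i, c i ≠ γ → x i = 0) →
      (∑ i, x i = 0) → ∑ i, |((P ^ a).mulVec x) i| ≤ θ ^ a * ∑ i, |x i| := by
    intro a
    induction a with
    | zero =>
      intro γ x _ _
      simp [Matrix.one_mulVec]
    | succ a ih =>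
      intro γ x hsupp hsum
      obtain ⟨h1, h2, h3⟩ := contract γ x hsupp hsum
      have hrw : (P ^ (a+1)).mulVec x = (P ^ a).mulVec (P.mulVec x) := by
        rw [Matrix.mulVec_mulVec, ← pow_succ]
      rw [hrw]
      calc ∑ i, |((P ^ a).mulVec (P.mulVec x)) i| ≤ θ ^ a * ∑ i, |(P.mulVec x) i| :=
          ih γ _ h1 h2
        _ ≤ θ ^ a * (θ * ∑ i, |x i|) := mul_le_mul_of_nonneg_left h3 (pow_nonneg hθ0 a)
        _ = θ ^ (a+1) * ∑ i, |x i| := by ring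
  -- the standard basis vectors
  set evec : Fin n → Fin n → ℝ := fun j k => if k = j then 1 else 0 with hevec
  have hesum : ∀ j, ∑ k, evec j k = 1 := by
    intro j; rw [hevec]; simp
  have hmvE : ∀ (M : Matrix (Fin n) (Fin n) ℝ) (i j : Fin n),
      (M.mulVec (evec j)) i = M i j := by
    intro M i j
    simp [Matrix.mulVec, dotProduct, hevec]
  -- Cauchy estimate for entries of powers of P
  have hCau : ∀ (i j : Fin n) (a : ℕ), |(P ^ (a+1)) i j - (P ^ a) i j| ≤ 2 * θ ^ a := by
    intro i j a
    set x : Fin n → ℝ := fun k => P k j - evec j k with hxdef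
    have hsupp : ∀ k, c k ≠ c j → x k = 0 := by
      intro k hk
      rw [hxdef]
      have h1 : P k j = 0 := hPclass k j hk
      have h2 : evec j k = 0 := by
        rw [hevec]
        simp only [ite_eq_right_iff]
        intro h
        exact absurd (by rw [h]) hk
      simp [h1, h2]
    have hsum : ∑ k, x k = 0 := by
      rw [hxdef]
      simp only [Finset.sum_sub_distrib, hPcol, hesum]
      ring
    have habs : ∑ k, |x k| ≤ 2 := by
      have h1 : ∀ k, |x k| ≤ P k j + evec j k := by
        intro k
        rw [hxdef]
        have he0 : (0:ℝ) ≤ evec j k := by rw [hevec]; by_cases h : k = j <;> simp [h]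
        calc |P k j - evec j k| ≤ |P k j| + |evec j k| := abs_sub _ _
          _ = P k j + evec j k := by rw [abs_of_nonneg (hP0 s k j), abs_of_nonneg he0]
      calc ∑ k, |x k| ≤ ∑ k, (P k j + evec j k) := Finset.sum_le_sum fun k _ => h1 k
        _ = 2 := by rw [Finset.sum_add_distrib, hPcol, hesum]; norm_num
    have hrel : (P ^ (a+1)) i j - (P ^ a) i j = ((P ^ a).mulVec x) i := by
      have hm : ((P ^ a).mulVec x) i = ∑ k, (P ^ a) i k * x k := by
        simp [Matrix.mulVec, dotProduct]
      rw [hm, hxdef]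
      simp only [mul_sub, Finset.sum_sub_distrib]
      have h1 : ∑ k, (P ^ a) i k * P k j = (P ^ (a+1)) i j := by
        rw [pow_succ, Matrix.mul_apply]
      have h2 : ∑ k, (P ^ a) i k * evec j k = (P ^ a) i j := by
        rw [hevec]
        simp
      rw [h1, h2]
    rw [hrel]
    calc |((P ^ a).mulVec x) i| ≤ ∑ k, |((P ^ a).mulVec x) k| :=
        Finset.single_le_sum (f := fun k => |((P ^ a).mulVec x) k|)
          (fun k _ => abs_nonneg _) (Finset.mem_univ i)
      _ ≤ θ ^ a * ∑ k, |x k| := contractIter a (c j) x hsupp hsum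
      _ ≤ θ ^ a * 2 := mul_le_mul_of_nonneg_left habs (pow_nonneg hθ0 a)
      _ = 2 * θ ^ a := by ring
  -- limit of entries
  have hdistCau : ∀ (i j : Fin n) (a : ℕ),
      dist ((P ^ a) i j) ((P ^ (a+1)) i j) ≤ 2 * θ ^ a := by
    intro i j a
    rw [Real.dist_eq, abs_sub_comm]
    exact hCau i j a
  have hlim : ∀ i j : Fin n, ∃ Lij : ℝ,
      Tendsto (fun a => (P ^ a) i j) atTop (𝓝 Lij) := by
    intro i j
    exact cauchySeq_tendsto_of_complete (cauchySeq_of_le_geometric θ 2 hθ1 (hdistCau i j))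
  set Pi : Fin n → Fin n → ℝ := fun i j => (hlim i j).choose with hPidef
  have hPitend : ∀ i j, Tendsto (fun a => (P ^ a) i j) atTop (𝓝 (Pi i j)) :=
    fun i j => (hlim i j).choose_spec
  have hTail : ∀ (i j : Fin n) (a : ℕ), |(P ^ a) i j - Pi i j| ≤ 2 * θ ^ a / (1 - θ) := by
    intro i j a
    have h := dist_le_of_le_geometric_of_tendsto θ 2 hθ1 (hdistCau i j) (hPitend i j) a
    rwa [Real.dist_eq] at h
  have hPiZero : ∀ i j : Fin n, c i ≠ c j → Pi i j = 0 := by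
    intro i j hne
    have hzero : ∀ a, (P ^ a) i j = 0 := by
      intro a
      rcases lt_or_eq_of_le (hPa0 a i j) with h | h
      · exact absurd (hPaClass a i j h) hne
      · exact h.symm
    have h1 : (fun a => (P ^ a) i j) = fun _ => (0:ℝ) := funext hzero
    have h2 : Tendsto (fun a => (P ^ a) i j) atTop (𝓝 0) := by
      rw [h1]; exact tendsto_const_nhds
    exact tendsto_nhds_unique (hPitend i j) h2
  have hPiCol : ∀ j, ∑ i, Pi i j = 1 := by
    intro j
    have h1 : Tendsto (fun a => ∑ i, (P ^ a) i j) atTop (𝓝 (∑ i, Pi i j)) :=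
      tendsto_finset_sum _ fun i _ => hPitend i j
    have h2 : (fun a => ∑ i, (P ^ a) i j) = fun _ => (1:ℝ) :=
      funext fun a => hPa1 a j
    rw [h2] at h1
    exact tendsto_nhds_unique h1 tendsto_const_nhds
  have hPiConst : ∀ (i j j' : Fin n), c j = c j' → Pi i j = Pi i j' := by
    intro i j j' hcc
    have hdiff : ∀ a : ℕ, |(P ^ a) i j - (P ^ a) i j'| ≤ 2 * θ ^ a := by
      intro a
      set x : Fin n → ℝ := fun k => evec j k - evec j' k with hxdef
      have hsupp : ∀ k, c k ≠ c j → x k = 0 := by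
        intro k hk
        rw [hxdef]
        have h1 : evec j k = 0 := by
          rw [hevec]; simp only [ite_eq_right_iff]; intro h; exact absurd (by rw [h]) hk
        have h2 : evec j' k = 0 := by
          rw [hevec]; simp only [ite_eq_right_iff]; intro h
          exact absurd (by rw [h, ← hcc]) hk
        simp [h1, h2]
      have hsum : ∑ k, x k = 0 := by
        rw [hxdef]; simp only [Finset.sum_sub_distrib, hesum]; ring
      have habs : ∑ k, |x k| ≤ 2 := by
        have h1 : ∀ k, |x k| ≤ evec j k + evec j' k := by
          intro k
          rw [hxdef]
          have he0 : (0:ℝ) ≤ evec j k := by rw [hevec]; by_cases h : k = j <;> simp [h]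
          have he0' : (0:ℝ) ≤ evec j' k := by rw [hevec]; by_cases h : k = j' <;> simp [h]
          calc |evec j k - evec j' k| ≤ |evec j k| + |evec j' k| := abs_sub _ _
            _ = evec j k + evec j' k := by rw [abs_of_nonneg he0, abs_of_nonneg he0']
        calc ∑ k, |x k| ≤ ∑ k, (evec j k + evec j' k) := Finset.sum_le_sum fun k _ => h1 k
          _ = 2 := by rw [Finset.sum_add_distrib, hesum, hesum]; norm_num
      have hrel : (P ^ a) i j - (P ^ a) i j' = ((P ^ a).mulVec x) i := by
        have hm : ((P ^ a).mulVec x) i = ∑ k, (P ^ a) i k * x k := by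
          simp [Matrix.mulVec, dotProduct]
        rw [hm, hxdef]
        simp only [mul_sub, Finset.sum_sub_distrib]
        have h2 : ∑ k, (P ^ a) i k * evec j k = (P ^ a) i j := by rw [hevec]; simp
        have h3 : ∑ k, (P ^ a) i k * evec j' k = (P ^ a) i j' := by rw [hevec]; simp
        rw [h2, h3]
      rw [hrel]
      calc |((P ^ a).mulVec x) i| ≤ ∑ k, |((P ^ a).mulVec x) k| :=
          Finset.single_le_sum (f := fun k => |((P ^ a).mulVec x) k|)
            (fun k _ => abs_nonneg _) (Finset.mem_univ i)
        _ ≤ θ ^ a * ∑ k, |x k| := contractIter a (c j) x hsupp hsum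
        _ ≤ θ ^ a * 2 := mul_le_mul_of_nonneg_left habs (pow_nonneg hθ0 a)
        _ = 2 * θ ^ a := by ring
    have h0 : Tendsto (fun a => (P ^ a) i j - (P ^ a) i j') atTop (𝓝 0) := by
      refine squeeze_zero_norm (a := fun b => 2 * θ ^ b) (fun b => ?_) ?_
      · rw [Real.norm_eq_abs]; exact hdiff b
      · have := (tendsto_pow_atTop_nhds_zero_of_lt_one hθ0 hθ1).const_mul (2:ℝ)
        simpa using this
    have h3 := (hPitend i j).sub h0
    have h4 : (fun a => (P ^ a) i j - ((P ^ a) i j - (P ^ a) i j'))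
        = fun a => (P ^ a) i j' := by funext a; ring
    rw [h4, sub_zero] at h3
    exact (tendsto_nhds_unique (hPitend i j') h3).symm
  -- representative of each class
  have hrepEx : ∀ t : ZMod Δ, ∃ i, c i = t := cSurj
  set rep : ZMod Δ → Fin n := fun t => (hrepEx t).choose with hrepdef
  have hrep : ∀ t, c (rep t) = t := fun t => (hrepEx t).choose_spec
  -- the geometric rate
  have h1θ : 0 < 1 - θ := by linarith
  set xr : ℝ := max θ (1/2) with hxrdef
  have hx0 : 0 < xr := lt_max_of_lt_right (by norm_num)
  have hx1 : xr < 1 := max_lt hθ1 (by norm_num)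
  have hθx : θ ≤ xr := le_max_left _ _
  set ρ : ℝ := xr ^ ((s:ℝ)⁻¹) with hρdef
  have hsR : (0:ℝ) < (s:ℝ) := by exact_mod_cast hspos
  have hρ0 : 0 < ρ := Real.rpow_pos_of_pos hx0 _
  have hρ1 : ρ < 1 := Real.rpow_lt_one hx0.le hx1 (by positivity)
  set Cb : ℝ := (2 * (n:ℝ)^2 / (1 - θ)) / xr with hCbdef
  have hCb0 : 0 ≤ Cb := by
    rw [hCbdef]
    have hn2 : (0:ℝ) ≤ 2 * (n:ℝ)^2 := by positivity
    exact div_nonneg (div_nonneg hn2 h1θ.le) hx0.le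
  refine ⟨Δ, hΔpos, ρ, hρ0, hρ1, Cb, hCb0, ?_⟩
  intro m hm
  by_cases hdvd : Δ ∣ m
  swap
  · rw [if_neg hdvd, traceZero m hdvd, sub_zero, abs_zero]
    exact mul_nonneg hCb0 (pow_nonneg hρ0.le m)
  rw [if_pos hdvd]
  set a := m / s with hadef
  set b := m % s with hbdef
  have hmb : s * a + b = m := Nat.div_add_mod m s
  have hbs : b < s := Nat.mod_lt m hspos
  have hΔb : Δ ∣ b := by
    have h1 : b = m - s * a := by omega
    rw [h1]
    exact Nat.dvd_sub hdvd ((hsΔ.mul_right a))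
  have hpow : B ^ m = P ^ a * B ^ b := by
    rw [hPdef, ← pow_mul, ← pow_add, hmb]
  have htrace : (B ^ m).trace = ∑ i, ∑ j, (P ^ a) i j * (B ^ b) j i := by
    rw [hpow, Matrix.trace]
    refine Finset.sum_congr rfl fun i _ => ?_
    rw [Matrix.diag_apply, Matrix.mul_apply]
  have hBbClass : ∀ i j : Fin n, 0 < (B ^ b) j i → c j = c i := by
    intro i j h
    have h2 := cIter b j i h
    rw [(ZMod.natCast_eq_zero_iff _ _).mpr hΔb, add_zero] at h2
    exact h2
  -- the limiting value of the trace
  have hstep1 : ∀ i, ∑ j, Pi i j * (B ^ b) j i = Pi i (rep (c i)) := by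
    intro i
    have hterm : ∀ j, Pi i j * (B ^ b) j i = Pi i (rep (c i)) * (B ^ b) j i := by
      intro j
      rcases lt_or_eq_of_le (hP0 b j i) with h | h
      · have hcj : c j = c i := hBbClass i j h
        rw [hPiConst i j (rep (c i)) (by rw [hcj, hrep])]
      · rw [← h, mul_zero, mul_zero]
    rw [Finset.sum_congr rfl fun j _ => hterm j, ← Finset.mul_sum, hP1 b i, mul_one]
  have hstep2 : ∑ i, Pi i (rep (c i)) = (Δ : ℝ) := by
    calc ∑ i, Pi i (rep (c i))
        = ∑ i, ∑ t : ZMod Δ, (if c i = t then Pi i (rep t) else 0) := by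
          refine Finset.sum_congr rfl fun i _ => ?_
          rw [Finset.sum_ite_eq Finset.univ (c i) (fun t => Pi i (rep t))]
          simp
      _ = ∑ t : ZMod Δ, ∑ i, (if c i = t then Pi i (rep t) else 0) := Finset.sum_comm
      _ = ∑ t : ZMod Δ, ∑ i, Pi i (rep t) := by
          refine Finset.sum_congr rfl fun t _ => Finset.sum_congr rfl fun i _ => ?_
          by_cases h : c i = t
          · rw [if_pos h]
          · rw [if_neg h, hPiZero i (rep t) (by rw [hrep]; exact h)]
      _ = ∑ _t : ZMod Δ, (1:ℝ) := Finset.sum_congr rfl fun t _ => hPiCol (rep t)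
      _ = (Δ : ℝ) := by
          rw [Finset.sum_const, Finset.card_univ, ZMod.card]
          simp
  have hT : ∑ i, ∑ j, Pi i j * (B ^ b) j i = (Δ : ℝ) := by
    rw [Finset.sum_congr rfl fun i _ => hstep1 i, hstep2]
  -- the error bound
  have herr : |(B ^ m).trace - (Δ : ℝ)| ≤ (2 * (n:ℝ)^2 / (1 - θ)) * θ ^ a := by
    rw [htrace, ← hT]
    have hsub : ∑ i, ∑ j, (P ^ a) i j * (B ^ b) j i - ∑ i, ∑ j, Pi i j * (B ^ b) j i
        = ∑ i, ∑ j, ((P ^ a) i j - Pi i j) * (B ^ b) j i := by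
      rw [← Finset.sum_sub_distrib]
      refine Finset.sum_congr rfl fun i _ => ?_
      rw [← Finset.sum_sub_distrib]
      refine Finset.sum_congr rfl fun j _ => ?_
      ring
    rw [hsub]
    calc |∑ i, ∑ j, ((P ^ a) i j - Pi i j) * (B ^ b) j i|
        ≤ ∑ i, |∑ j, ((P ^ a) i j - Pi i j) * (B ^ b) j i| :=
          Finset.abs_sum_le_sum_abs _ _
      _ ≤ ∑ i : Fin n, ∑ j : Fin n, |((P ^ a) i j - Pi i j) * (B ^ b) j i| :=
          Finset.sum_le_sum fun i _ => Finset.abs_sum_le_sum_abs _ _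
      _ ≤ ∑ _i : Fin n, ∑ _j : Fin n, (2 * θ ^ a / (1 - θ)) * 1 := by
          refine Finset.sum_le_sum fun i _ => Finset.sum_le_sum fun j _ => ?_
          rw [abs_mul]
          refine mul_le_mul (hTail i j a) ?_ (abs_nonneg _) ?_
          · rw [abs_of_nonneg (hP0 b j i)]
            exact hPle1 b j i
          · positivity
      _ = (2 * (n:ℝ)^2 / (1 - θ)) * θ ^ a := by
          rw [Finset.sum_const, Finset.sum_const, Finset.card_univ, Fintype.card_fin]
          simp only [nsmul_eq_mul, mul_one]
          ring
  -- compare the geometric factors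
  have hgeo : θ ^ a ≤ ρ ^ m / xr := by
    have h1 : θ ^ a ≤ xr ^ a := pow_le_pow_left₀ hθ0 hθx a
    have h2 : (m:ℝ) * (s:ℝ)⁻¹ - 1 ≤ (a:ℝ) := by
      have hms : (m:ℝ) < (s:ℝ) * ((a:ℝ) + 1) := by
        have : m < s * (a + 1) := by rw [Nat.mul_succ]; omega
        exact_mod_cast this
      have := (div_lt_iff₀ hsR).mpr (by linarith [hms] : (m:ℝ) < ((a:ℝ)+1) * (s:ℝ))
      rw [div_eq_mul_inv] at this
      linarith
    have h3 : xr ^ ((a:ℝ)) ≤ xr ^ ((m:ℝ) * (s:ℝ)⁻¹ - 1) :=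
      Real.rpow_le_rpow_of_exponent_ge hx0 hx1.le h2
    have h4 : xr ^ ((m:ℝ) * (s:ℝ)⁻¹ - 1) = ρ ^ m / xr := by
      rw [Real.rpow_sub hx0, Real.rpow_one]
      congr 1
      rw [hρdef, ← Real.rpow_natCast (xr ^ ((s:ℝ)⁻¹)) m, ← Real.rpow_mul hx0.le]
      ring_nf
    rw [Real.rpow_natCast] at h3
    calc θ ^ a ≤ xr ^ a := h1
      _ ≤ xr ^ ((m:ℝ) * (s:ℝ)⁻¹ - 1) := h3
      _ = ρ ^ m / xr := h4
  calc |(B ^ m).trace - (Δ : ℝ)| ≤ (2 * (n:ℝ)^2 / (1 - θ)) * θ ^ a := herr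
    _ ≤ (2 * (n:ℝ)^2 / (1 - θ)) * (ρ ^ m / xr) := by
        refine mul_le_mul_of_nonneg_left hgeo ?_
        positivity
    _ = Cb * ρ ^ m := by rw [hCbdef]; ring
/-- Perron–Frobenius asymptotics for the trace of powers of a
nonnegative indecomposable matrix with all column sums equal to `q`. -/
theorem stmt6 (n : ℕ) (hn : 1 ≤ n) (q : ℝ) (hq : 0 < q)
    (A : Matrix (Fin n) (Fin n) ℝ)
    (hpos : ∀ i j, 0 ≤ A i j) (hcol : ∀ j, ∑ i, A i j = q)
    (hind : ¬ ∃ S T : Set (Fin n), S.Nonempty ∧ T.Nonempty ∧ Disjoint S T ∧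
      S ∪ T = Set.univ ∧ ∀ i ∈ S, ∀ j ∈ T, A i j = 0) :
    ∃ Δ : ℕ, 1 ≤ Δ ∧ ∃ ε : ℝ, 0 < ε ∧ ε < q ∧ ∃ C : ℝ, 0 ≤ C ∧
      ∀ m : ℕ, 1 ≤ m →
        |Matrix.trace (A ^ m) - (if Δ ∣ m then (Δ : ℝ) * q ^ m else 0)|
          ≤ C * (q - ε) ^ m := by
  classical
  set B : Matrix (Fin n) (Fin n) ℝ := q⁻¹ • A with hBdef
  have hB0 : ∀ i j, 0 ≤ B i j := by
    intro i j
    rw [hBdef, Matrix.smul_apply, smul_eq_mul]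
    exact mul_nonneg (inv_nonneg.mpr hq.le) (hpos i j)
  have hB1 : ∀ j, ∑ i, B i j = 1 := by
    intro j
    simp only [hBdef, Matrix.smul_apply, smul_eq_mul, ← Finset.mul_sum, hcol]
    field_simp
  have hBApos : ∀ i j, 0 < A i j → 0 < B i j := by
    intro i j h
    rw [hBdef, Matrix.smul_apply, smul_eq_mul]
    exact mul_pos (inv_pos.mpr hq) h
  -- irreducibility of B
  have hirr : ∀ i j : Fin n, ∃ m : ℕ, 0 < (B ^ m) i j := by
    intro i j
    by_contra hni
    push_neg at hni
    set S : Set (Fin n) := {i' | ∃ m : ℕ, 0 < (B ^ m) i' j} with hSdef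
    have hjS : j ∈ S := ⟨0, by simp [Matrix.one_apply]⟩
    have hiS : i ∉ S := by
      rintro ⟨m, hmpos⟩
      exact absurd hmpos (not_lt.mpr (hni m))
    refine hind ⟨Sᶜ, S, ⟨i, hiS⟩, ⟨j, hjS⟩, disjoint_compl_left, by
      rw [Set.compl_union_self], ?_⟩
    intro a ha b hb
    by_contra hA0
    have hApos : 0 < A a b := lt_of_le_of_ne (hpos a b) (Ne.symm hA0)
    have hBpos : 0 < B a b := hBApos a b hApos
    obtain ⟨m, hmB⟩ := hb
    have : 0 < (B ^ (1 + m)) a j := by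
      rw [pow_add]
      calc (0:ℝ) < (B ^ 1) a b * (B ^ m) b j := by
            rw [pow_one]; exact mul_pos hBpos hmB
        _ ≤ (B ^ 1 * B ^ m) a j := prodEntryLB (powNonneg hB0 1) (powNonneg hB0 m) a b j
    exact ha ⟨1 + m, this⟩
  obtain ⟨Δ, hΔ, ρ, hρ0, hρ1, C, hC0, hbound⟩ := keyB n hn B hB0 hB1 hirr
  refine ⟨Δ, hΔ, q * (1 - ρ), by nlinarith, by nlinarith, C, hC0, ?_⟩
  intro m hm
  have hA : A = q • B := by
    rw [hBdef, smul_smul, mul_inv_cancel₀ hq.ne', one_smul]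
  have hqε : q - q * (1 - ρ) = q * ρ := by ring
  have htr : Matrix.trace (A ^ m) = q ^ m * Matrix.trace (B ^ m) := by
    rw [hA, smul_pow, Matrix.trace_smul, smul_eq_mul]
  have hif : (if Δ ∣ m then (Δ : ℝ) * q ^ m else 0)
      = q ^ m * (if Δ ∣ m then (Δ : ℝ) else 0) := by
    split_ifs <;> ring
  rw [htr, hif, hqε]
  have h1 : q ^ m * Matrix.trace (B ^ m) - q ^ m * (if Δ ∣ m then (Δ : ℝ) else 0)
      = q ^ m * (Matrix.trace (B ^ m) - (if Δ ∣ m then (Δ : ℝ) else 0)) := by ring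
  rw [h1, abs_mul, abs_of_pos (pow_pos hq m), mul_pow]
  calc q ^ m * |Matrix.trace (B ^ m) - (if Δ ∣ m then (Δ : ℝ) else 0)|
      ≤ q ^ m * (C * ρ ^ m) :=
        mul_le_mul_of_nonneg_left (hbound m hm) (pow_nonneg hq.le m)
    _ = C * (q ^ m * ρ ^ m) := by ring
end

section
/- For n ≥ 1 let P_n be the set of functions v : ℤ/2nℤ → ℕ such that |v(j+1) − v(j)| = 1 (as integers) for all j, and there is no j with v(j+1) = v(j) − 1, v(j+2) = v(j+1) + 1 and v(j+1) ≥ 1 (no descent immediately followed by an ascent at a positive level, cyclically). Then each P_n is finite, |P_1| = 2, and |P_{n+1}| = 2·|P_n| + 2 for all n ≥ 1. -/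
set_option linter.unusedSectionVars false


/-- `stmt7P n` encodes the based closed paths of length `2n` with nonzero
weight in a Nagao ray: `v j` is the position on the ray after `j` steps, each
step changes the position by `±1`, and a descent immediately followed by an
ascent is forbidden at every positive level (but allowed at level `0`). -/
def stmt7P (n : ℕ) : Set (ZMod (2 * n) → ℕ) :=
  {v | (∀ j, ((v (j + 1) : ℤ) - (v j : ℤ)).natAbs = 1) ∧
    ¬ ∃ j, (v (j + 1) : ℤ) = (v j : ℤ) - 1 ∧ v (j + 2) = v (j + 1) + 1 ∧ 1 ≤ v (j + 1)}

namespace S7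

def D {m : ℕ} (x : ZMod m) : ℕ := min x.val (m - x.val)

variable {m : ℕ} [NeZero m]

lemma val_one_ (hm : 2 ≤ m) : (1 : ZMod m).val = 1 := by
  rw [ZMod.val_one_eq_one_mod, Nat.mod_eq_of_lt (by omega)]

lemma val_add_one (hm : 2 ≤ m) (x : ZMod m) : (x + 1).val = (x.val + 1) % m := by
  rw [ZMod.val_add, val_one_ hm]

lemma val_sub_one (hm : 2 ≤ m) (x : ZMod m) :
    (x - 1).val = if x.val = 0 then m - 1 else x.val - 1 := by
  by_cases h0 : x.val = 0
  · have hx : x = 0 := by rwa [← ZMod.val_eq_zero]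
    have h1 : (1 : ZMod m) ≠ 0 := by
      intro h
      have := val_one_ (m := m) hm
      rw [h, ZMod.val_zero] at this; omega
    haveI : NeZero (1 : ZMod m) := ⟨h1⟩
    rw [if_pos h0, hx, zero_sub, ZMod.val_neg_of_ne_zero, val_one_ hm]
  · rw [if_neg h0]
    have hx : (x - 1) + 1 = x := by ring
    have h := val_add_one hm (x - 1)
    rw [hx] at h
    have hv : (x - 1).val < m := ZMod.val_lt _
    rcases Nat.lt_or_ge ((x-1).val + 1) m with h2 | h2
    · rw [Nat.mod_eq_of_lt h2] at h; omega
    · have h3 : (x-1).val + 1 = m := by omega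
      rw [h3, Nat.mod_self] at h; omega

lemma D_le (x : ZMod m) : D x ≤ m - 1 := by
  have := ZMod.val_lt x
  unfold D; omega

lemma D_eq_zero_iff (x : ZMod m) : D x = 0 ↔ x = 0 := by
  have h := ZMod.val_lt x
  unfold D
  rw [← ZMod.val_eq_zero]
  omega

lemma D_neg (x : ZMod m) : D (-x) = D x := by
  rcases eq_or_ne x 0 with rfl | hx
  · simp
  · haveI : NeZero x := ⟨hx⟩
    have h := ZMod.val_neg_of_ne_zero x
    have h2 := ZMod.val_lt x
    have h3 : x.val ≠ 0 := by rwa [ne_eq, ZMod.val_eq_zero]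
    unfold D; omega

lemma D_natCast_le (c : ℕ) : D ((c : ZMod m)) ≤ c := by
  have := ZMod.val_natCast (n := m) c
  have h2 := Nat.mod_le c m
  unfold D; omega

lemma D_add_one_le (hm : 2 ≤ m) (x : ZMod m) : D (x + 1) ≤ D x + 1 ∧ D x ≤ D (x + 1) + 1 := by
  have h := val_add_one hm x
  have hv : x.val < m := ZMod.val_lt _
  rcases Nat.lt_or_ge (x.val + 1) m with h2 | h2
  · rw [Nat.mod_eq_of_lt h2] at h; unfold D; omega
  · have h3 : x.val + 1 = m := by omega
    rw [h3, Nat.mod_self] at h; unfold D; omega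

lemma D_parity (he : 2 ∣ m) (x : ZMod m) : D x % 2 = x.val % 2 := by
  have hv : x.val < m := ZMod.val_lt _
  unfold D; omega

lemma D_dec (hm : 2 ≤ m) (x : ZMod m) (hx : 1 ≤ D x) :
    D (x - 1) = D x - 1 ∨ D (x + 1) = D x - 1 := by
  have hv : x.val < m := ZMod.val_lt _
  have hx0 : x.val ≠ 0 := by
    intro h
    have : x = 0 := by rwa [← ZMod.val_eq_zero]
    rw [this] at hx; simp [D] at hx
  have ha := val_add_one hm x
  have hs := val_sub_one hm x
  rw [if_neg hx0] at hs
  rcases Nat.lt_or_ge (x.val + 1) m with h2 | h2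
  · rw [Nat.mod_eq_of_lt h2] at ha; unfold D at *; omega
  · have h3 : x.val + 1 = m := by omega
    rw [h3, Nat.mod_self] at ha; unfold D at *; omega



variable {m : ℕ} (v : ZMod m → ℕ)

def Hstep : Prop := ∀ j : ZMod m, v (j+1) = v j + 1 ∨ v j = v (j+1) + 1
def Hnov : Prop := ∀ j : ZMod m, v j = v (j+1) + 1 → v (j+2) = v (j+1) + 1 → v (j+1) = 0

variable {v}

lemma walk (hs : Hstep v) (a : ZMod m) :
    ∀ c : ℕ, v (a + (c : ZMod m)) ≤ v a + c ∧ v a ≤ v (a + (c : ZMod m)) + c := by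
  intro c
  induction c with
  | zero => simp
  | succ t ih =>
    have e1 : (a + ((t+1 : ℕ) : ZMod m)) = a + (t : ZMod m) + 1 := by push_cast; ring
    have := hs (a + (t : ZMod m))
    rw [e1]
    omega

lemma reflect_hstep (hs : Hstep v) (s : ZMod m) : Hstep (fun y => v (s - y)) := by
  intro j
  show v (s-(j+1)) = v (s-j) + 1 ∨ v (s-j) = v (s-(j+1)) + 1
  have e1 : s - (j + 1) + 1 = s - j := by ring
  have := hs (s - (j+1))
  simp only [e1] at this
  rcases this with h | h
  · right; omega
  · left; omega

lemma reflect_hnov (hs : Hstep v) (hn : Hnov v) (s : ZMod m) : Hnov (fun y => v (s - y)) := by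
  intro j h1 h2
  simp only at h1 h2 ⊢
  have e1 : (s - (j+2)) + 1 = s - (j+1) := by ring
  have e2 : (s - (j+2)) + 2 = s - j := by ring
  have := hn (s - (j+2)) (by rw [e1]; omega) (by rw [e2, e1]; omega)
  rw [e1] at this
  exact this

lemma descend (hs : Hstep v) (hn : Hnov v) {j : ZMod m} (hd : v (j+1) + 1 = v j) :
    ∀ t : ℕ, t ≤ v j → v (j + (t : ZMod m)) = v j - t := by
  have aux : ∀ t : ℕ, t + 1 ≤ v j →
      v (j + ((t+1 : ℕ) : ZMod m)) = v j - (t+1) ∧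
      v (j + ((t+1 : ℕ) : ZMod m)) + 1 = v (j + ((t : ℕ) : ZMod m)) := by
    intro t
    induction t with
    | zero =>
      intro _
      have e0 : ((0+1 : ℕ) : ZMod m) = 1 := by push_cast; ring
      have e1 : ((0 : ℕ) : ZMod m) = 0 := by push_cast; ring
      rw [e0, e1, add_zero]
      omega
    | succ t ih =>
      intro h
      obtain ⟨A, B⟩ := ih (by omega)
      have e1 : (j + ((t+1+1 : ℕ) : ZMod m)) = j + ((t+1 : ℕ) : ZMod m) + 1 := by push_cast; ring
      have hpos : 1 ≤ v (j + ((t+1 : ℕ) : ZMod m)) := by omega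
      rcases hs (j + ((t+1 : ℕ) : ZMod m)) with hup | hdn
      · exfalso
        have e2 : j + ((t : ℕ) : ZMod m) + 1 = j + ((t+1 : ℕ) : ZMod m) := by push_cast; ring
        have e3 : j + ((t : ℕ) : ZMod m) + 2 = j + ((t+1 : ℕ) : ZMod m) + 1 := by push_cast; ring
        have := hn (j + ((t : ℕ) : ZMod m)) (by rw [e2]; omega) (by rw [e3, e2]; omega)
        rw [e2] at this
        omega
      · rw [e1]
        omega
  intro t ht
  match t with
  | 0 => simp
  | (t+1) => exact (aux t ht).1

lemma descend_back (hs : Hstep v) (hn : Hnov v) {j : ZMod m} (hd : v (j-1) + 1 = v j) :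
    ∀ t : ℕ, t ≤ v j → v (j - (t : ZMod m)) = v j - t := by
  intro t ht
  have hs' := reflect_hstep hs j
  have hn' := reflect_hnov hs hn j
  have hd' : (fun y => v (j - y)) (0 + 1) + 1 = (fun y => v (j - y)) 0 := by
    simp only [zero_add, sub_zero]
    exact hd
  have h0 : (fun y => v (j - y)) (0 : ZMod m) = v j := by simp
  have := descend hs' hn' (j := 0) hd' t (by simpa using ht)
  simpa using this


section Zero
variable {m : ℕ} [NeZero m] {v : ZMod m → ℕ}

lemma exists_descent (hs : Hstep v) : ∃ j : ZMod m, v (j+1) + 1 = v j := by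
  by_contra h
  push_neg at h
  have hup : ∀ j : ZMod m, v (j+1) = v j + 1 := by
    intro j; rcases hs j with h1 | h1
    · exact h1
    · exact absurd h1.symm (h j)
  have aux : ∀ t : ℕ, v ((0 : ZMod m) + (t : ZMod m)) = v 0 + t := by
    intro t
    induction t with
    | zero => simp
    | succ t ih =>
      have e1 : ((0:ZMod m) + ((t+1 : ℕ) : ZMod m)) = (0:ZMod m) + (t : ZMod m) + 1 := by
        push_cast; ring
      rw [e1, hup]
      omega
  have := aux m
  rw [ZMod.natCast_self] at this
  simp at this
  have : 0 < m := Nat.pos_of_ne_zero (NeZero.ne m)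
  omega

lemma exists_zero (hs : Hstep v) (hn : Hnov v) : ∃ z : ZMod m, v z = 0 := by
  obtain ⟨j, hj⟩ := exists_descent hs
  refine ⟨j + ((v j : ℕ) : ZMod m), ?_⟩
  rw [descend hs hn hj (v j) le_rfl]
  omega

lemma parity (hs : Hstep v) (x : ZMod m) : v x % 2 = (v 0 + x.val) % 2 := by
  have aux : ∀ t : ℕ, v ((t : ℕ) : ZMod m) % 2 = (v 0 + t) % 2 := by
    intro t
    induction t with
    | zero => simp
    | succ t ih =>
      have e1 : (((t+1 : ℕ)) : ZMod m) = ((t : ℕ) : ZMod m) + 1 := by push_cast; ring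
      rw [e1]
      rcases hs ((t : ℕ) : ZMod m) with h | h <;> omega
  have hx : ((x.val : ℕ) : ZMod m) = x := ZMod.natCast_rightInverse x
  have := aux x.val
  rwa [hx] at this

lemma le_D (hs : Hstep v) {z : ZMod m} (hz : v z = 0) (x : ZMod m) : v x ≤ D (x - z) := by
  have h1 : v x ≤ v z + (x - z).val := by
    have := (walk hs z (x - z).val).1
    rwa [ZMod.natCast_rightInverse (x - z), add_sub_cancel] at this
  have h2 : v x ≤ v z + (z - x).val := by
    have := (walk hs x (z - x).val).2
    rwa [ZMod.natCast_rightInverse (z - x), add_sub_cancel] at this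
  rcases eq_or_ne x z with rfl | hne
  · omega
  · haveI : NeZero (x - z) := ⟨sub_ne_zero.mpr hne⟩
    have h3 := ZMod.val_neg_of_ne_zero (x - z)
    rw [neg_sub] at h3
    unfold D
    omega

/-- For every point there is a zero at distance `≤ v x` (in the `D` metric). -/
lemma exists_near_zero (hs : Hstep v) (hn : Hnov v) (x : ZMod m) :
    ∃ z : ZMod m, v z = 0 ∧ D (x - z) ≤ v x := by
  rcases Nat.eq_zero_or_pos (v x) with h0 | hpos
  · exact ⟨x, h0, by simp [D, h0]⟩
  rcases hs x with hup | hdn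
  · -- ascent forward; must descend backward
    have hb : v (x - 1) + 1 = v x := by
      rcases hs (x - 1) with h | h
      · rw [sub_add_cancel] at h; omega
      · -- v (x-1) = v x + 1 : forbidden valley at j := x - 1
        exfalso
        rw [sub_add_cancel] at h
        have e2 : x - 1 + 2 = x + 1 := by ring
        have := hn (x - 1) (by rw [sub_add_cancel]; omega) (by rw [e2, sub_add_cancel]; omega)
        rw [sub_add_cancel] at this
        omega
    refine ⟨x - ((v x : ℕ) : ZMod m), ?_, ?_⟩
    · rw [descend_back hs hn hb (v x) le_rfl]; omega
    · have e : x - (x - ((v x : ℕ) : ZMod m)) = ((v x : ℕ) : ZMod m) := by ring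
      rw [e]
      exact D_natCast_le _
  · -- descent forward
    have hd : v (x + 1) + 1 = v x := by omega
    refine ⟨x + ((v x : ℕ) : ZMod m), ?_, ?_⟩
    · rw [descend hs hn hd (v x) le_rfl]; omega
    · have e : x - (x + ((v x : ℕ) : ZMod m)) = -((v x : ℕ) : ZMod m) := by ring
      rw [e, D_neg]
      exact D_natCast_le _

end Zero



section Psi

lemma val_sub_parity {m : ℕ} [NeZero m] (he : 2 ∣ m) (x z : ZMod m) :
    (x - z).val % 2 = (x.val + z.val) % 2 := by
  have hadd : ∀ a b : ZMod m, (a + b).val % 2 = (a.val + b.val) % 2 := by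
    intro a b
    rw [ZMod.val_add, Nat.mod_mod_of_dvd _ he]
  have hneg : (-z).val % 2 = z.val % 2 := by
    rcases eq_or_ne z 0 with rfl | hz
    · simp
    · haveI : NeZero z := ⟨hz⟩
      have h1 := ZMod.val_neg_of_ne_zero z
      have h2 := ZMod.val_lt z
      obtain ⟨c, rfl⟩ := he
      omega
  rw [sub_eq_add_neg, hadd]
  omega

lemma val_add_one_parity {m : ℕ} [NeZero m] (hm : 2 ≤ m) (he : 2 ∣ m) (x : ZMod m) :
    (x + 1).val % 2 = (x.val + 1) % 2 := by
  rw [val_add_one hm, Nat.mod_mod_of_dvd _ he]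

variable {n : ℕ}

/-- the zero position associated to `k, b`. -/
def zpos (n : ℕ) (b : Fin 2) (k : Fin n) : ZMod (2 * n) :=
  ((2 * k.val + b.val : ℕ) : ZMod (2 * n))

def psi (n : ℕ) (p : Fin 2 × {S : Finset (Fin n) // S.Nonempty}) : ZMod (2 * n) → ℕ :=
  fun x => p.2.1.inf' p.2.2 (fun k => D (x - zpos n p.1 k))

lemma val_zpos (hn : 0 < n) (b : Fin 2) (k : Fin n) :
    (zpos n b k).val = 2 * k.val + b.val := by
  haveI : NeZero (2 * n) := ⟨by omega⟩
  have hk := k.isLt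
  have hb := b.isLt
  rw [zpos, ZMod.val_natCast, Nat.mod_eq_of_lt (by omega)]

lemma psi_parity (hn : 0 < n) (p : Fin 2 × {S : Finset (Fin n) // S.Nonempty}) (x : ZMod (2*n)) :
    psi n p x % 2 = (x.val + p.1.val) % 2 := by
  haveI : NeZero (2 * n) := ⟨by omega⟩
  obtain ⟨k, hk, he⟩ := Finset.exists_mem_eq_inf' p.2.2 (fun k => D (x - zpos n p.1 k))
  have he' : psi n p x = D (x - zpos n p.1 k) := he
  rw [he', D_parity ⟨n, rfl⟩, val_sub_parity ⟨n, rfl⟩, val_zpos hn]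
  omega

lemma psi_lipschitz (hn : 0 < n) (p : Fin 2 × {S : Finset (Fin n) // S.Nonempty}) (x : ZMod (2*n)) :
    psi n p (x + 1) ≤ psi n p x + 1 ∧ psi n p x ≤ psi n p (x + 1) + 1 := by
  haveI : NeZero (2 * n) := ⟨by omega⟩
  have hm : 2 ≤ 2 * n := by omega
  constructor
  · obtain ⟨k, hk, he⟩ := Finset.exists_mem_eq_inf' p.2.2 (fun k => D (x - zpos n p.1 k))
    have he' : psi n p x = D (x - zpos n p.1 k) := he
    have h1 : psi n p (x + 1) ≤ D (x + 1 - zpos n p.1 k) := Finset.inf'_le _ hk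
    have e : x + 1 - zpos n p.1 k = (x - zpos n p.1 k) + 1 := by ring
    rw [e] at h1
    have := (D_add_one_le hm (x - zpos n p.1 k)).1
    omega
  · obtain ⟨k, hk, he⟩ := Finset.exists_mem_eq_inf' p.2.2 (fun k => D ((x+1) - zpos n p.1 k))
    have he' : psi n p (x + 1) = D (x + 1 - zpos n p.1 k) := he
    have h1 : psi n p x ≤ D (x - zpos n p.1 k) := Finset.inf'_le _ hk
    have e : x + 1 - zpos n p.1 k = (x - zpos n p.1 k) + 1 := by ring
    rw [e] at he'
    have := (D_add_one_le hm (x - zpos n p.1 k)).2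
    omega

lemma psi_mem (hn : 0 < n) (p : Fin 2 × {S : Finset (Fin n) // S.Nonempty}) :
    psi n p ∈ stmt7P n := by
  haveI : NeZero (2 * n) := ⟨by omega⟩
  have hm : 2 ≤ 2 * n := by omega
  constructor
  · intro j
    have hl := psi_lipschitz hn p j
    have h1 := psi_parity hn p j
    have h2 := psi_parity hn p (j + 1)
    have h3 := val_add_one_parity hm ⟨n, rfl⟩ j
    omega
  · rintro ⟨j, h1, h2, h3⟩
    have hj : psi n p j = psi n p (j+1) + 1 := by omega
    obtain ⟨k, hk, he⟩ := Finset.exists_mem_eq_inf' p.2.2 (fun k => D ((j+1) - zpos n p.1 k))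
    have he' : psi n p (j+1) = D (j + 1 - zpos n p.1 k) := he
    have hD1 : 1 ≤ D (j + 1 - zpos n p.1 k) := by omega
    rcases D_dec hm _ hD1 with hc | hc
    · have e : j + 1 - zpos n p.1 k - 1 = j - zpos n p.1 k := by ring
      rw [e] at hc
      have h4 : psi n p j ≤ D (j - zpos n p.1 k) := Finset.inf'_le _ hk
      omega
    · have e : j + 1 - zpos n p.1 k + 1 = j + 2 - zpos n p.1 k := by ring
      rw [e] at hc
      have h4 : psi n p (j + 2) ≤ D (j + 2 - zpos n p.1 k) := Finset.inf'_le _ hk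
      omega

lemma mem_hstep {v : ZMod (2*n) → ℕ} (hv : v ∈ stmt7P n) : Hstep v := by
  intro j
  have := hv.1 j
  omega

lemma mem_hnov {v : ZMod (2*n) → ℕ} (hv : v ∈ stmt7P n) : Hnov v := by
  intro j h1 h2
  by_contra h
  exact hv.2 ⟨j, by omega, h2, by omega⟩

lemma mem_eq_psi (hn : 0 < n) {v : ZMod (2*n) → ℕ} (hv : v ∈ stmt7P n) :
    ∃ p, v = psi n p := by
  haveI : NeZero (2 * n) := ⟨by omega⟩
  have hs := mem_hstep hv
  have hno := mem_hnov hv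
  obtain ⟨b, hb⟩ : ∃ b : Fin 2, b.val = v 0 % 2 := ⟨⟨v 0 % 2, by omega⟩, rfl⟩
  have hzk : ∀ z : ZMod (2*n), v z = 0 → ∃ k : Fin n, zpos n b k = z := by
    intro z hz
    have hp := parity hs z
    rw [hz] at hp
    have hzv := ZMod.val_lt z
    have hk : z.val / 2 < n := by omega
    refine ⟨⟨z.val / 2, hk⟩, ?_⟩
    show ((2 * (z.val / 2) + b.val : ℕ) : ZMod (2*n)) = z
    have : 2 * (z.val / 2) + b.val = z.val := by omega
    rw [this]
    exact ZMod.natCast_rightInverse z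
  obtain ⟨S, hS⟩ : ∃ S : Finset (Fin n), S = Finset.univ.filter (fun k => v (zpos n b k) = 0) :=
    ⟨_, rfl⟩
  have hmem : ∀ k, k ∈ S ↔ v (zpos n b k) = 0 := by
    intro k; rw [hS]; simp
  have hSne : S.Nonempty := by
    obtain ⟨z, hz⟩ := exists_zero hs hno
    obtain ⟨k, hk⟩ := hzk z hz
    exact ⟨k, (hmem k).mpr (by rw [hk]; exact hz)⟩
  refine ⟨(b, ⟨S, hSne⟩), ?_⟩
  funext x
  apply le_antisymm
  · show v x ≤ S.inf' hSne (fun k => D (x - zpos n b k))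
    apply Finset.le_inf'
    intro k hk
    exact le_D hs ((hmem k).mp hk) x
  · show S.inf' hSne (fun k => D (x - zpos n b k)) ≤ v x
    obtain ⟨z, hz, hDz⟩ := exists_near_zero hs hno x
    obtain ⟨k, hk⟩ := hzk z hz
    have hkS : k ∈ S := (hmem k).mpr (by rw [hk]; exact hz)
    have h1 : S.inf' hSne (fun k => D (x - zpos n b k)) ≤ D (x - zpos n b k) :=
      Finset.inf'_le _ hkS
    rw [hk] at h1
    omega

lemma psi_zero_iff (hn : 0 < n) (p : Fin 2 × {S : Finset (Fin n) // S.Nonempty}) (x : ZMod (2*n)) :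
    psi n p x = 0 ↔ ∃ k ∈ p.2.1, zpos n p.1 k = x := by
  haveI : NeZero (2 * n) := ⟨by omega⟩
  constructor
  · intro h
    obtain ⟨k, hk, he⟩ := Finset.exists_mem_eq_inf' p.2.2 (fun k => D (x - zpos n p.1 k))
    have he' : psi n p x = D (x - zpos n p.1 k) := he
    rw [h] at he'
    have h2 := (D_eq_zero_iff (x - zpos n p.1 k)).mp he'.symm
    exact ⟨k, hk, (sub_eq_zero.mp h2).symm⟩
  · rintro ⟨k, hk, rfl⟩
    have h1 : psi n p (zpos n p.1 k) ≤ D (zpos n p.1 k - zpos n p.1 k) :=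
      Finset.inf'_le _ hk
    rw [sub_self] at h1
    have h0 : D (0 : ZMod (2*n)) = 0 := (D_eq_zero_iff 0).mpr rfl
    omega

lemma psi_injective (hn : 0 < n) : Function.Injective (psi n) := by
  haveI : NeZero (2 * n) := ⟨by omega⟩
  rintro ⟨b, ⟨S, hS⟩⟩ ⟨c, ⟨T, hT⟩⟩ h
  have hbc : b = c := by
    obtain ⟨k, hk⟩ := id hS
    have h0 : psi n (b, ⟨S, hS⟩) (zpos n b k) = 0 :=
      (psi_zero_iff hn _ _).mpr ⟨k, hk, rfl⟩
    rw [h] at h0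
    obtain ⟨k', hk', he⟩ := (psi_zero_iff hn _ _).mp h0
    have := congrArg ZMod.val he
    rw [val_zpos hn, val_zpos hn] at this
    have h2 : 2 * k'.val + c.val = 2 * k.val + b.val := this
    have hb := b.isLt
    have hc := c.isLt
    exact Fin.ext (by omega)
  subst hbc
  have hST : S = T := by
    ext k
    constructor
    · intro hk
      have h0 : psi n (b, ⟨S, hS⟩) (zpos n b k) = 0 :=
        (psi_zero_iff hn _ _).mpr ⟨k, hk, rfl⟩
      rw [h] at h0
      obtain ⟨k', hk', he⟩ := (psi_zero_iff hn _ _).mp h0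
      have := congrArg ZMod.val he
      rw [val_zpos hn, val_zpos hn] at this
      have : k' = k := Fin.ext (by omega)
      exact this ▸ hk'
    · intro hk
      have h0 : psi n (b, ⟨T, hT⟩) (zpos n b k) = 0 :=
        (psi_zero_iff hn _ _).mpr ⟨k, hk, rfl⟩
      rw [← h] at h0
      obtain ⟨k', hk', he⟩ := (psi_zero_iff hn _ _).mp h0
      have := congrArg ZMod.val he
      rw [val_zpos hn, val_zpos hn] at this
      have : k' = k := Fin.ext (by omega)
      exact this ▸ hk'
  simp [hST]

lemma stmt7P_eq_range (hn : 0 < n) : stmt7P n = Set.range (psi n) := by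
  ext v
  constructor
  · intro hv
    obtain ⟨p, hp⟩ := mem_eq_psi hn hv
    exact ⟨p, hp.symm⟩
  · rintro ⟨p, rfl⟩
    exact psi_mem hn p

end Psi


lemma card_dom (n : ℕ) :
    Nat.card (Fin 2 × {S : Finset (Fin n) // S.Nonempty}) = 2 * (2 ^ n - 1) := by
  rw [Nat.card_eq_fintype_card, Fintype.card_prod, Fintype.card_fin]
  congr 1
  have e : Fintype.card {S : Finset (Fin n) // S.Nonempty}
      = Fintype.card {S : Finset (Fin n) // ¬ S = ∅} :=
    Fintype.card_congr (Equiv.subtypeEquivRight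
      (fun S => by simp [Finset.nonempty_iff_ne_empty]))
  rw [e, Fintype.card_subtype_compl, Fintype.card_subtype_eq (∅ : Finset (Fin n)),
    Fintype.card_finset, Fintype.card_fin]

lemma main (n : ℕ) (hn : 0 < n) :
    (stmt7P n).Finite ∧ (stmt7P n).ncard = 2 ^ (n + 1) - 2 := by
  rw [stmt7P_eq_range hn]
  refine ⟨Set.finite_range _, ?_⟩
  rw [← Set.image_univ, Set.ncard_image_of_injective _ (psi_injective hn),
    Set.ncard_univ, card_dom]
  have h1 : 1 ≤ 2 ^ n := Nat.one_le_two_pow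
  rw [pow_succ]
  omega

end S7

/-- each `P_n` (for `n ≥ 1`) is finite, `|P_1| = 2`, and
`|P_{n+1}| = 2|P_n| + 2` for all `n ≥ 1`. -/
theorem stmt7 :
    (∀ n : ℕ, 1 ≤ n → (stmt7P n).Finite) ∧
    (stmt7P 1).ncard = 2 ∧
    (∀ n : ℕ, 1 ≤ n → (stmt7P (n + 1)).ncard = 2 * (stmt7P n).ncard + 2) := by
  refine ⟨fun n hn => (S7.main n hn).1, ?_, fun n hn => ?_⟩
  · rw [(S7.main 1 one_pos).2]
    norm_num
  · rw [(S7.main (n+1) (by omega)).2, (S7.main n hn).2]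
    have h1 : 1 ≤ 2 ^ n := Nat.one_le_two_pow
    rw [pow_succ, pow_succ]
    omega
end

section
/- Let G be a finite simple graph with vertex set V. Let T be the square matrix over ℂ indexed by the darts (ordered pairs of adjacent vertices) of G, with T d e = 1 if the head of d equals the tail of e and e is not the reverse of d, and T d e = 0 otherwise. Let A be the adjacency matrix of G over ℂ and Q the diagonal matrix with Q v v = deg(v) − 1. Let |V| be the number of vertices and |E| the number of (undirected) edges of G. Then for every u ∈ ℂ: (1 − u²)^{|E|} · det(1 − u·A + u²·Q) = (1 − u²)^{|V|} · det(1 − u·T). -/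
open Matrix Finset Polynomial

set_option linter.unusedSectionVars false
set_option maxHeartbeats 1000000

namespace Stmt10Aux

variable {V : Type*} [Fintype V] [DecidableEq V] (G : SimpleGraph V) [DecidableRel G.Adj]
variable (R : Type*) [CommRing R]

def Sm : Matrix V G.Dart R := Matrix.of fun v d => if d.toProd.1 = v then 1 else 0
def Em : Matrix V G.Dart R := Matrix.of fun v d => if d.toProd.2 = v then 1 else 0
def Jm : Matrix G.Dart G.Dart R := Matrix.of fun d e => if e = d.symm then 1 else 0
def Tm : Matrix G.Dart G.Dart R := Matrix.of fun d e : G.Dart =>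
  if d.snd = e.fst ∧ e ≠ d.symm then (1 : R) else 0

variable {G R}

lemma Sm_mul_Em_T : Sm G R * (Em G R)ᵀ = G.adjMatrix R := by
  ext v w
  simp only [Matrix.mul_apply, Sm, Em, Matrix.transpose_apply, Matrix.of_apply,
    SimpleGraph.adjMatrix_apply]
  by_cases h : G.Adj v w
  · rw [if_pos h, Finset.sum_eq_single (SimpleGraph.Dart.mk (v, w) h)]
    · simp
    · intro d _ hd
      have : ¬ (d.toProd.1 = v ∧ d.toProd.2 = w) := fun ⟨h1, h2⟩ =>
        hd (SimpleGraph.Dart.ext _ _ (Prod.ext h1 h2))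
      rcases not_and_or.mp this with h1 | h2
      · simp [h1]
      · simp [h2]
    · simp
  · rw [if_neg h]
    apply Finset.sum_eq_zero
    intro d _
    have : ¬ (d.toProd.1 = v ∧ d.toProd.2 = w) := fun ⟨h1, h2⟩ => h (h1 ▸ h2 ▸ d.adj)
    rcases not_and_or.mp this with h1 | h2
    · simp [h1]
    · simp [h2]

lemma Em_mul_Em_T : Em G R * (Em G R)ᵀ = Matrix.diagonal (fun v => (G.degree v : R)) := by
  ext v w
  simp only [Matrix.mul_apply, Em, Matrix.transpose_apply, Matrix.of_apply,
    Matrix.diagonal_apply]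
  by_cases h : v = w
  · subst h
    rw [if_pos rfl]
    have h1 : ∀ d : G.Dart, (if d.toProd.2 = v then (1:R) else 0) * (if d.toProd.2 = v then (1:R) else 0)
        = if d.toProd.2 = v then (1:R) else 0 := by
      intro d; by_cases h1 : d.toProd.2 = v <;> simp [h1]
    rw [Finset.sum_congr rfl fun d _ => h1 d, Finset.sum_boole]
    congr 1
    have hcard : #{d : G.Dart | d.toProd.2 = v} = #{d : G.Dart | d.fst = v} := by
      apply Finset.card_nbij' (fun d => d.symm) (fun d => d.symm) <;>
        simp [Set.MapsTo, Set.LeftInvOn, Set.RightInvOn, Set.InvOn, SimpleGraph.Dart.symm]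
    rw [hcard, SimpleGraph.dart_fst_fiber_card_eq_degree]
  · rw [if_neg h]
    apply Finset.sum_eq_zero
    intro d _
    by_cases h1 : d.toProd.2 = v
    · have h2 : ¬ d.toProd.2 = w := fun h2 => h (h1.symm.trans h2)
      simp [h2]
    · simp [h1]

lemma Sm_mul_Jm : Sm G R * Jm G R = Em G R := by
  ext v e
  simp only [Matrix.mul_apply, Sm, Jm, Em, Matrix.of_apply]
  rw [Finset.sum_eq_single e.symm]
  · simp [SimpleGraph.Dart.symm]
    split_ifs <;> simp_all
  · intro d _ hd
    have : ¬ e = d.symm := fun h2 => hd (by rw [h2, SimpleGraph.Dart.symm_symm])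
    simp [this]
  · simp

lemma Jm_mul_Jm : Jm G R * Jm G R = 1 := by
  ext d e
  simp only [Matrix.mul_apply, Jm, Matrix.of_apply, Matrix.one_apply]
  rw [Finset.sum_eq_single d.symm]
  · by_cases h : d = e
    · subst h; simp
    · have h2 : ¬ e = d.symm.symm := by
        rw [SimpleGraph.Dart.symm_symm]; exact fun he => h he.symm
      rw [if_pos rfl, if_neg h2, mul_zero, if_neg h]
  · intro f _ hf
    have : ¬ f = d.symm := hf
    simp [this]
  · simp

lemma Tm_eq : Tm G R = (Em G R)ᵀ * Sm G R - Jm G R := by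
  ext d e
  simp only [Tm, Jm, Sm, Em, Matrix.sub_apply, Matrix.mul_apply, Matrix.transpose_apply,
    Matrix.of_apply]
  have h0 : ∑ v, (if d.toProd.2 = v then (1:R) else 0) * (if e.toProd.1 = v then (1:R) else 0)
      = if d.snd = e.fst then 1 else 0 := by
    rw [Finset.sum_eq_single d.toProd.2]
    · simp [eq_comm]
    · intro v _ hv
      have : ¬ d.toProd.2 = v := fun h => hv h.symm
      simp [this]
    · simp
  rw [h0]
  by_cases h1 : e = d.symm
  · subst h1
    simp [SimpleGraph.Dart.symm]
  · by_cases h2 : d.snd = e.fst <;> simp [h1, h2]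


noncomputable def dartToBE (d : G.Dart) : Bool × {e : Sym2 V // e ∈ G.edgeFinset} :=
  (decide (d.toProd = d.edge.out), ⟨d.edge, by simp⟩)

lemma dartToBE_snd (d : G.Dart) : (dartToBE d).2.val = d.edge := rfl

lemma dart_out_or (d : G.Dart) : d.toProd = d.edge.out ∨ d.toProd = d.edge.out.swap := by
  have h : Sym2.mk d.edge.out.1 d.edge.out.2 = Sym2.mk d.toProd.1 d.toProd.2 := by
    rw [Sym2.mk, Quot.out_eq]; rfl
  exact Sym2.mk_eq_mk_iff.mp h.symm

lemma edge_out_adj (d : G.Dart) : G.Adj d.edge.out.1 d.edge.out.2 := by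
  have hm : Sym2.mk d.edge.out.1 d.edge.out.2 ∈ G.edgeSet := by
    rw [Sym2.mk, Quot.out_eq]; exact d.edge_mem
  rw [← Prod.mk.eta (p := d.edge.out)] at hm
  exact hm

lemma out_swap_ne (d : G.Dart) : d.edge.out.swap ≠ d.edge.out := by
  intro hc
  have h2 := congrArg Prod.fst hc
  exact (edge_out_adj d).ne' h2

lemma dartToBE_symm_fst (d : G.Dart) : (dartToBE d.symm).1 = !(dartToBE d).1 := by
  have hedge : d.symm.edge = d.edge := d.edge_symm
  rcases dart_out_or d with h | h
  · have h2 : ¬ d.symm.toProd = d.symm.edge.out := by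
      rw [hedge]
      show d.toProd.swap ≠ _
      rw [h]
      exact out_swap_ne d
    simp only [dartToBE, decide_eq_true_eq, h2, decide_false, h]
    simp [out_swap_ne d]
  · have h2 : d.symm.toProd = d.symm.edge.out := by
      rw [hedge]
      show d.toProd.swap = _
      rw [h, Prod.swap_swap]
    have h1 : ¬ d.toProd = d.edge.out := by
      rw [h]
      exact out_swap_ne d
    simp only [dartToBE, decide_eq_true_eq, h1, decide_false]
    simp only [hedge] at h2
    have h3 : d.symm.toProd = d.toProd.swap := rfl
    rw [h3, h, Prod.swap_swap] at h2
    simp [h2, h, out_swap_ne d]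

lemma dartToBE_symm_snd (d : G.Dart) : (dartToBE d.symm).2 = (dartToBE d).2 :=
  Subtype.ext (by simp [dartToBE_snd])

lemma dartToBE_injective : Function.Injective (dartToBE (G := G)) := by
  intro d d' h
  have hedge : d.edge = d'.edge := by
    have := congrArg (fun x => x.2.val) h
    simpa [dartToBE_snd] using this
  rcases (SimpleGraph.dart_edge_eq_iff d d').mp hedge with h1 | h1
  · exact h1
  · exfalso
    subst h1
    have := congrArg Prod.fst h
    rw [dartToBE_symm_fst] at this
    simp at this

noncomputable def dartEquiv (G : SimpleGraph V) [DecidableRel G.Adj] :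
    G.Dart ≃ Bool × {e : Sym2 V // e ∈ G.edgeFinset} :=
  Equiv.ofBijective dartToBE
    ((Fintype.bijective_iff_injective_and_card _).mpr
      ⟨dartToBE_injective, by
        simp [Fintype.card_prod, Fintype.card_coe, G.dart_card_eq_twice_card_edges,
          Fintype.card_bool]
        congr 1; ext; simp⟩)

lemma dartEquiv_snd (d : G.Dart) : ((dartEquiv G d).2 : Sym2 V) = d.edge := rfl

def Bm (u : R) : Matrix Bool Bool R := Matrix.of fun b b' => if b = b' then 1 else u

lemma entry_eq (u : R) (d d' : G.Dart) :
    (1 + u • Jm G R) d d' =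
      Matrix.blockDiagonal (fun _ : {e : Sym2 V // e ∈ G.edgeFinset} => Bm u)
        (dartEquiv G d) (dartEquiv G d') := by
  rw [Matrix.blockDiagonal_apply]
  by_cases h1 : d' = d
  · subst h1
    have : ¬ d' = d'.symm := fun h => d'.symm_ne h.symm
    simp [Jm, Bm, this, Matrix.one_apply]
  · by_cases h2 : d' = d.symm
    · subst h2
      have hs : (dartEquiv G d.symm).2 = (dartEquiv G d).2 := dartToBE_symm_snd d
      have hf : (dartEquiv G d.symm).1 = !(dartEquiv G d).1 := dartToBE_symm_fst d
      rw [hs, if_pos rfl]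
      have hb : ¬ ((dartEquiv G d).1 = (dartEquiv G d.symm).1) := by
        rw [hf]; cases (dartEquiv G d).1 <;> simp
      have h1' : ¬ (d = d.symm) := fun h => d.symm_ne h.symm
      simp [Jm, Bm, Matrix.one_apply, h1', hb, fun h : (dartEquiv G d).1 = !(dartEquiv G d).1 => hb (by rw [hf]; exact h)]
    · have hne : ¬ ((dartEquiv G d').2 = (dartEquiv G d).2) := by
        intro h
        have : d'.edge = d.edge := by
          rw [← dartEquiv_snd, ← dartEquiv_snd, h]
        rcases (SimpleGraph.dart_edge_eq_iff d' d).mp this with h' | h'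
        · exact h1 h'
        · exact h2 h'
      rw [if_neg (fun h => hne h.symm)]
      have h2' : ¬ d' = d.symm := h2
      have h1' : ¬ d = d' := fun h => h1 h.symm
      simp [Jm, Bm, Matrix.one_apply, h1', h2']

lemma det_Bm (u : R) : (Bm u).det = 1 - u ^ 2 := by
  have : (Bm u).det = ((Bm u).submatrix finTwoEquiv finTwoEquiv).det :=
    (Matrix.det_submatrix_equiv_self finTwoEquiv (Bm u)).symm
  rw [this]
  have hB : (Bm (R := R) u).submatrix finTwoEquiv finTwoEquiv = !![1, u; u, 1] := by
    ext i j
    fin_cases i <;> fin_cases j <;> simp [Bm, finTwoEquiv]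
  rw [hB, Matrix.det_fin_two_of]
  ring

lemma det_one_add_smul_Jm (u : R) :
    (1 + u • Jm G R).det = (1 - u ^ 2) ^ G.edgeFinset.card := by
  have h1 : ((1 + u • Jm G R).submatrix (dartEquiv G).symm (dartEquiv G).symm).det
      = (1 + u • Jm G R).det := Matrix.det_submatrix_equiv_self _ _
  rw [← h1]
  have h2 : (1 + u • Jm G R).submatrix (dartEquiv G).symm (dartEquiv G).symm
      = Matrix.blockDiagonal (fun _ : {e : Sym2 V // e ∈ G.edgeFinset} => Bm u) := by
    ext x y
    rw [Matrix.submatrix_apply, entry_eq, Equiv.apply_symm_apply, Equiv.apply_symm_apply]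
  rw [h2, Matrix.det_blockDiagonal]
  simp [det_Bm, Finset.prod_const, Fintype.card_coe]


section Defs
variable (G R)

def M1mat (u : R) : Matrix V V R :=
  (1 : Matrix V V R) - u • G.adjMatrix R + u ^ 2 • Matrix.diagonal (fun v => (G.degree v : R) - 1)

def M2mat (u : R) : Matrix G.Dart G.Dart R := (1 : Matrix G.Dart G.Dart R) - u • Tm G R

def lhsv (u : R) : R := (1 - u ^ 2) ^ G.edgeFinset.card * (M1mat G R u).det

def rhsv (u : R) : R := (1 - u ^ 2) ^ Fintype.card V * (M2mat G R u).det

end Defs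

lemma core (u : ℂ) (hu : (1 : ℂ) - u ^ 2 ≠ 0) : lhsv G ℂ u = rhsv G ℂ u := by
  set c : ℂ := 1 - u ^ 2 with hc
  set J := Jm G ℂ with hJ
  set S := Sm G ℂ with hS
  set E := Em G ℂ with hE
  set A := G.adjMatrix ℂ with hA
  set D : Matrix V V ℂ := Matrix.diagonal (fun v => (G.degree v : ℂ)) with hD
  set K : Matrix G.Dart G.Dart ℂ := 1 + u • J with hK
  set K' : Matrix G.Dart G.Dart ℂ := c⁻¹ • ((1 : Matrix G.Dart G.Dart ℂ) - u • J) with hK'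
  have hJJ : J * J = 1 := Jm_mul_Jm
  have hmul : ((1 : Matrix G.Dart G.Dart ℂ) + u • J) * (1 - u • J) = c • 1 := by
    calc ((1 : Matrix G.Dart G.Dart ℂ) + u • J) * (1 - u • J)
        = 1 - (u * u) • (J * J) := by
          simp only [Matrix.add_mul, Matrix.mul_sub, Matrix.one_mul, Matrix.mul_one,
            Matrix.smul_mul, Matrix.mul_smul, smul_smul, smul_add, smul_sub, ← hJ]
          abel
      _ = c • 1 := by rw [hJJ, hc, sub_smul, one_smul, pow_two]
  have hKK' : K * K' = 1 := by
    rw [hK, hK', Matrix.mul_smul, hmul, smul_smul, inv_mul_cancel₀ hu, one_smul]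
  set X : Matrix G.Dart V ℂ := K' * (u • Eᵀ) with hX
  have step1 : M2mat G ℂ u = K - (u • Eᵀ) * S := by
    rw [M2mat, Tm_eq, ← hE, ← hS, ← hJ, smul_sub, hK]
    have h5 : (u • Eᵀ) * S = u • (Eᵀ * S) := Matrix.smul_mul u _ _
    rw [h5]
    abel
  have step2 : K * (1 - X * S) = M2mat G ℂ u := by
    rw [Matrix.mul_sub, Matrix.mul_one, hX, ← Matrix.mul_assoc, ← Matrix.mul_assoc,
      hKK', Matrix.one_mul, step1]
  have step4 : S * X = c⁻¹ • (u • A - u ^ 2 • D) := by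
    rw [hX, hK', Matrix.smul_mul, Matrix.mul_smul]
    congr 1
    rw [Matrix.sub_mul, Matrix.one_mul, Matrix.smul_mul, Matrix.mul_smul, smul_smul, ← pow_two,
      Matrix.mul_sub, Matrix.mul_smul, Matrix.mul_smul, ← Matrix.mul_assoc]
    rw [hS, hE, Sm_mul_Em_T, Sm_mul_Jm, Em_mul_Em_T, ← hA, ← hD]
  have step5 : (1 : Matrix V V ℂ) - S * X = c⁻¹ • M1mat G ℂ u := by
    rw [step4]
    have h1 : (1 : Matrix V V ℂ) = c⁻¹ • (c • (1 : Matrix V V ℂ)) := by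
      rw [smul_smul, inv_mul_cancel₀ hu, one_smul]
    nth_rewrite 1 [h1]
    rw [← smul_sub]
    congr 1
    have h2 : Matrix.diagonal (fun v => (G.degree v : ℂ) - 1) = D - 1 := by
      rw [hD, ← Matrix.diagonal_one, Matrix.diagonal_sub]
    rw [M1mat, ← hA, h2, hc, sub_smul, one_smul, smul_sub]
    abel
  have hdet2 : (M2mat G ℂ u).det = c ^ G.edgeFinset.card *
      ((c⁻¹) ^ Fintype.card V * (M1mat G ℂ u).det) := by
    rw [← step2, Matrix.det_mul]
    have h3 : (1 : Matrix G.Dart G.Dart ℂ) - X * S = 1 + (-X) * S := by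
      rw [Matrix.neg_mul, sub_eq_add_neg]
    have h4 : ((1 : Matrix G.Dart G.Dart ℂ) - X * S).det
        = ((1 : Matrix V V ℂ) - S * X).det := by
      rw [h3, Matrix.det_one_add_mul_comm, Matrix.mul_neg, ← sub_eq_add_neg]
    rw [h4, step5, Matrix.det_smul, hK, det_one_add_smul_Jm, ← hc]
  rw [lhsv, rhsv, hdet2, ← hc]
  have hcn : c ^ Fintype.card V * (c⁻¹) ^ Fintype.card V = 1 := by
    rw [← mul_pow, mul_inv_cancel₀ hu, one_pow]
  calc c ^ G.edgeFinset.card * (M1mat G ℂ u).det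
      = (c ^ Fintype.card V * (c⁻¹) ^ Fintype.card V) *
        (c ^ G.edgeFinset.card * (M1mat G ℂ u).det) := by rw [hcn, one_mul]
    _ = c ^ Fintype.card V *
        (c ^ G.edgeFinset.card * ((c⁻¹) ^ Fintype.card V * (M1mat G ℂ u).det)) := by ring

variable {S' : Type*} [CommRing S']

lemma map_M1 (f : R →+* S') (u : R) :
    f.mapMatrix (M1mat G R u) = M1mat G S' (f u) := by
  ext i j
  simp only [RingHom.mapMatrix_apply, Matrix.map_apply, M1mat, Matrix.add_apply,
    Matrix.sub_apply, Matrix.smul_apply, Matrix.one_apply, SimpleGraph.adjMatrix_apply,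
    Matrix.diagonal_apply, smul_eq_mul]
  rw [_root_.map_add, _root_.map_sub, _root_.map_mul, _root_.map_mul, _root_.map_pow]
  by_cases hij : i = j <;> by_cases hadj : G.Adj i j <;>
    simp [hij, hadj, map_natCast, f.map_sub, f.map_one, f.map_zero]

lemma map_M2 (f : R →+* S') (u : R) :
    f.mapMatrix (M2mat G R u) = M2mat G S' (f u) := by
  ext d e
  simp only [RingHom.mapMatrix_apply, Matrix.map_apply, M2mat, Matrix.sub_apply,
    Matrix.smul_apply, Matrix.one_apply, Tm, Matrix.of_apply, smul_eq_mul]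
  rw [_root_.map_sub, _root_.map_mul]
  by_cases hde : d = e <;>
    by_cases hT : d.snd = e.fst ∧ e ≠ d.symm <;>
    simp [hde, hT, f.map_one, f.map_zero]

lemma map_lhsv (f : R →+* S') (u : R) : f (lhsv G R u) = lhsv G S' (f u) := by
  rw [lhsv, lhsv, _root_.map_mul, _root_.map_pow, _root_.map_sub, f.map_one,
    _root_.map_pow, RingHom.map_det, map_M1]

lemma map_rhsv (f : R →+* S') (u : R) : f (rhsv G R u) = rhsv G S' (f u) := by
  rw [rhsv, rhsv, _root_.map_mul, _root_.map_pow, _root_.map_sub, f.map_one,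
    _root_.map_pow, RingHom.map_det, map_M2]

lemma main (u : ℂ) : lhsv G ℂ u = rhsv G ℂ u := by
  set p : Polynomial ℂ := lhsv G (Polynomial ℂ) X with hp
  set q : Polynomial ℂ := rhsv G (Polynomial ℂ) X with hq
  have hpe : ∀ w : ℂ, p.eval w = lhsv G ℂ w := by
    intro w
    have := map_lhsv (G := G) (Polynomial.evalRingHom w) X
    simpa using this
  have hqe : ∀ w : ℂ, q.eval w = rhsv G ℂ w := by
    intro w
    have := map_rhsv (G := G) (Polynomial.evalRingHom w) X
    simpa using this
  have hfin : ({w : ℂ | 1 - w ^ 2 = 0}).Finite := by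
    apply Set.Finite.subset ((Set.finite_singleton (-1 : ℂ)).insert 1)
    intro w hw
    have h2 : (w - 1) * (w + 1) = 0 := by
      have h0 : (1 : ℂ) - w ^ 2 = 0 := hw
      linear_combination -h0
    simp only [Set.mem_insert_iff, Set.mem_singleton_iff]
    rcases mul_eq_zero.mp h2 with h | h
    · left; exact sub_eq_zero.mp h
    · right; exact eq_neg_of_add_eq_zero_left h
  have hinf : ({w : ℂ | p.eval w = q.eval w}).Infinite := by
    apply Set.Infinite.mono _ (hfin.infinite_compl)
    intro w hw
    simp only [Set.mem_compl_iff, Set.mem_setOf_eq] at hw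
    simp only [Set.mem_setOf_eq, hpe, hqe]
    exact core w hw
  have hpq : p = q := Polynomial.eq_of_infinite_eval_eq p q hinf
  rw [← hpe, ← hqe, hpq]

end Stmt10Aux

/-- Bass's determinant identity (the Ihara determinant formula)
for a finite simple graph `G`: with `T` the non-backtracking dart matrix, `A`
the adjacency matrix and `Q` the diagonal matrix of `deg - 1`, one has
`(1-u²)^{|E|} det(1 - uA + u²Q) = (1-u²)^{|V|} det(1 - uT)` for all `u`. -/
theorem stmt10 {V : Type*} [Fintype V] [DecidableEq V] (G : SimpleGraph V)
    [DecidableRel G.Adj] (u : ℂ) :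
    (1 - u ^ 2) ^ G.edgeFinset.card *
      Matrix.det ((1 : Matrix V V ℂ) - u • G.adjMatrix ℂ
        + u ^ 2 • Matrix.diagonal (fun v => (G.degree v : ℂ) - 1)) =
    (1 - u ^ 2) ^ Fintype.card V *
      Matrix.det ((1 : Matrix G.Dart G.Dart ℂ) - u • Matrix.of (fun d e : G.Dart =>
        if d.snd = e.fst ∧ e ≠ d.symm then (1 : ℂ) else 0)) :=
  Stmt10Aux.main u
end

section
/- Let P be a type, l : P → ℕ with l p ≥ 1 for all p, and w : P → ℂ. Assume there is K ≥ 1 such that for every n ≥ 1 the set {p | l p = n} is finite with at most K^n elements, and |w p| ≤ K^{l p} for all p. For n ≥ 1 define N n = ∑ l(p) · (w p)^d, the (finite) sum over all pairs (p, d) with d ≥ 1 and d · l(p) = n. Then there exists α > 0 such that for every complex u with |u| < α: the family (1 − w p · u^{l p})^{−1}, p ∈ P, is multipliable, the series ∑_{n≥1} N n · u^n / n converges absolutely, and ∏_p (1 − w p · u^{l p})^{−1} = exp(∑_{n≥1} N n · u^n / n). -/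
/-- `stmt11N l w n` is the weighted number of cycles of length `n`:
the sum of `l p * (w p)^d` over all pairs `(p, d)` with `d ≥ 1` and
`d * l p = n` (a finite sum, expressed as a `tsum` of a finitely supported
family). -/
noncomputable def stmt11N {P : Type*} (l : P → ℕ) (w : P → ℂ) (n : ℕ) : ℂ :=
  ∑' pd : P × ℕ,
    if 1 ≤ pd.2 ∧ pd.2 * l pd.1 = n then (l pd.1 : ℂ) * w pd.1 ^ pd.2 else 0

lemma stmt11_aux_summable {P : Type*} (g : P → ℕ) (hfin : ∀ n, {p | g p = n}.Finite)
    (a : ℕ → ℝ) (ha : ∀ n, 0 ≤ a n)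
    (hsum : Summable fun n => ({p | g p = n}.ncard : ℝ) * a n) :
    Summable fun p => a (g p) := by
  rw [← (Equiv.sigmaFiberEquiv g).summable_iff]
  have hfin' : ∀ n, Finite {x // g x = n} := fun n => (hfin n).to_subtype
  refine (summable_sigma_of_nonneg fun x => ha _).2 ⟨fun n => Summable.of_finite, ?_⟩
  refine hsum.congr fun n => ?_
  have h1 : (fun c : {x // g x = n} => a (g ((Equiv.sigmaFiberEquiv g) ⟨n, c⟩)))
      = fun _ => a n := funext fun c => by simp [c.2]
  rw [h1, tsum_const, nsmul_eq_mul, ← Nat.card_coe_set_eq]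
  rfl


set_option maxHeartbeats 1000000 in
/-- the Euler product manipulation for the Bass–Ihara zeta
function.  If there are at most `K^n` elements `p` with `l p = n` and
`|w p| ≤ K^{l p}`, then for `|u|` small enough the Euler product over `P` is
multipliable, the logarithmic series converges absolutely, and
`∏_p (1 - w p u^{l p})⁻¹ = exp (∑_{n ≥ 1} N_n u^n / n)`. -/
theorem stmt11 {P : Type*} (l : P → ℕ) (w : P → ℂ) (hl : ∀ p, 1 ≤ l p)
    (K : ℝ) (hK : 1 ≤ K)
    (hfin : ∀ n : ℕ, 1 ≤ n →
      {p | l p = n}.Finite ∧ ({p | l p = n}.ncard : ℝ) ≤ K ^ n)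
    (hw : ∀ p, ‖w p‖ ≤ K ^ l p) :
    ∃ α : ℝ, 0 < α ∧ ∀ u : ℂ, ‖u‖ < α →
      Multipliable (fun p => (1 - w p * u ^ l p)⁻¹) ∧
      Summable (fun n : ℕ =>
        ‖stmt11N l w (n + 1) * u ^ (n + 1) / (n + 1)‖) ∧
      ∏' p, (1 - w p * u ^ l p)⁻¹
        = Complex.exp (∑' n : ℕ, stmt11N l w (n + 1) * u ^ (n + 1) / (n + 1)) := by
  classical
  have hK0 : (0:ℝ) < K := lt_of_lt_of_le one_pos hK
  refine ⟨(2 * K ^ 2)⁻¹, by positivity, fun u hu => ?_⟩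
  set x : P → ℂ := fun p => w p * u ^ l p with hxdef
  set r : ℝ := ‖u‖ with hrdef
  have hr0 : 0 ≤ r := norm_nonneg u
  set q : ℝ := K ^ 2 * r with hqdef
  have hq0 : 0 ≤ q := by positivity
  have hqlt : q < 1 / 2 := by
    have h1 : K ^ 2 * r < K ^ 2 * (2 * K ^ 2)⁻¹ := by
      exact (mul_lt_mul_iff_right₀ (by positivity)).2 hu
    have h2 : K ^ 2 * (2 * K ^ 2)⁻¹ = 1 / 2 := by field_simp
    rw [hqdef]; linarith
  have hq1 : q < 1 := by linarith
  -- basic bounds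
  have hKr : 0 ≤ K * r := by positivity
  have hKrq : K * r ≤ q := by nlinarith
  have hxA : ∀ p, ‖x p‖ ≤ (K * r) ^ l p := by
    intro p
    rw [hxdef]
    simp only [norm_mul, norm_pow, mul_pow]
    exact mul_le_mul (hw p) (pow_le_pow_left₀ hr0 le_rfl _) (by positivity) (by positivity)
  have hxq : ∀ p, ‖x p‖ ≤ q := by
    intro p
    refine (hxA p).trans ?_
    calc (K * r) ^ l p ≤ q ^ l p := pow_le_pow_left₀ hKr hKrq _
      _ ≤ q ^ 1 := pow_le_pow_of_le_one hq0 hq1.le (hl p)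
      _ = q := pow_one q
  have hxlt : ∀ p, ‖x p‖ < 1 := fun p => by
    linarith [hxq p]
  have hne : ∀ p, 1 - x p ≠ 0 := by
    intro p h
    have hx1 : x p = 1 := by linear_combination -h
    have h2 := hxlt p
    rw [hx1] at h2
    simp at h2
  -- fibers of l are finite
  have hfin' : ∀ n, {p | l p = n}.Finite := by
    intro n
    match n with
    | 0 =>
      have : {p | l p = 0} = ∅ :=
        Set.eq_empty_iff_forall_notMem.2 fun p hp => by have := hl p; simp at hp; omega
      rw [this]; exact Set.finite_empty
    | (m+1) => exact (hfin (m+1) (by omega)).1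
  -- Summability of A p = (K*r)^(l p)
  have hA : Summable fun p => (K * r) ^ l p := by
    refine stmt11_aux_summable l hfin' _ (fun n => by positivity) ?_
    refine Summable.of_nonneg_of_le (fun n => by positivity) (fun n => ?_)
      (summable_geometric_of_lt_one hq0 hq1)
    match n with
    | 0 =>
      have : {p | l p = 0} = ∅ :=
        Set.eq_empty_iff_forall_notMem.2 fun p hp => by have := hl p; simp at hp; omega
      simp [this]
    | (m+1) =>
      have hcard := (hfin (m+1) (by omega)).2
      calc ({p | l p = m+1}.ncard : ℝ) * (K * r) ^ (m+1)
          ≤ K ^ (m+1) * (K * r) ^ (m+1) := by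
            exact mul_le_mul_of_nonneg_right hcard (by positivity)
        _ = q ^ (m+1) := by rw [← mul_pow, hqdef]; ring_nf
  -- Summability of B d
  set B : ℕ → ℝ := fun d => if 1 ≤ d then q ^ (d - 1) else 0 with hBdef
  have hB : Summable B := by
    refine (summable_nat_add_iff 1).1 ?_
    have : (fun n => B (n + 1)) = fun n => q ^ n := by
      funext n; simp [hBdef]
    rw [this]
    exact summable_geometric_of_lt_one hq0 hq1
  have hB0 : ∀ d, 0 ≤ B d := fun d => by
    rw [hBdef]; positivity
  -- the double-series F
  set F : P × ℕ → ℂ := fun pd => x pd.1 ^ pd.2 / (pd.2 : ℂ) with hFdef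
  have hFbound : ∀ pd : P × ℕ, ‖F pd‖ ≤ (K * r) ^ l pd.1 * B pd.2 := by
    rintro ⟨p, d⟩
    match d with
    | 0 => simp [hFdef, hBdef]
    | (e+1) =>
      have h1 : ‖F (p, e+1)‖ ≤ ‖x p ^ (e+1)‖ := by
        rw [hFdef]
        simp only [norm_div]
        refine div_le_self (norm_nonneg _) ?_
        rw [Complex.norm_natCast]
        exact_mod_cast Nat.one_le_iff_ne_zero.2 (Nat.succ_ne_zero e)
      refine h1.trans ?_
      rw [norm_pow, pow_succ']
      have hxn : ‖x p‖ ≤ (K * r) ^ l p := by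
        exact hxA p
      have hxqn : ‖x p‖ ≤ q := by exact hxq p
      have h2 : ‖x p‖ ^ e ≤ q ^ e := pow_le_pow_left₀ (norm_nonneg _) hxqn e
      have hBe : B (e+1) = q ^ e := by simp [hBdef]
      rw [hBe]
      exact mul_le_mul hxn h2 (by positivity) (by positivity)
  have hFnorm : Summable fun pd => ‖F pd‖ :=
    Summable.of_nonneg_of_le (fun pd => norm_nonneg _) hFbound
      (hA.mul_of_nonneg hB (fun p => by positivity) hB0)
  have hF : Summable F := hFnorm.of_norm
  have hrow : ∀ p, HasSum (fun d => F (p, d)) (-Complex.log (1 - x p)) := by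
    intro p
    exact Complex.hasSum_taylorSeries_neg_log (z := x p) (hxlt p)
  have hlog : HasSum (fun p => -Complex.log (1 - x p)) (∑' pd, F pd) :=
    hF.hasSum.prod_fiberwise hrow
  have hexp := hlog.cexp
  have hexp_eq : (Complex.exp ∘ fun p => -Complex.log (1 - x p))
      = fun p => (1 - x p)⁻¹ := by
    funext p
    simp only [Function.comp]
    rw [Complex.exp_neg, Complex.exp_log (hne p)]
  rw [hexp_eq] at hexp
  -- grouping by total length n
  set g2 : P × ℕ → ℕ := fun pd => pd.2 * l pd.1 with hg2def
  set E2 := Equiv.sigmaFiberEquiv g2 with hE2def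
  have hFE : Summable (F ∘ E2) := (Equiv.summable_iff E2).2 hF
  have hFEnorm : Summable ((fun pd => ‖F pd‖) ∘ E2) := (Equiv.summable_iff E2).2 hFnorm
  set G : ℕ → ℂ := fun n => ∑' c : {pd : P × ℕ // g2 pd = n}, F c.val with hGdef
  set G' : ℕ → ℝ := fun n => ∑' c : {pd : P × ℕ // g2 pd = n}, ‖F c.val‖ with hG'def
  have hsig := (summable_sigma_of_nonneg
    (f := (fun pd => ‖F pd‖) ∘ E2) (fun σ => norm_nonneg _)).1 hFEnorm
  have hG'sum : Summable G' := hsig.2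
  have hrowsum : ∀ n, Summable fun c : {pd : P × ℕ // g2 pd = n} => ‖F c.val‖ :=
    fun n => hsig.1 n
  have hGbd : ∀ n, ‖G n‖ ≤ G' n := fun n => norm_tsum_le_tsum_norm (hrowsum n)
  have hGnorm : Summable fun n => ‖G n‖ :=
    Summable.of_nonneg_of_le (fun n => norm_nonneg _) hGbd hG'sum
  have hGsum : Summable G := hGnorm.of_norm
  have hT1 : ∑' pd, F pd = ∑' n, G n := by
    have h1 : ∑' σ : (Σ n : ℕ, {pd : P × ℕ // g2 pd = n}), F (E2 σ) = ∑' pd, F pd :=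
      Equiv.tsum_eq E2 F
    have h2 : ∑' σ : (Σ n : ℕ, {pd : P × ℕ // g2 pd = n}), F (E2 σ)
        = ∑' (n : ℕ) (c : {pd : P × ℕ // g2 pd = n}), F (E2 ⟨n, c⟩) :=
      Summable.tsum_sigma' (fun n => hFE.sigma_factor n) hFE
    rw [← h1, h2]
    rfl
  have hGN : ∀ n : ℕ, G n = stmt11N l w n * u ^ n / (n : ℂ) := by
    intro n
    have hsub : G n = ∑' pd : P × ℕ, Set.indicator {pd | g2 pd = n} F pd :=
      tsum_subtype {pd : P × ℕ | g2 pd = n} F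
    rw [hsub]
    simp only [stmt11N]
    rw [← tsum_mul_right, ← tsum_div_const]
    refine tsum_congr fun pd => ?_
    obtain ⟨p, d⟩ := pd
    by_cases h : d * l p = n
    · subst h
      rw [Set.indicator_of_mem (show (p, d) ∈ {pd : P × ℕ | g2 pd = d * l p} from rfl)]
      match d with
      | 0 => simp [hFdef]
      | (e+1) =>
        rw [if_pos ⟨Nat.succ_le_succ (Nat.zero_le e), rfl⟩]
        have hlp0 : l p ≠ 0 := by have := hl p; omega
        have hlp : ((l p : ℕ) : ℂ) ≠ 0 := Nat.cast_ne_zero.2 hlp0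
        have hd : ((e+1 : ℕ) : ℂ) ≠ 0 := Nat.cast_ne_zero.2 (Nat.succ_ne_zero e)
        show x p ^ (e+1) / ((e+1 : ℕ) : ℂ)
          = (l p : ℂ) * w p ^ (e+1) * u ^ ((e+1) * l p) / (((e+1) * l p : ℕ) : ℂ)
        have hx : x p ^ (e+1) = w p ^ (e+1) * u ^ ((e+1) * l p) := by
          simp only [hxdef, mul_pow, ← pow_mul]
          rw [Nat.mul_comm (l p) (e+1)]
        rw [hx, Nat.cast_mul, div_eq_div_iff hd (mul_ne_zero hd hlp)]
        ring
    · rw [Set.indicator_of_notMem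
          (show (p, d) ∉ {pd : P × ℕ | g2 pd = n} from h), if_neg fun hc => h hc.2]
      simp
  have hG0 : G 0 = 0 := by
    have hz : ∀ c : {pd : P × ℕ // g2 pd = 0}, F c.val = 0 := by
      rintro ⟨⟨p, d⟩, hc⟩
      have hlp : l p ≠ 0 := by have := hl p; omega
      have hd : d = 0 := by
        have hc' : d * l p = 0 := hc
        exact (Nat.mul_eq_zero.1 hc').resolve_right hlp
      subst hd
      simp [hFdef]
    rw [hGdef]
    simp only []
    rw [tsum_congr hz, tsum_zero]
  have hshift : ∑' n, G n = ∑' n : ℕ, G (n + 1) := by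
    rw [Summable.tsum_eq_zero_add hGsum, hG0, zero_add]
  have hGN' : ∀ n : ℕ, stmt11N l w (n+1) * u ^ (n+1) / ((n : ℂ) + 1) = G (n + 1) := by
    intro n
    rw [hGN (n+1)]
    norm_cast
  refine ⟨hexp.multipliable, ?_, ?_⟩
  · refine ((summable_nat_add_iff 1).2 hGnorm).congr fun n => ?_
    rw [← hGN' n]
  · rw [hexp.tprod_eq]
    congr 1
    rw [hT1, hshift]
    exact tsum_congr fun n => (hGN' n).symm
end

section
/- Let q ≥ 2 be an integer and define T : ℕ → ℕ → ℝ by: T (2n+1) (2n) = q − 1 and T (2n+2) (2n) = 1 for all n ≥ 0; T 0 1 = q; T (2n−1) (2n+1) = q for all n ≥ 1; and all other entries 0. Since every row and every column of T has only finitely many nonzero entries, all matrix powers T^m have well-defined entries given by finite sums. Then for every m ≥ 1 the set {i ∈ ℕ | (T^m) i i ≠ 0} is finite and ∑_i (T^m) i i = 2q^m − 2q^{m/2} if m is even, and = 0 if m is odd. -/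
/-- The edge operator `T` of the quotient of the `(q+1)`-regular Bruhat–Tits
tree of `GL₂(F_q((1/t)))` by `Γ = GL₂(F_q[t])` (a Nagao ray): even indices
`2n` encode the outward ray edges `e_n`, odd indices `2n+1` their reversals
`f_n`, with the Bass weights. -/
noncomputable def stmt13T (q : ℕ) : ℕ → ℕ → ℝ := fun i j =>
  if i = j + 1 ∧ j % 2 = 0 then (q : ℝ) - 1
  else if i = j + 2 ∧ j % 2 = 0 then 1
  else if i = 0 ∧ j = 1 then (q : ℝ)
  else if j = i + 2 ∧ i % 2 = 1 then (q : ℝ)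
  else 0

/-- The powers of `stmt13T`: since every row and column of `T` has only
finitely many nonzero entries, each entry of `T^m` is a (finite) sum, here
expressed as a `tsum` of a finitely supported family. -/
noncomputable def stmt13Tpow (q : ℕ) : ℕ → ℕ → ℕ → ℝ
  | 0 => fun i j => if i = j then 1 else 0
  | m + 1 => fun i j => ∑' k, stmt13T q i k * stmt13Tpow q m k j

noncomputable def Efun (q m i j : ℕ) : ℝ :=
  if i % 2 = 0 then
    if m ≤ i / 2 then (if j + 2 * m = i then 1 else 0)
    else if j % 2 = 0 then
      (if (j / 2 + m + i / 2) % 2 = 0 ∧ j / 2 + 2 + i / 2 ≤ m then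
        (q : ℝ) ^ (m - i / 2) - (q : ℝ) ^ (m - i / 2 - 1) else 0)
    else
      if i + j + 1 = 2 * m then (q : ℝ) ^ (m - i / 2)
      else if (j / 2 + m + i / 2) % 2 = 1 ∧ j / 2 + 3 + i / 2 ≤ m then
        (q : ℝ) ^ (m - i / 2) - (q : ℝ) ^ (m - i / 2 - 1)
      else 0
  else
    if j % 2 = 0 then
      if (j / 2 + i / 2 + 1 + m) % 2 = 0 ∧ i / 2 + 1 ≤ j / 2 + m ∧ j / 2 + 1 ≤ i / 2 + m then
        (q : ℝ) ^ (max (m - i / 2) ((m + 1 + j / 2 - i / 2) / 2))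
          - (q : ℝ) ^ (max (m - i / 2) ((m + 1 + j / 2 - i / 2) / 2) - 1)
      else 0
    else
      if j / 2 = i / 2 + m then (q : ℝ) ^ m
      else if (m + i / 2 + j / 2) % 2 = 0 ∧ i / 2 + j / 2 + 2 ≤ m then
        (q : ℝ) ^ (m - i / 2) - (q : ℝ) ^ (m - i / 2 - 1)
      else 0

lemma Efun_ee (q m a b : ℕ) : Efun q m (2 * a) (2 * b) =
    if m ≤ a then (if b + m = a then 1 else 0)
    else if (b + m + a) % 2 = 0 ∧ b + 2 + a ≤ m then
      (q : ℝ) ^ (m - a) - (q : ℝ) ^ (m - a - 1) else 0 := by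
  simp only [Efun, show (2 * a) % 2 = 0 from by omega, show (2 * a) / 2 = a from by omega,
    show (2 * b) % 2 = 0 from by omega, show (2 * b) / 2 = b from by omega]
  split_ifs <;> first | rfl | (exfalso; first | exact ‹False› | exact ‹¬True› trivial | omega)

lemma Efun_eo (q m a b : ℕ) : Efun q m (2 * a) (2 * b + 1) =
    if m ≤ a then 0
    else if a + b + 1 = m then (q : ℝ) ^ (m - a)
    else if (b + m + a) % 2 = 1 ∧ b + 3 + a ≤ m then
      (q : ℝ) ^ (m - a) - (q : ℝ) ^ (m - a - 1) else 0 := by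
  simp only [Efun, show (2 * a) % 2 = 0 from by omega, show (2 * a) / 2 = a from by omega,
    show (2 * b + 1) % 2 = 1 from by omega, show (2 * b + 1) / 2 = b from by omega]
  split_ifs <;> first | rfl | (exfalso; first | exact ‹False› | exact ‹¬True› trivial | omega)

lemma Efun_oe (q m a b : ℕ) : Efun q m (2 * a + 1) (2 * b) =
    if (b + a + 1 + m) % 2 = 0 ∧ a + 1 ≤ b + m ∧ b + 1 ≤ a + m then
      (q : ℝ) ^ (max (m - a) ((m + 1 + b - a) / 2))
        - (q : ℝ) ^ (max (m - a) ((m + 1 + b - a) / 2) - 1)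
    else 0 := by
  simp only [Efun, show (2 * a + 1) % 2 = 1 from by omega, show (2 * a + 1) / 2 = a from by omega,
    show (2 * b) % 2 = 0 from by omega, show (2 * b) / 2 = b from by omega]
  split_ifs <;> first | rfl | (exfalso; first | exact ‹False› | exact ‹¬True› trivial | omega)

lemma Efun_oo (q m a b : ℕ) : Efun q m (2 * a + 1) (2 * b + 1) =
    if b = a + m then (q : ℝ) ^ m
    else if (m + a + b) % 2 = 0 ∧ a + b + 2 ≤ m then
      (q : ℝ) ^ (m - a) - (q : ℝ) ^ (m - a - 1) else 0 := by
  simp only [Efun, show (2 * a + 1) % 2 = 1 from by omega, show (2 * a + 1) / 2 = a from by omega,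
    show (2 * b + 1) % 2 = 1 from by omega, show (2 * b + 1) / 2 = b from by omega]
  split_ifs <;> first | rfl | (exfalso; first | exact ‹False› | exact ‹¬True› trivial | omega)


lemma T00 (q k : ℕ) (h : k ≠ 1) : stmt13T q 0 k = 0 := by
  simp only [stmt13T]; split_ifs <;> first | rfl | (exfalso; (try simp only [true_and, false_and, and_false] at *) <;> omega)

lemma T01 (q : ℕ) : stmt13T q 0 1 = (q : ℝ) := by
  simp only [stmt13T]; split_ifs <;> first | rfl | (exfalso; (try simp_all); (try omega))

lemma Tev0 (q a k : ℕ) (h : k ≠ 2 * a) : stmt13T q (2 * a + 2) k = 0 := by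
  simp only [stmt13T]; split_ifs <;> first | rfl | (exfalso; (try simp_all); (try omega))

lemma Tev1 (q a : ℕ) : stmt13T q (2 * a + 2) (2 * a) = 1 := by
  simp only [stmt13T]; split_ifs <;> first | rfl | (exfalso; (try simp only [true_and, false_and, and_false] at *) <;> omega)

lemma Tod0 (q a k : ℕ) (h1 : k ≠ 2 * a) (h2 : k ≠ 2 * a + 3) : stmt13T q (2 * a + 1) k = 0 := by
  simp only [stmt13T]; split_ifs <;> first | rfl | (exfalso; (try simp_all); (try omega))

lemma Tod1 (q a : ℕ) : stmt13T q (2 * a + 1) (2 * a) = (q : ℝ) - 1 := by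
  simp only [stmt13T]; split_ifs <;> first | rfl | (exfalso; (try simp only [true_and, false_and, and_false] at *) <;> omega)

lemma Tod2 (q a : ℕ) : stmt13T q (2 * a + 1) (2 * a + 3) = (q : ℝ) := by
  simp only [stmt13T]; split_ifs <;> first | rfl | (exfalso; (try simp_all); (try omega))

lemma Tpow_row0 (q m j : ℕ) :
    stmt13Tpow q (m + 1) 0 j = (q : ℝ) * stmt13Tpow q m 1 j := by
  show ∑' k, stmt13T q 0 k * stmt13Tpow q m k j = _
  rw [tsum_eq_sum (s := ({1} : Finset ℕ))
    (fun k hk => by rw [T00 q k (by simpa using hk), zero_mul]),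
    Finset.sum_singleton, T01]

lemma Tpow_roweven (q m a j : ℕ) :
    stmt13Tpow q (m + 1) (2 * a + 2) j = stmt13Tpow q m (2 * a) j := by
  show ∑' k, stmt13T q (2 * a + 2) k * stmt13Tpow q m k j = _
  rw [tsum_eq_sum (s := ({2 * a} : Finset ℕ))
    (fun k hk => by rw [Tev0 q a k (by simpa using hk), zero_mul]),
    Finset.sum_singleton, Tev1, one_mul]

lemma Tpow_rowodd (q m a j : ℕ) :
    stmt13Tpow q (m + 1) (2 * a + 1) j
      = ((q : ℝ) - 1) * stmt13Tpow q m (2 * a) j + (q : ℝ) * stmt13Tpow q m (2 * a + 3) j := by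
  show ∑' k, stmt13T q (2 * a + 1) k * stmt13Tpow q m k j = _
  rw [tsum_eq_sum (s := ({2 * a, 2 * a + 3} : Finset ℕ))
    (fun k hk => by
      simp only [Finset.mem_insert, Finset.mem_singleton] at hk
      push_neg at hk
      rw [Tod0 q a k hk.1 hk.2, zero_mul]),
    Finset.sum_pair (by omega), Tod1, Tod2]

lemma E_receven (q m a j : ℕ) :
    Efun q (m + 1) (2 * a + 2) j = Efun q m (2 * a) j := by
  show Efun q (m + 1) (2 * (a + 1)) j = Efun q m (2 * a) j
  obtain ⟨b, rfl | rfl⟩ : ∃ b, j = 2 * b ∨ j = 2 * b + 1 := ⟨j / 2, by omega⟩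
  · rw [Efun_ee, Efun_ee]
    split_ifs <;> first
      | rfl
      | (exfalso; omega)
      | (simp only [show m + 1 - (a + 1) - 1 = m - a - 1 from by omega,
             show m + 1 - (a + 1) = m - a from by omega])
  · rw [Efun_eo, Efun_eo]
    split_ifs <;> first
      | rfl
      | (exfalso; omega)
      | (simp only [show m + 1 - (a + 1) - 1 = m - a - 1 from by omega,
             show m + 1 - (a + 1) = m - a from by omega])

lemma E_rec0 (q m j : ℕ) :
    Efun q (m + 1) 0 j = (q : ℝ) * Efun q m 1 j := by
  show Efun q (m + 1) (2 * 0) j = (q : ℝ) * Efun q m (2 * 0 + 1) j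
  obtain ⟨b, rfl | rfl⟩ : ∃ b, j = 2 * b ∨ j = 2 * b + 1 := ⟨j / 2, by omega⟩
  · rw [Efun_ee, Efun_oe]
    split_ifs <;> first
      | (exfalso; omega)
      | (rw [mul_zero])
      | (obtain ⟨c, hc⟩ : ∃ c, m - 1 = c := ⟨_, rfl⟩
         rw [show m + 1 - 0 - 1 = c + 1 from by omega,
             show m + 1 - 0 = c + 2 from by omega,
             show ((m - 0) ⊔ ((m + 1 + b - 0) / 2)) - 1 = c from by omega,
             show (m - 0) ⊔ ((m + 1 + b - 0) / 2) = c + 1 from by omega]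
         ring)
  · rw [Efun_eo, Efun_oo]
    split_ifs <;> first
      | (exfalso; omega)
      | (rw [mul_zero])
      | (obtain ⟨c, hc⟩ : ∃ c, m - 1 = c := ⟨_, rfl⟩
         rw [show m + 1 - 0 - 1 = c + 1 from by omega,
             show m + 1 - 0 = c + 2 from by omega,
             show m - 0 - 1 = c from by omega,
             show m - 0 = c + 1 from by omega]
         ring)
      | (rw [show m + 1 - 0 = m + 1 from by omega, pow_succ]; ring)

lemma E_recodd (q m a j : ℕ) :
    Efun q (m + 1) (2 * a + 1) j
      = ((q : ℝ) - 1) * Efun q m (2 * a) j + (q : ℝ) * Efun q m (2 * a + 3) j := by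
  show Efun q (m + 1) (2 * a + 1) j
      = ((q : ℝ) - 1) * Efun q m (2 * a) j + (q : ℝ) * Efun q m (2 * (a + 1) + 1) j
  obtain ⟨b, rfl | rfl⟩ : ∃ b, j = 2 * b ∨ j = 2 * b + 1 := ⟨j / 2, by omega⟩
  · rw [Efun_oe, Efun_ee, Efun_oe]
    split_ifs <;> first
      | (exfalso; omega)
      | (rw [mul_zero, mul_zero]; ring)
      | -- delta region: b + m = a
        (rw [show ((m + 1 - a) ⊔ ((m + 1 + 1 + b - a) / 2)) - 1 = 0 from by omega,
             show (m + 1 - a) ⊔ ((m + 1 + 1 + b - a) / 2) = 1 from by omega]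
         norm_num)
      | -- S3a region: b + 2 + a ≤ m
        (obtain ⟨c, hc⟩ : ∃ c, m - a - 2 = c := ⟨_, rfl⟩
         rw [show ((m + 1 - a) ⊔ ((m + 1 + 1 + b - a) / 2)) - 1 = c + 2 from by omega,
             show (m + 1 - a) ⊔ ((m + 1 + 1 + b - a) / 2) = c + 3 from by omega,
             show ((m - (a + 1)) ⊔ ((m + 1 + b - (a + 1)) / 2)) - 1 = c from by omega,
             show (m - (a + 1)) ⊔ ((m + 1 + b - (a + 1)) / 2) = c + 1 from by omega,
             show m - a - 1 = c + 1 from by omega,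
             show m - a = c + 2 from by omega]
         ring)
      | -- S3b region
        (obtain ⟨c, hc⟩ : ∃ c, (m + b - a) / 2 - 1 = c := ⟨_, rfl⟩
         rw [show ((m + 1 - a) ⊔ ((m + 1 + 1 + b - a) / 2)) - 1 = c + 1 from by omega,
             show (m + 1 - a) ⊔ ((m + 1 + 1 + b - a) / 2) = c + 2 from by omega,
             show ((m - (a + 1)) ⊔ ((m + 1 + b - (a + 1)) / 2)) - 1 = c from by omega,
             show (m - (a + 1)) ⊔ ((m + 1 + b - (a + 1)) / 2) = c + 1 from by omega]
         ring)
  · rw [Efun_oo, Efun_eo, Efun_oo]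
    split_ifs <;> first
      | (exfalso; omega)
      | (rw [mul_zero, mul_zero]; ring)
      | -- R1: b = a + m + 1
        (rw [pow_succ]; ring)
      | -- R3: both A
        (obtain ⟨c, hc⟩ : ∃ c, m - a - 2 = c := ⟨_, rfl⟩
         rw [show m + 1 - a - 1 = c + 2 from by omega,
             show m + 1 - a = c + 3 from by omega,
             show m - (a + 1) - 1 = c from by omega,
             show m - (a + 1) = c + 1 from by omega,
             show m - a - 1 = c + 1 from by omega,
             show m - a = c + 2 from by omega]
         ring)
      | -- R2: a + b + 1 = m
        (obtain ⟨c, hc⟩ : ∃ c, m - a = c := ⟨_, rfl⟩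
         rw [show m + 1 - a - 1 = c from by omega,
             show m + 1 - a = c + 1 from by omega,
             show m - a = c from hc]
         ring)

lemma Tpow_eq_Efun (q : ℕ) : ∀ m i j, stmt13Tpow q m i j = Efun q m i j := by
  intro m
  induction m with
  | zero =>
    intro i j
    show (if i = j then (1 : ℝ) else 0) = Efun q 0 i j
    obtain ⟨a, rfl | rfl⟩ : ∃ a, i = 2 * a ∨ i = 2 * a + 1 := ⟨i / 2, by omega⟩ <;>
      obtain ⟨b, rfl | rfl⟩ : ∃ b, j = 2 * b ∨ j = 2 * b + 1 := ⟨j / 2, by omega⟩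
    · rw [Efun_ee]; split_ifs <;> first | rfl | (exfalso; omega)
    · rw [Efun_eo]; split_ifs <;> first | rfl | (exfalso; omega)
    · rw [Efun_oe]; split_ifs <;> first | rfl | (exfalso; omega)
    · rw [Efun_oo]; split_ifs <;> first | rfl | (exfalso; omega) | (rw [pow_zero])
  | succ m ih =>
    intro i j
    rcases Nat.lt_or_ge i 1 with hi | hi
    · obtain rfl : i = 0 := by omega
      rw [Tpow_row0, ih, E_rec0]
    · rcases Nat.even_or_odd i with ⟨a, rfl⟩ | ⟨a, rfl⟩
      · obtain ⟨a', rfl⟩ : ∃ a', a = a' + 1 := ⟨a - 1, by omega⟩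
        rw [show a' + 1 + (a' + 1) = 2 * a' + 2 from by omega, Tpow_roweven, ih, E_receven]
      · rw [show 2 * a + 1 = 2 * a + 1 from rfl, Tpow_rowodd, ih, ih, E_recodd]

lemma Ediag (q m i : ℕ) (hm : 1 ≤ m) :
    Efun q m i i = if m % 2 = 0 ∧ 2 * (i / 2) + 2 ≤ m then
      (q : ℝ) ^ (m - i / 2) - (q : ℝ) ^ (m - i / 2 - 1) else 0 := by
  obtain ⟨a, rfl | rfl⟩ : ∃ a, i = 2 * a ∨ i = 2 * a + 1 := ⟨i / 2, by omega⟩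
  · rw [Efun_ee]
    simp only [show (2 * a) / 2 = a from by omega]
    split_ifs <;> first | rfl | (exfalso; omega)
  · rw [Efun_oo]
    simp only [show (2 * a + 1) / 2 = a from by omega]
    split_ifs <;> first | rfl | (exfalso; omega)

lemma sum_halves (f : ℕ → ℝ) (c : ℕ) :
    ∑ i ∈ Finset.range (2 * c), f (i / 2) = 2 * ∑ a ∈ Finset.range c, f a := by
  induction c with
  | zero => simp
  | succ c ih =>
    rw [show 2 * (c + 1) = 2 * c + 1 + 1 from by omega, Finset.sum_range_succ,
      Finset.sum_range_succ, ih, show (2 * c + 1) / 2 = c from by omega,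
      show (2 * c) / 2 = c from by omega, Finset.sum_range_succ]
    ring

lemma tele (x : ℝ) : ∀ n k, ∑ a ∈ Finset.range n, (x ^ (k + n - a) - x ^ (k + n - a - 1))
    = x ^ (k + n) - x ^ k := by
  intro n
  induction n with
  | zero => intro k; simp
  | succ n ih =>
    intro k
    rw [Finset.sum_range_succ,
      Finset.sum_congr rfl (fun a ha => by
        have := Finset.mem_range.mp ha
        rw [show k + (n + 1) - a = (k + 1) + n - a from by omega]),
      ih (k + 1), show k + (n + 1) - n - 1 = k from by omega,
      show k + (n + 1) - n = k + 1 from by omega,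
      show (k + 1) + n = k + (n + 1) from by omega]
    ring

/-- for every `m ≥ 1` the diagonal of `T^m` has finite support
and its sum (the trace) equals `2q^m - 2q^{m/2}` for even `m` and `0` for odd
`m`. -/
theorem stmt13 (q : ℕ) (hq : 2 ≤ q) (m : ℕ) (hm : 1 ≤ m) :
    {i : ℕ | stmt13Tpow q m i i ≠ 0}.Finite ∧
    ∑' i : ℕ, stmt13Tpow q m i i
      = if m % 2 = 0 then 2 * (q : ℝ) ^ m - 2 * (q : ℝ) ^ (m / 2) else 0 := by
  have hdiag : ∀ i, stmt13Tpow q m i i = if m % 2 = 0 ∧ 2 * (i / 2) + 2 ≤ m then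
      (q : ℝ) ^ (m - i / 2) - (q : ℝ) ^ (m - i / 2 - 1) else 0 :=
    fun i => by rw [Tpow_eq_Efun, Ediag q m i hm]
  have hzero : ∀ i ∉ Finset.range m, stmt13Tpow q m i i = 0 := by
    intro i hi
    rw [hdiag i, if_neg]
    rw [Finset.mem_range] at hi
    omega
  constructor
  · apply Set.Finite.subset (Finset.range m).finite_toSet
    intro i hi
    simp only [Set.mem_setOf_eq] at hi
    by_contra h
    exact hi (hzero i (by simpa using h))
  · rw [tsum_eq_sum hzero, Finset.sum_congr rfl (fun i _ => hdiag i)]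
    by_cases hpar : m % 2 = 0
    · obtain ⟨c, rfl⟩ : ∃ c, m = 2 * c := ⟨m / 2, by omega⟩
      rw [if_pos hpar]
      have hc : 1 ≤ c := by omega
      rw [sum_halves (fun a => if (2 * c) % 2 = 0 ∧ 2 * a + 2 ≤ 2 * c then
          (q : ℝ) ^ (2 * c - a) - (q : ℝ) ^ (2 * c - a - 1) else 0) c,
        Finset.sum_congr rfl (fun a ha => by
          have := Finset.mem_range.mp ha
          rw [if_pos (by omega : (2 * c) % 2 = 0 ∧ 2 * a + 2 ≤ 2 * c),
            show 2 * c - a = c + c - a from by omega]),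
        tele (q : ℝ) c c, show c + c = 2 * c from by omega,
        show (2 * c) / 2 = c from by omega]
      ring
    · rw [if_neg hpar, Finset.sum_eq_zero]
      intro i _
      rw [if_neg (by omega)]
end
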